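/- arXiv:math/0210463 — 5 statements merged into one kernel-verified Lean document; each statement's English description precedes it below -/
import Mathlib

section
/- Let Φ be a root system with positive roots Φ₊, and let Ψ₁, Ψ₂ ⊆ Φ₊ be two subsets each closed under addition of positive roots (i.e., if ψ ∈ Ψᵢ, φ ∈ Φ₊ and ψ + φ ∈ Φ₊ then ψ + φ ∈ Ψᵢ). If the sums of elements of Ψ₁ and Ψ₂ are equal, then Ψ₁ = Ψ₂. -/
open scoped RealInnerProductSpace BigOperators

noncomputable section

variable (V : Type) [NormedAddCommGroup V] [InnerProductSpace ℝ V] [FiniteDimensional ℝ V]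

/-- A finite, reduced, crystallographic root system in a Euclidean space `V`,
with a chosen set of positive roots and the corresponding simple roots. -/
structure RootSystemData where
  /-- the rank -/
  l : ℕ
  /-- the simple roots -/
  simple : Fin l → V
  /-- the set of roots -/
  roots : Finset V
  /-- the set of positive roots -/
  pos : Finset V
  pos_subset : pos ⊆ roots
  simple_mem_pos : ∀ i, simple i ∈ pos
  simple_indep : LinearIndependent ℝ simple
  span_roots : Submodule.span ℝ (roots : Set V) = ⊤
  root_ne_zero : ∀ α ∈ roots, α ≠ 0
  neg_mem : ∀ α ∈ roots, -α ∈ roots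
  pos_iff : ∀ α ∈ roots, (α ∈ pos ↔ -α ∉ pos)
  pos_combo : ∀ α ∈ pos, ∃ c : Fin l → ℕ, α = ∑ i, (c i : ℝ) • simple i
  crystal : ∀ α ∈ roots, ∀ β ∈ roots, ∃ n : ℤ, 2 * ⟪β, α⟫ / ⟪α, α⟫ = (n : ℝ)
  reflect_mem : ∀ α ∈ roots, ∀ β ∈ roots, β - (2 * ⟪β, α⟫ / ⟪α, α⟫) • α ∈ roots
  sub_mem : ∀ α ∈ roots, ∀ β ∈ roots, 0 < ⟪α, β⟫ → α ≠ β → α - β ∈ roots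
  reduced : ∀ α ∈ roots, ∀ c : ℝ, c • α ∈ roots → c = 1 ∨ c = -1

namespace RootSystemData

open Classical

variable {V}

/-- The pairing `⟨λ, α∨⟩ = 2(λ|α)/(α|α)` of a vector with the coroot of `α`. -/
def pair (lam α : V) : ℝ := 2 * ⟪lam, α⟫ / ⟪α, α⟫

/-- The orthogonal reflection in the hyperplane orthogonal to `α`. -/
def sRefl (α : V) : V ≃ₗᵢ[ℝ] V := Submodule.reflection ((ℝ ∙ α)ᗮ)

variable (R : RootSystemData V)

/-- Half the sum of the positive roots. -/
def ρ : V := (2 : ℝ)⁻¹ • ∑ φ ∈ R.pos, φ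

/-- The (finite) Weyl group, generated by the simple reflections. -/
def W : Subgroup (V ≃ₗᵢ[ℝ] V) :=
  Subgroup.closure (Set.range fun i => sRefl (R.simple i))

/-- The length of a Weyl group element: the minimal length of a word in the
simple reflections expressing it. -/
def len (w : V ≃ₗᵢ[ℝ] V) : ℕ :=
  sInf {k : ℕ | ∃ f : Fin k → Fin R.l,
    w = (List.ofFn fun j => sRefl (R.simple (f j))).prod}

/-- The inversion set `Φ_w = Φ₊ ∩ wΦ₋`. -/
def inversions (w : V ≃ₗᵢ[ℝ] V) : Finset V :=
  R.pos.filter fun x => -(w.symm x) ∈ R.pos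

end RootSystemData


/-- The sum of a nonempty set of positive roots is nonzero. -/
lemma sum_pos_ne_zero (R : RootSystemData V) (Γ : Finset V) (hΓ : Γ ⊆ R.pos)
    (hne : Γ.Nonempty) : ∑ φ ∈ Γ, φ ≠ 0 := by
  classical
  choose c hc using R.pos_combo
  intro h0
  have hrw : ∑ φ ∈ Γ, φ
      = ∑ i, ((∑ φ ∈ Γ.attach, (c φ.1 (hΓ φ.2) i : ℝ)) • R.simple i) := by
    rw [← Finset.sum_attach Γ (fun x => x)]
    have hcongr : ∀ φ ∈ Γ.attach, (φ : V) = ∑ i, (c φ.1 (hΓ φ.2) i : ℝ) • R.simple i :=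
      fun φ _ => hc φ.1 (hΓ φ.2)
    rw [Finset.sum_congr rfl hcongr, Finset.sum_comm]
    simp only [Finset.sum_smul]
  have hind := Fintype.linearIndependent_iff.mp R.simple_indep
    (fun i => ∑ φ ∈ Γ.attach, (c φ.1 (hΓ φ.2) i : ℝ)) (by rw [← hrw, h0])
  obtain ⟨ψ, hψ⟩ := hne
  have hzero : ∀ i, (c ψ (hΓ hψ) i : ℝ) = 0 := by
    intro i
    have h := hind i
    have : ∀ φ ∈ Γ.attach, (0:ℝ) ≤ (c φ.1 (hΓ φ.2) i : ℝ) := fun φ _ => Nat.cast_nonneg _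
    have hmem : (⟨ψ, hψ⟩ : {x // x ∈ Γ}) ∈ Γ.attach := Finset.mem_attach _ _
    have := (Finset.sum_eq_zero_iff_of_nonneg this).mp h ⟨ψ, hψ⟩ hmem
    exact this
  have : ψ = 0 := by
    rw [hc ψ (hΓ hψ)]
    refine Finset.sum_eq_zero fun i _ => ?_
    rw [hzero i, zero_smul]
  exact R.root_ne_zero ψ (R.pos_subset (hΓ hψ)) this

/-- If two disjoint subsets of positive roots, each closed under addition of
positive roots within the other's complement, have equal sums, both are empty. -/
lemma key_aux [DecidableEq V] (R : RootSystemData V)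
    (Ψ₁ Ψ₂ Γ Δ : Finset V) (h₁ : Ψ₁ ⊆ R.pos) (h₂ : Ψ₂ ⊆ R.pos)
    (hΓ : Γ = Ψ₁ \ Ψ₂) (hΔ : Δ = Ψ₂ \ Ψ₁)
    (hc₁ : ∀ ψ ∈ Ψ₁, ∀ φ ∈ R.pos, ψ + φ ∈ R.pos → ψ + φ ∈ Ψ₁)
    (hc₂ : ∀ ψ ∈ Ψ₂, ∀ φ ∈ R.pos, ψ + φ ∈ R.pos → ψ + φ ∈ Ψ₂)
    (hsum : ∑ φ ∈ Γ, φ = ∑ φ ∈ Δ, φ) : Γ = ∅ := by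
  classical
  by_contra hne
  have hΓne : Γ.Nonempty := Finset.nonempty_of_ne_empty hne
  have hΓsub : Γ ⊆ R.pos := by rw [hΓ]; exact fun x hx => h₁ (Finset.mem_sdiff.mp hx).1
  have hΔsub : Δ ⊆ R.pos := by rw [hΔ]; exact fun x hx => h₂ (Finset.mem_sdiff.mp hx).1
  have hS : ∑ φ ∈ Γ, φ ≠ 0 := sum_pos_ne_zero V R Γ hΓsub hΓne
  have hpos : (0:ℝ) < ⟪∑ φ ∈ Γ, φ, ∑ φ ∈ Δ, φ⟫ := by
    rw [← hsum, real_inner_self_eq_norm_sq]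
    have := norm_pos_iff.mpr hS
    positivity
  rw [sum_inner] at hpos
  simp only [inner_sum] at hpos
  -- find γ ∈ Γ, δ ∈ Δ with positive inner product
  have : ∃ γ ∈ Γ, ∃ δ ∈ Δ, (0:ℝ) < ⟪γ, δ⟫ := by
    by_contra hcon
    push_neg at hcon
    have : ∑ γ ∈ Γ, ∑ δ ∈ Δ, (⟪γ, δ⟫ : ℝ) ≤ 0 :=
      Finset.sum_nonpos fun γ hγ => Finset.sum_nonpos fun δ hδ => hcon γ hγ δ hδ
    linarith
  obtain ⟨γ, hγ, δ, hδ, hip⟩ := this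
  have hγΨ := Finset.mem_sdiff.mp (hΓ ▸ hγ)
  have hδΨ := Finset.mem_sdiff.mp (hΔ ▸ hδ)
  have hγr : γ ∈ R.roots := R.pos_subset (hΓsub hγ)
  have hδr : δ ∈ R.roots := R.pos_subset (hΔsub hδ)
  have hne' : γ ≠ δ := by
    rintro rfl
    exact hγΨ.2 hδΨ.1
  have hsub : γ - δ ∈ R.roots := R.sub_mem γ hγr δ hδr hip hne'
  rcases Classical.em (γ - δ ∈ R.pos) with hp | hp
  · -- δ + (γ - δ) = γ ∈ Ψ₂, contradiction
    have := hc₂ δ hδΨ.1 (γ - δ) hp (by simpa using hΓsub hγ)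
    simp only [add_sub_cancel] at this
    exact hγΨ.2 this
  · have hnp : -(γ - δ) ∈ R.pos := by
      by_contra hnp
      exact hp ((R.pos_iff (γ - δ) hsub).mpr hnp)
    have hδγ : δ - γ ∈ R.pos := by rwa [neg_sub] at hnp
    have := hc₁ γ hγΨ.1 (δ - γ) hδγ (by simpa using hΔsub hδ)
    simp only [add_sub_cancel] at this
    exact hδΨ.2 this

/-- **Kostant's lemma.** Two subsets of the positive roots which are both
closed under addition of positive roots and have equal root sums coincide. -/
theorem kostant_ideals_with_equal_root_sums_eq (R : RootSystemData V)
    (Ψ₁ Ψ₂ : Finset V) (h₁ : Ψ₁ ⊆ R.pos) (h₂ : Ψ₂ ⊆ R.pos)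
    (hc₁ : ∀ ψ ∈ Ψ₁, ∀ φ ∈ R.pos, ψ + φ ∈ R.pos → ψ + φ ∈ Ψ₁)
    (hc₂ : ∀ ψ ∈ Ψ₂, ∀ φ ∈ R.pos, ψ + φ ∈ R.pos → ψ + φ ∈ Ψ₂)
    (hsum : ∑ φ ∈ Ψ₁, φ = ∑ φ ∈ Ψ₂, φ) :
    Ψ₁ = Ψ₂ := by
  classical
  have hΓΔ : ∑ φ ∈ Ψ₁ \ Ψ₂, φ = ∑ φ ∈ Ψ₂ \ Ψ₁, φ := by
    have e1 : ∑ φ ∈ Ψ₁ \ (Ψ₁ ∩ Ψ₂), φ + ∑ φ ∈ Ψ₁ ∩ Ψ₂, φ = ∑ φ ∈ Ψ₁, φ :=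
      Finset.sum_sdiff Finset.inter_subset_left
    have e2 : ∑ φ ∈ Ψ₂ \ (Ψ₁ ∩ Ψ₂), φ + ∑ φ ∈ Ψ₁ ∩ Ψ₂, φ = ∑ φ ∈ Ψ₂, φ :=
      Finset.sum_sdiff Finset.inter_subset_right
    rw [Finset.sdiff_inter_self_left] at e1
    rw [Finset.sdiff_inter_self_right] at e2
    have := e1.trans (hsum.trans e2.symm)
    exact add_right_cancel this
  have hΓ : Ψ₁ \ Ψ₂ = ∅ :=
    key_aux V R Ψ₁ Ψ₂ (Ψ₁ \ Ψ₂) (Ψ₂ \ Ψ₁) h₁ h₂ rfl rfl hc₁ hc₂ hΓΔ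
  have hΔ : Ψ₂ \ Ψ₁ = ∅ := by
    apply key_aux V R Ψ₂ Ψ₁ (Ψ₂ \ Ψ₁) (Ψ₁ \ Ψ₂) h₂ h₁ rfl rfl hc₂ hc₁
    rw [hΓΔ]
  exact Finset.Subset.antisymm (Finset.sdiff_eq_empty_iff_subset.mp hΓ)
    (Finset.sdiff_eq_empty_iff_subset.mp hΔ)
end
end

section
/- Let g be a complex simple Lie algebra with Borel subalgebra b, root system Φ with positive roots Φ₊, ρ half the sum of positive roots, and canonical inner product normalized so that ‖ρ+θ‖² − ‖ρ‖² = 1 where θ is the highest root. Then for any subset Ψ ⊆ Φ₊ one has ‖ρ + Σ_{φ∈Ψ} φ‖² − ‖ρ‖² ≤ |Ψ|, with equality if and only if the subspace a_Ψ = ⊕_{φ∈Ψ} g_φ is an abelian ideal of b. -/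
open scoped RealInnerProductSpace BigOperators

noncomputable section

variable (V : Type) [NormedAddCommGroup V] [InnerProductSpace ℝ V] [FiniteDimensional ℝ V]

/-- An irreducible root system, together with its highest root `θ`. -/
structure IrredRootSystemData extends RootSystemData V where
  /-- the highest root -/
  θ : V
  θ_mem_pos : θ ∈ pos
  θ_highest : ∀ φ ∈ pos, ∃ c : Fin l → ℕ, θ - φ = ∑ i, (c i : ℝ) • simple i
  θ_long : ∀ φ ∈ roots, ‖φ‖ ≤ ‖θ‖
  θ_dominant : ∀ i, 0 ≤ ⟪θ, simple i⟫
  irreducible : ∀ s : Finset V, s ⊆ roots →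
      (∀ α ∈ s, ∀ β ∈ roots, β ∉ s → ⟪α, β⟫ = 0) → s = ∅ ∨ s = roots

namespace IrredRootSystemData

variable {V} (R : IrredRootSystemData V)

/-- The affine functional `L(φ) = 2(θ−φ|ρ)/(θ|θ)`. -/
def L (φ : V) : ℝ := 2 * ⟪R.θ - φ, R.toRootSystemData.ρ⟫ / ⟪R.θ, R.θ⟫

/-- A root is long if it has the same length as the highest root. -/
def IsLong (φ : V) : Prop := ‖φ‖ = ‖R.θ‖

/-- The dual Coxeter number `g = ⟨ρ, θ∨⟩ + 1`. -/
def dualCox : ℝ := RootSystemData.pair R.toRootSystemData.ρ R.θ + 1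

/-- The affine reflection `s₀(λ) = λ − (⟨λ,θ∨⟩ − g)θ` (scaled so that `s₀ρ = ρ + θ`). -/
def s0 (lam : V) : V := lam - (RootSystemData.pair lam R.θ - R.dualCox) • R.θ

end IrredRootSystemData

set_option linter.unusedSectionVars false
set_option maxHeartbeats 1000000

namespace Kostant
open Finset RootSystemData
open scoped Classical

variable {V : Type} [NormedAddCommGroup V] [InnerProductSpace ℝ V] [FiniteDimensional ℝ V]
variable (R : IrredRootSystemData V)

theorem root_inner_self_pos {α : V} (hα : α ∈ R.roots) : 0 < ⟪α, α⟫ := by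
  rcases lt_or_eq_of_le (real_inner_self_nonneg (x := α)) with h | h
  · exact h
  · exact absurd (inner_self_eq_zero.1 h.symm) (R.root_ne_zero α hα)

theorem neg_not_pos {α : V} (hα : α ∈ R.pos) : -α ∉ R.pos :=
  (R.pos_iff α (R.pos_subset hα)).1 hα

theorem pos_or_neg {α : V} (hα : α ∈ R.roots) : α ∈ R.pos ∨ -α ∈ R.pos := by
  by_cases h : α ∈ R.pos
  · exact Or.inl h
  · exact Or.inr (not_not.1 fun hc => h ((R.pos_iff α hα).2 hc))

theorem pos_of_nneg_combo {α : V} (hα : α ∈ R.roots) (c : Fin R.l → ℝ)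
    (hc : ∀ i, 0 ≤ c i) (h : α = ∑ i, c i • R.simple i) : α ∈ R.pos := by
  by_contra hnot
  have hneg : -α ∈ R.pos := (pos_or_neg R hα).resolve_left hnot
  obtain ⟨d, hd⟩ := R.pos_combo _ hneg
  have hzero : ∑ i, (c i + (d i : ℝ)) • R.simple i = 0 := by
    simp only [add_smul, Finset.sum_add_distrib, ← h, ← hd]
    abel
  have := linearIndependent_iff'.1 R.simple_indep Finset.univ
      (fun i => c i + (d i : ℝ)) hzero
  have hcz : ∀ i, c i = 0 := by
    intro i
    have h1 := this i (Finset.mem_univ i)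
    have h2 : (0:ℝ) ≤ (d i : ℝ) := Nat.cast_nonneg _
    linarith [hc i]
  have : α = 0 := by
    rw [h]
    exact Finset.sum_eq_zero fun i _ => by rw [hcz i, zero_smul]
  exact R.root_ne_zero α hα this

theorem sum_pos_mem_pos {α β : V} (hα : α ∈ R.pos) (hβ : β ∈ R.pos)
    (h : α + β ∈ R.roots) : α + β ∈ R.pos := by
  obtain ⟨c, hc⟩ := R.pos_combo _ hα
  obtain ⟨d, hd⟩ := R.pos_combo _ hβ
  refine pos_of_nneg_combo R h (fun i => (c i : ℝ) + (d i : ℝ))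
    (fun i => by positivity) ?_
  simp only [add_smul, Finset.sum_add_distrib, ← hc, ← hd]

theorem two_smul_not_root {ψ : V} (hψ : ψ ∈ R.roots) : ψ + ψ ∉ R.roots := by
  intro h
  have h2 : (2:ℝ) • ψ ∈ R.roots := by
    have : (2:ℝ) • ψ = ψ + ψ := by rw [two_smul]
    rwa [this]
  rcases R.reduced ψ hψ 2 h2 with h | h <;> norm_num at h

theorem pair_add_left {x y ψ : V} (hψ : ψ ∈ R.roots) :
    pair (x + y) ψ = pair x ψ + pair y ψ := by
  have h := (root_inner_self_pos R hψ).ne'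
  simp only [pair, inner_add_left]
  field_simp

theorem pair_neg_left {x ψ : V} : pair (-x) ψ = - pair x ψ := by
  simp only [pair, inner_neg_left]
  ring

theorem pair_sub_left {x y ψ : V} (hψ : ψ ∈ R.roots) :
    pair (x - y) ψ = pair x ψ - pair y ψ := by
  have : x - y = x + (-y) := by abel
  rw [this, pair_add_left R hψ, pair_neg_left]; ring

theorem pair_self {ψ : V} (hψ : ψ ∈ R.roots) : pair ψ ψ = 2 := by
  have h := (root_inner_self_pos R hψ).ne'
  simp only [pair]
  field_simp

theorem pair_add_self_left {φ ψ : V} (hψ : ψ ∈ R.roots) :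
    pair (ψ + φ) ψ = pair φ ψ + 2 := by
  rw [pair_add_left R hψ, pair_self R hψ]; ring

theorem inner_eq_pair {x ψ : V} (hψ : ψ ∈ R.roots) :
    ⟪x, ψ⟫ = pair x ψ * ⟪ψ, ψ⟫ / 2 := by
  have h := (root_inner_self_pos R hψ).ne'
  simp only [pair]
  field_simp

theorem pair_int {x ψ : V} (hx : x ∈ R.roots) (hψ : ψ ∈ R.roots) :
    ∃ n : ℤ, pair x ψ = (n : ℝ) := R.crystal ψ hψ x hx

theorem pair_mul_self {x ψ : V} (hψ : ψ ∈ R.roots) :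
    pair x ψ * ⟪ψ, ψ⟫ = 2 * ⟪x, ψ⟫ := by
  have h := (root_inner_self_pos R hψ).ne'
  rw [pair, div_mul_cancel₀ _ h]

theorem pair_pos_iff {x ψ : V} (hψ : ψ ∈ R.roots) :
    0 < pair x ψ ↔ 0 < ⟪x, ψ⟫ := by
  have h := root_inner_self_pos R hψ
  have key := pair_mul_self R (x := x) hψ
  constructor
  · intro hp; nlinarith
  · intro hp; nlinarith

theorem pair_neg_iff {x ψ : V} (hψ : ψ ∈ R.roots) :
    pair x ψ < 0 ↔ ⟪x, ψ⟫ < 0 := by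
  have h := root_inner_self_pos R hψ
  have key := pair_mul_self R (x := x) hψ
  constructor
  · intro hp; nlinarith
  · intro hp; nlinarith

theorem sub_root_of_inner_pos {α β : V} (hα : α ∈ R.roots) (hβ : β ∈ R.roots)
    (h : 0 < ⟪α, β⟫) (hne : α ≠ β) : α - β ∈ R.roots :=
  R.sub_mem α hα β hβ h hne

theorem add_root_of_inner_neg {α β : V} (hα : α ∈ R.roots) (hβ : β ∈ R.roots)
    (h : ⟪α, β⟫ < 0) (hne : α ≠ -β) : α + β ∈ R.roots := by
  have hnb : -β ∈ R.roots := R.neg_mem β hβ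
  have h' : 0 < ⟪α, -β⟫ := by rw [inner_neg_right]; linarith
  have := R.sub_mem α hα (-β) hnb h' hne
  simpa using this

end Kostant
namespace Kostant
open Finset RootSystemData
open scoped Classical

variable {V : Type} [NormedAddCommGroup V] [InnerProductSpace ℝ V] [FiniteDimensional ℝ V]
variable (R : IrredRootSystemData V)

/-- the reflection in ψ as a bare function -/
def rf (ψ x : V) : V := x - pair x ψ • ψ

theorem rf_mem {ψ x : V} (hψ : ψ ∈ R.roots) (hx : x ∈ R.roots) :
    rf ψ x ∈ R.roots := R.reflect_mem ψ hψ x hx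

theorem pair_smul_left {c : ℝ} {x ψ : V} : pair (c • x) ψ = c * pair x ψ := by
  simp only [pair, real_inner_smul_left]
  ring

theorem rf_pair {ψ x : V} (hψ : ψ ∈ R.roots) :
    pair (rf ψ x) ψ = - pair x ψ := by
  rw [rf, pair_sub_left R hψ, pair_smul_left, pair_self R hψ]
  ring

theorem pair_eq_zero_iff {x ψ : V} (hψ : ψ ∈ R.roots) :
    pair x ψ = 0 ↔ ⟪x, ψ⟫ = 0 := by
  have h := (root_inner_self_pos R hψ).ne'
  constructor
  · intro hp
    have := pair_mul_self R (x := x) hψ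
    rw [hp] at this
    linarith
  · intro hp
    simp [pair, hp]

theorem pair_mul_pair_lt_four {α β : V} (hα : α ∈ R.roots) (hβ : β ∈ R.roots)
    (h1 : α ≠ β) (h2 : α ≠ -β) : pair α β * pair β α < 4 := by
  have haa := root_inner_self_pos R hα
  have hbb := root_inner_self_pos R hβ
  have hcs : ⟪α, β⟫ ^ 2 < ⟪α, α⟫ * ⟪β, β⟫ := by
    by_contra hc
    push_neg at hc
    set w : V := ⟪β, β⟫ • α - ⟪α, β⟫ • β with hw
    have hww : ⟪w, w⟫ = ⟪β, β⟫ * (⟪α, α⟫ * ⟪β, β⟫ - ⟪α, β⟫ ^ 2) := by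
      simp only [hw, inner_sub_left, inner_sub_right, real_inner_smul_left,
        real_inner_smul_right, real_inner_comm β α]
      ring
    have hle : ⟪w, w⟫ ≤ 0 := by rw [hww]; nlinarith
    have hw0 : w = 0 := inner_self_eq_zero.1 (le_antisymm hle real_inner_self_nonneg)
    have heq : ⟪β, β⟫ • α = ⟪α, β⟫ • β := sub_eq_zero.1 hw0
    have hαc : α = (⟪α, β⟫ / ⟪β, β⟫) • β := by
      rw [div_eq_mul_inv, mul_comm, mul_smul, ← heq, ← mul_smul, inv_mul_cancel₀ hbb.ne',
        one_smul]
    have hmem : (⟪α, β⟫ / ⟪β, β⟫) • β ∈ R.roots := hαc ▸ hα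
    rcases R.reduced β hβ _ hmem with h | h
    · rw [h, one_smul] at hαc; exact h1 hαc
    · rw [h, neg_one_smul] at hαc; exact h2 hαc
  have key : pair α β * pair β α * (⟪α, α⟫ * ⟪β, β⟫) = 4 * ⟪α, β⟫ ^ 2 := by
    simp only [pair, real_inner_comm β α]
    field_simp
    ring
  nlinarith

theorem pair_bounds {α β : V} (hα : α ∈ R.roots) (hβ : β ∈ R.roots)
    (h1 : α ≠ β) (h2 : α ≠ -β) : -3 ≤ pair α β ∧ pair α β ≤ 3 := by
  obtain ⟨m, hm⟩ := pair_int R hα hβ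
  obtain ⟨n, hn⟩ := pair_int R hβ hα
  have hprod := pair_mul_pair_lt_four R hα hβ h1 h2
  have hmn : (m : ℝ) * n < 4 := by rw [← hm, ← hn]; exact hprod
  have hmnz : m * n ≤ 3 := by exact_mod_cast Int.lt_add_one_iff.1 (by exact_mod_cast hmn)
  rcases lt_trichotomy (⟪α, β⟫ : ℝ) 0 with hlt | heq | hgt
  · -- both pairs negative
    have hm' : pair α β < 0 := (pair_neg_iff R hβ).2 hlt
    have hn' : pair β α < 0 := (pair_neg_iff R hα).2 (by rwa [real_inner_comm])
    have hmi : m < 0 := by exact_mod_cast hm ▸ hm'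
    have hni : n < 0 := by exact_mod_cast hn ▸ hn'
    have h3 : -3 ≤ m := by nlinarith
    constructor
    · rw [hm]; exact_mod_cast h3
    · rw [hm]; have : m ≤ 3 := by linarith
      exact_mod_cast this
  · have : pair α β = 0 := (pair_eq_zero_iff R hβ).2 heq
    rw [this]; norm_num
  · have hm' : 0 < pair α β := (pair_pos_iff R hβ).2 hgt
    have hn' : 0 < pair β α := (pair_pos_iff R hα).2 (by rwa [real_inner_comm])
    have hmi : 0 < m := by exact_mod_cast hm ▸ hm'
    have hni : 0 < n := by exact_mod_cast hn ▸ hn'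
    have h3 : m ≤ 3 := by nlinarith
    constructor
    · rw [hm]; have : (-3:ℤ) ≤ m := by linarith
      exact_mod_cast this
    · rw [hm]; exact_mod_cast h3

end Kostant
namespace Kostant
open Finset RootSystemData
open scoped Classical

variable {V : Type} [NormedAddCommGroup V] [InnerProductSpace ℝ V] [FiniteDimensional ℝ V]
variable (R : IrredRootSystemData V)

theorem roots_eq_union : R.roots = R.pos ∪ R.pos.image (fun x => -x) := by
  ext α
  constructor
  · intro hα
    rcases pos_or_neg R hα with h | h
    · exact Finset.mem_union_left _ h
    · exact Finset.mem_union_right _ (Finset.mem_image.2 ⟨-α, h, by simp⟩)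
  · intro hα
    rcases Finset.mem_union.1 hα with h | h
    · exact R.pos_subset h
    · obtain ⟨x, hx, hxe⟩ := Finset.mem_image.1 h
      exact hxe ▸ R.neg_mem x (R.pos_subset hx)

theorem pos_disj_negpos : Disjoint R.pos (R.pos.image (fun x => -x)) := by
  rw [Finset.disjoint_left]
  intro α hα hα'
  obtain ⟨x, hx, hxe⟩ := Finset.mem_image.1 hα'
  have : -α ∈ R.pos := by rw [← hxe]; simpa using hx
  exact neg_not_pos R hα this

theorem sum_roots_even (f : V → ℝ) (hf : ∀ x, f (-x) = f x) :
    ∑ φ ∈ R.roots, f φ = 2 * ∑ φ ∈ R.pos, f φ := by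
  rw [roots_eq_union R, Finset.sum_union (pos_disj_negpos R),
    Finset.sum_image (by intro x _ y _ h; exact neg_injective h)]
  simp only [hf]
  ring

theorem two_inner_rho (x : V) : 2 * ⟪R.ρ, x⟫ = ∑ φ ∈ R.pos, ⟪φ, x⟫ := by
  show 2 * ⟪RootSystemData.ρ R.toRootSystemData, x⟫ = _
  rw [RootSystemData.ρ]
  rw [real_inner_smul_left, sum_inner]
  ring

theorem theta_mem_roots : R.θ ∈ R.roots := R.pos_subset R.θ_mem_pos

theorem inner_theta_nonneg {φ : V} (hφ : φ ∈ R.pos) : 0 ≤ ⟪φ, R.θ⟫ := by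
  obtain ⟨c, hc⟩ := R.pos_combo φ hφ
  rw [hc, sum_inner]
  refine Finset.sum_nonneg fun i _ => ?_
  rw [real_inner_smul_left, real_inner_comm]
  exact mul_nonneg (Nat.cast_nonneg _) (R.θ_dominant i)

theorem inner_self_mono {φ : V} (hφ : φ ∈ R.roots) : ⟪φ, φ⟫ ≤ ⟪R.θ, R.θ⟫ := by
  rw [real_inner_self_eq_norm_sq, real_inner_self_eq_norm_sq]
  have := R.θ_long φ hφ
  nlinarith [norm_nonneg φ]

theorem neg_theta_ne_pos {φ : V} (hφ : φ ∈ R.pos) : φ ≠ -R.θ := by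
  intro h
  have : -φ ∈ R.pos := by rw [h]; simpa using R.θ_mem_pos
  exact neg_not_pos R hφ this

theorem pair_theta_mem {φ : V} (hφ : φ ∈ R.pos) (hne : φ ≠ R.θ) :
    pair φ R.θ = 0 ∨ pair φ R.θ = 1 := by
  have hθr := theta_mem_roots R
  have hφr := R.pos_subset hφ
  have hθθ := root_inner_self_pos R hθr
  have hφφ := root_inner_self_pos R hφr
  obtain ⟨m, hm⟩ := pair_int R hφr hθr
  have hm0 : (0:ℝ) ≤ m := by
    rw [← hm]
    exact div_nonneg (by linarith [inner_theta_nonneg R hφ]) hθθ.le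
  have hprod := pair_mul_pair_lt_four R hφr hθr hne (neg_theta_ne_pos R hφ)
  have hpp : pair φ R.θ * ⟪R.θ, R.θ⟫ = pair R.θ φ * ⟪φ, φ⟫ := by
    rw [pair_mul_self R hθr, pair_mul_self R hφr, real_inner_comm]
  have hmono := inner_self_mono R hφr
  -- if m ≥ 2 then pair θ φ ≥ pair φ θ ≥ 2 so product ≥ 4
  have hm2 : (m:ℝ) < 2 := by
    by_contra hc
    push_neg at hc
    have h1 : 2 ≤ pair φ R.θ := by rw [hm]; exact hc
    have h2 : pair φ R.θ ≤ pair R.θ φ := by nlinarith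
    nlinarith
  have hm0' : 0 ≤ m := by exact_mod_cast hm0
  have hm2' : m < 2 := by exact_mod_cast hm2
  have : m = 0 ∨ m = 1 := by omega
  rcases this with h | h <;> rw [hm, h] <;> norm_num

end Kostant
namespace Kostant
open Finset RootSystemData
open scoped Classical

variable {V : Type} [NormedAddCommGroup V] [InnerProductSpace ℝ V] [FiniteDimensional ℝ V]
variable (R : IrredRootSystemData V)

/-- the Casimir-type operator -/
def Aop (x : V) : V := ∑ φ ∈ R.roots, ⟪φ, x⟫ • φ

theorem inner_Aop (x y : V) : ⟪Aop R x, y⟫ = ∑ φ ∈ R.roots, ⟪φ, x⟫ * ⟪φ, y⟫ := by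
  rw [Aop, sum_inner]
  simp only [real_inner_smul_left]

theorem Aop_symm (x y : V) : ⟪Aop R x, y⟫ = ⟪x, Aop R y⟫ := by
  rw [inner_Aop, real_inner_comm, inner_Aop]
  congr 1
  funext φ
  rw [real_inner_comm x φ, real_inner_comm y φ]
  ring

theorem rf_invol {ψ x : V} (hψ : ψ ∈ R.roots) : rf ψ (rf ψ x) = x := by
  have h := rf_pair R (x := x) hψ
  rw [rf, h, rf]
  simp only [neg_smul, sub_neg_eq_add]
  abel

theorem inner_rf_root {ψ x : V} (hψ : ψ ∈ R.roots) :
    ⟪rf ψ x, ψ⟫ = -⟪x, ψ⟫ := by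
  have h := rf_pair R (x := x) hψ
  have h1 := pair_mul_self R (x := rf ψ x) hψ
  have h2 := pair_mul_self R (x := x) hψ
  rw [h] at h1
  linarith

theorem rf_self {ψ : V} (hψ : ψ ∈ R.roots) : rf ψ ψ = -ψ := by
  rw [rf, pair_self R hψ, two_smul]
  abel

theorem Aop_root_smul {γ : V} (hγ : γ ∈ R.roots) :
    Aop R γ = ((∑ φ ∈ R.roots, ⟪φ, γ⟫ * pair φ γ) / 2) • γ := by
  have key : ∑ φ ∈ R.roots, ⟪φ, γ⟫ • (rf γ φ) = - Aop R γ := by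
    rw [show ∑ φ ∈ R.roots, ⟪φ, γ⟫ • (rf γ φ) = ∑ φ ∈ R.roots, ⟪rf γ φ, γ⟫ • (rf γ (rf γ φ)) from ?_]
    · simp only [rf_invol R hγ, inner_rf_root R hγ, neg_smul, Aop, ← Finset.sum_neg_distrib]
    · refine (Finset.sum_nbij' (fun φ => rf γ φ) (fun φ => rf γ φ) ?_ ?_ ?_ ?_ ?_).symm
      · intro a ha; exact rf_mem R hγ ha
      · intro a ha; exact rf_mem R hγ ha
      · intro a _; exact rf_invol R hγ
      · intro a _; exact rf_invol R hγ
      · intro a _; rw [rf_invol R hγ]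
  have expand : ∑ φ ∈ R.roots, ⟪φ, γ⟫ • (rf γ φ) =
      Aop R γ - (∑ φ ∈ R.roots, ⟪φ, γ⟫ * pair φ γ) • γ := by
    simp only [rf, smul_sub, Finset.sum_sub_distrib, Aop, smul_smul, ← Finset.sum_smul]
  rw [expand] at key
  have h2 : (2:ℝ) • Aop R γ = (∑ φ ∈ R.roots, ⟪φ, γ⟫ * pair φ γ) • γ := by
    linear_combination (norm := module) key
  have := congrArg (fun v => (2:ℝ)⁻¹ • v) h2
  simp only [smul_smul] at this
  rw [inv_mul_cancel₀ (two_ne_zero), one_smul] at this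
  rw [this, div_eq_inv_mul]

theorem casimir (hn : 2 * ⟪R.ρ, R.θ⟫ + ⟪R.θ, R.θ⟫ = 1) {ψ : V} (hψ : ψ ∈ R.roots) :
    ∑ φ ∈ R.roots, ⟪φ, ψ⟫ ^ 2 = ⟪ψ, ψ⟫ := by
  -- the eigenvalue function
  have heig : ∀ γ ∈ R.roots, ∃ t : ℝ, Aop R γ = t • γ := fun γ hγ =>
    ⟨_, Aop_root_smul R hγ⟩
  -- θ has eigenvalue 1
  have hθr := theta_mem_roots R
  have hθθ := root_inner_self_pos R hθr
  have hAθ : ⟪Aop R R.θ, R.θ⟫ = ⟪R.θ, R.θ⟫ := by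
    rw [inner_Aop]
    have heven : ∀ x : V, ⟪-x, R.θ⟫ * ⟪-x, R.θ⟫ = ⟪x, R.θ⟫ * ⟪x, R.θ⟫ := by
      intro x; rw [inner_neg_left]; ring
    rw [show (∑ φ ∈ R.roots, ⟪φ, R.θ⟫ * ⟪φ, R.θ⟫) = 2 * ∑ φ ∈ R.pos, ⟪φ, R.θ⟫ * ⟪φ, R.θ⟫ from
      sum_roots_even R (fun x => ⟪x, R.θ⟫ * ⟪x, R.θ⟫) heven]
    rw [← Finset.add_sum_erase _ _ R.θ_mem_pos]
    have herase : ∑ φ ∈ R.pos.erase R.θ, ⟪φ, R.θ⟫ * ⟪φ, R.θ⟫ =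
        ∑ φ ∈ R.pos.erase R.θ, ⟪φ, R.θ⟫ * (⟪R.θ, R.θ⟫ / 2) := by
      refine Finset.sum_congr rfl fun φ hφ => ?_
      have hφp := Finset.mem_of_mem_erase hφ
      have hφne := Finset.ne_of_mem_erase hφ
      rcases pair_theta_mem R hφp hφne with h | h
      · have : ⟪φ, R.θ⟫ = 0 := (pair_eq_zero_iff R hθr).1 h
        rw [this]; ring
      · have : ⟪φ, R.θ⟫ = ⟪R.θ, R.θ⟫ / 2 := by
          have := pair_mul_self R (x := φ) hθr
          rw [h] at this; linarith
        rw [this]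
    rw [herase, ← Finset.sum_mul]
    have hsum : ∑ φ ∈ R.pos.erase R.θ, ⟪φ, R.θ⟫ = 2 * ⟪R.ρ, R.θ⟫ - ⟪R.θ, R.θ⟫ := by
      have := two_inner_rho R R.θ
      rw [← Finset.add_sum_erase _ _ R.θ_mem_pos] at this
      linarith
    rw [hsum]
    nlinarith [hn]
  -- eigenvalue agreement via irreducibility
  set s : Finset V := R.roots.filter (fun γ => ⟪Aop R γ, γ⟫ = ⟪γ, γ⟫) with hs
  have hsub : s ⊆ R.roots := Finset.filter_subset _ _
  have horth : ∀ α ∈ s, ∀ β ∈ R.roots, β ∉ s → ⟪α, β⟫ = 0 := by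
    intro α hα β hβ hβs
    have hαr := hsub hα
    have hα1 : ⟪Aop R α, α⟫ = ⟪α, α⟫ := (Finset.mem_filter.1 hα).2
    have hβ1 : ⟪Aop R β, β⟫ ≠ ⟪β, β⟫ := fun hc => hβs (Finset.mem_filter.2 ⟨hβ, hc⟩)
    obtain ⟨t, ht⟩ := heig α hαr
    obtain ⟨u, hu⟩ := heig β hβ
    have hαα := root_inner_self_pos R hαr
    have hββ := root_inner_self_pos R hβ
    have ht1 : t = 1 := by
      rw [ht, real_inner_smul_left] at hα1
      have hz : (t - 1) * ⟪α, α⟫ = 0 := by linarith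
      rcases mul_eq_zero.1 hz with h | h
      · linarith
      · exact absurd h hαα.ne'
    have hu1 : u ≠ 1 := by
      intro hc
      rw [hu, hc, one_smul] at hβ1
      exact hβ1 rfl
    have hcross : t * ⟪α, β⟫ = u * ⟪α, β⟫ := by
      have h1 : ⟪Aop R α, β⟫ = t * ⟪α, β⟫ := by rw [ht, real_inner_smul_left]
      have h2 : ⟪α, Aop R β⟫ = u * ⟪α, β⟫ := by rw [hu, real_inner_smul_right]
      rw [← h1, ← h2, Aop_symm]
    rw [ht1] at hcross
    by_contra hc
    have hz : (1 - u) * ⟪α, β⟫ = 0 := by linarith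
    rcases mul_eq_zero.1 hz with h | h
    · exact hu1 (by linarith)
    · exact hc h
  rcases R.irreducible s hsub horth with h | h
  · exfalso
    have : R.θ ∈ s := Finset.mem_filter.2 ⟨hθr, hAθ⟩
    rw [h] at this
    exact absurd this (Finset.notMem_empty _)
  · have hψs : ψ ∈ s := h ▸ hψ
    have := (Finset.mem_filter.1 hψs).2
    rw [inner_Aop] at this
    simpa [sq] using this

end Kostant
namespace Kostant
open Finset RootSystemData
open scoped Classical

variable {V : Type} [NormedAddCommGroup V] [InnerProductSpace ℝ V] [FiniteDimensional ℝ V]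
variable (R : IrredRootSystemData V)

/-- positive roots other than ψ -/
def Pe (ψ : V) : Finset V := R.pos.erase ψ

/-- positive roots φ ≠ ψ with ψ+φ a positive root and ⟨φ,ψ∨⟩ ≥ -1 -/
def Dp (ψ : V) : Finset V :=
  (R.pos.erase ψ).filter (fun φ => ψ + φ ∈ R.pos ∧ -1 ≤ pair φ ψ)

def Nf (ψ : V) (j : ℝ) : Finset V :=
  (R.pos.erase ψ).filter (fun φ => pair φ ψ = j)

def Af (ψ : V) (j : ℝ) : Finset V := (Dp R ψ).filter (fun φ => pair φ ψ = j)

/-- ψ is a "commutative" root -/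
def Comm (ψ : V) : Prop := ∀ φ ∈ R.pos, ψ + φ ∈ R.pos → ψ + (ψ + φ) ∉ R.roots

variable {R}

theorem ne_neg_of_pos {φ ψ : V} (hφ : φ ∈ R.pos) (hψ : ψ ∈ R.pos) : φ ≠ -ψ := by
  intro h
  have : -φ ∈ R.pos := by rw [h]; simpa using hψ
  exact neg_not_pos R hφ this

theorem Pe_bounds {φ ψ : V} (hψ : ψ ∈ R.pos) (hφ : φ ∈ Pe R ψ) :
    (∃ n : ℤ, pair φ ψ = (n : ℝ)) ∧ -3 ≤ pair φ ψ ∧ pair φ ψ ≤ 3 := by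
  have hφp := Finset.mem_of_mem_erase hφ
  have hφne := Finset.ne_of_mem_erase hφ
  have hφr := R.pos_subset hφp
  have hψr := R.pos_subset hψ
  exact ⟨pair_int R hφr hψr, (pair_bounds R hφr hψr hφne (ne_neg_of_pos hφp hψ)).1,
    (pair_bounds R hφr hψr hφne (ne_neg_of_pos hφp hψ)).2⟩

theorem sum_ne_psi {φ ψ : V} (hψ : ψ ∈ R.pos) (hφ : φ ∈ R.pos) : ψ + φ ≠ ψ := by
  intro h
  have : φ = 0 := by
    have := congrArg (fun x => x - ψ) h
    simpa using this
  exact R.root_ne_zero φ (R.pos_subset hφ) this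

theorem sum_ne_neg_psi {φ ψ : V} (hψ : ψ ∈ R.pos) (hφ : φ ∈ R.pos) : ψ + φ ≠ -ψ := by
  intro h
  have h2 : -φ = ψ + ψ := by
    linear_combination (norm := module) -h
  have : -φ ∈ R.roots := R.neg_mem φ (R.pos_subset hφ)
  rw [h2] at this
  exact two_smul_not_root R (R.pos_subset hψ) this

theorem pair_sum_left {φ ψ : V} (hψ : ψ ∈ R.roots) :
    pair (ψ + φ) ψ = pair φ ψ + 2 := by
  rw [pair_add_left R hψ, pair_self R hψ]; ring

/-- on Dp, the pairing is at most 1 -/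
theorem Dp_pair_le {φ ψ : V} (hψ : ψ ∈ R.pos) (hφ : φ ∈ Dp R ψ) : pair φ ψ ≤ 1 := by
  obtain ⟨hφP, hsum, _⟩ := Finset.mem_filter.1 hφ
  have hφp := Finset.mem_of_mem_erase hφP
  have hψr := R.pos_subset hψ
  have hb := pair_bounds R (R.pos_subset hsum) hψr (sum_ne_psi hψ hφp)
      (sum_ne_neg_psi hψ hφp)
  have := pair_sum_left (φ := φ) hψr
  linarith [hb.2]

/-- K = -1 implies membership in Dp -/
theorem neg_one_mem_Dp {φ ψ : V} (hψ : ψ ∈ R.pos) (hφ : φ ∈ Pe R ψ)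
    (hK : pair φ ψ = -1) : φ ∈ Dp R ψ := by
  have hφp := Finset.mem_of_mem_erase hφ
  have hψr := R.pos_subset hψ
  have hφr := R.pos_subset hφp
  have hin : ⟪φ, ψ⟫ < 0 := (pair_neg_iff R hψr).1 (by rw [hK]; norm_num)
  have hroot : φ + ψ ∈ R.roots :=
    add_root_of_inner_neg R hφr hψr hin (ne_neg_of_pos hφp hψ)
  have hpos : ψ + φ ∈ R.pos := by
    rw [add_comm]
    exact sum_pos_mem_pos R hφp hψ hroot
  exact Finset.mem_filter.2 ⟨hφ, hpos, by rw [hK]⟩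

/-- reflection pushes φ to φ - K ψ ; compute rf explicitly on sums -/
theorem rf_eval {φ ψ : V} (hψ : ψ ∈ R.roots) (c : ℝ) (hc : pair φ ψ = c) :
    rf ψ φ = φ - c • ψ := by rw [rf, hc]

end Kostant
namespace Kostant
open Finset RootSystemData
open scoped Classical

variable {V : Type} [NormedAddCommGroup V] [InnerProductSpace ℝ V] [FiniteDimensional ℝ V]
variable {R : IrredRootSystemData V}

theorem sum_Pe_decomp {ψ : V} (hψ : ψ ∈ R.pos) :
    ∑ φ ∈ Pe R ψ, (pair φ ψ ^ 2 - pair φ ψ) =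
      12 * ((Nf R ψ (-3)).card : ℝ) + 6 * ((Nf R ψ (-2)).card : ℝ) +
      2 * ((Nf R ψ (-1)).card : ℝ) + 2 * ((Nf R ψ 2).card : ℝ) +
      6 * ((Nf R ψ 3).card : ℝ) := by
  have point : ∀ φ ∈ Pe R ψ, pair φ ψ ^ 2 - pair φ ψ =
      12 * (if pair φ ψ = -3 then (1:ℝ) else 0) +
      6 * (if pair φ ψ = -2 then (1:ℝ) else 0) +
      2 * (if pair φ ψ = -1 then (1:ℝ) else 0) +
      2 * (if pair φ ψ = 2 then (1:ℝ) else 0) +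
      6 * (if pair φ ψ = 3 then (1:ℝ) else 0) := by
    intro φ hφ
    obtain ⟨⟨n, hn⟩, hlo, hhi⟩ := Pe_bounds hψ hφ
    rw [hn] at hlo hhi ⊢
    have hlo' : -3 ≤ n := by exact_mod_cast hlo
    have hhi' : n ≤ 3 := by exact_mod_cast hhi
    interval_cases n <;> norm_num
  rw [Finset.sum_congr rfl point]
  simp only [Finset.sum_add_distrib, ← Finset.mul_sum, Finset.sum_boole]
  rfl

theorem sum_Dp_decomp {ψ : V} (hψ : ψ ∈ R.pos) :
    2 * ∑ φ ∈ Dp R ψ, (pair φ ψ + 2) =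
      2 * ((Af R ψ (-1)).card : ℝ) + 4 * ((Af R ψ 0).card : ℝ) +
      6 * ((Af R ψ 1).card : ℝ) := by
  have point : ∀ φ ∈ Dp R ψ, pair φ ψ + 2 =
      1 * (if pair φ ψ = -1 then (1:ℝ) else 0) +
      2 * (if pair φ ψ = 0 then (1:ℝ) else 0) +
      3 * (if pair φ ψ = 1 then (1:ℝ) else 0) := by
    intro φ hφ
    have hφP : φ ∈ Pe R ψ := Finset.mem_of_mem_filter _ hφ
    obtain ⟨⟨n, hn⟩, _, _⟩ := Pe_bounds hψ hφP
    have hge : -1 ≤ pair φ ψ := (Finset.mem_filter.1 hφ).2.2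
    have hle : pair φ ψ ≤ 1 := Dp_pair_le hψ hφ
    rw [hn] at hge hle ⊢
    have hlo' : -1 ≤ n := by exact_mod_cast hge
    have hhi' : n ≤ 1 := by exact_mod_cast hle
    interval_cases n <;> norm_num
  rw [Finset.sum_congr rfl point]
  simp only [Finset.sum_add_distrib, ← Finset.mul_sum, Finset.sum_boole]
  show 2 * (1 * ((Af R ψ (-1)).card : ℝ) + 2 * ((Af R ψ 0).card : ℝ)
      + 3 * ((Af R ψ 1).card : ℝ)) = _
  ring

theorem Nf_neg_one_eq_Af {ψ : V} (hψ : ψ ∈ R.pos) : Nf R ψ (-1) = Af R ψ (-1) := by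
  ext φ
  constructor
  · intro h
    obtain ⟨hP, hK⟩ := Finset.mem_filter.1 h
    exact Finset.mem_filter.2 ⟨neg_one_mem_Dp hψ hP hK, hK⟩
  · intro h
    obtain ⟨hD, hK⟩ := Finset.mem_filter.1 h
    exact Finset.mem_filter.2 ⟨Finset.mem_of_mem_filter _ hD, hK⟩

/-- injection A1 → N3 -/
theorem card_A1_le {ψ : V} (hψ : ψ ∈ R.pos) :
    (Af R ψ 1).card ≤ (Nf R ψ 3).card := by
  apply Finset.card_le_card_of_injOn (fun φ => ψ + φ)
  · intro φ hφ
    obtain ⟨hD, hK⟩ := Finset.mem_filter.1 hφ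
    obtain ⟨hP, hsum, _⟩ := Finset.mem_filter.1 hD
    have hφp := Finset.mem_of_mem_erase hP
    refine Finset.mem_filter.2 ⟨Finset.mem_erase.2 ⟨sum_ne_psi hψ hφp, hsum⟩, ?_⟩
    rw [pair_sum_left (R.pos_subset hψ), hK]; norm_num
  · intro a _ b _ h
    exact add_left_cancel h

/-- the two "B" halves of N2 -/
theorem card_N2_split (ψ : V) :
    (Nf R ψ 2).card = ((Nf R ψ 2).filter (fun β => β - ψ ∈ R.pos)).card +
      ((Nf R ψ 2).filter (fun β => β - ψ ∉ R.pos)).card :=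
  (Finset.card_filter_add_card_filter_not _).symm

/-- injection A0 → B1 -/
theorem card_A0_le_B1 {ψ : V} (hψ : ψ ∈ R.pos) :
    (Af R ψ 0).card ≤ ((Nf R ψ 2).filter (fun β => β - ψ ∈ R.pos)).card := by
  apply Finset.card_le_card_of_injOn (fun φ => ψ + φ)
  · intro φ hφ
    obtain ⟨hD, hK⟩ := Finset.mem_filter.1 hφ
    obtain ⟨hP, hsum, _⟩ := Finset.mem_filter.1 hD
    have hφp := Finset.mem_of_mem_erase hP
    refine Finset.mem_filter.2 ⟨Finset.mem_filter.2
      ⟨Finset.mem_erase.2 ⟨sum_ne_psi hψ hφp, hsum⟩, ?_⟩, ?_⟩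
    · rw [pair_sum_left (R.pos_subset hψ), hK]; norm_num
    · have : ψ + φ - ψ = φ := by abel
      rw [this]; exact hφp
  · intro a _ b _ h
    exact add_left_cancel h

/-- injection A0 → B2 ∪ N(-2) -/
theorem card_A0_le_B2 {ψ : V} (hψ : ψ ∈ R.pos) :
    (Af R ψ 0).card ≤ ((Nf R ψ 2).filter (fun β => β - ψ ∉ R.pos)).card +
      (Nf R ψ (-2)).card := by
  classical
  have hψr := R.pos_subset hψ
  set target := ((Nf R ψ 2).filter (fun β => β - ψ ∉ R.pos)) ∪ (Nf R ψ (-2)) with ht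
  have hle : (Af R ψ 0).card ≤ target.card := by
    apply Finset.card_le_card_of_injOn (fun φ => if ψ - φ ∈ R.pos then ψ - φ else φ - ψ)
    · intro φ hφ
      obtain ⟨hD, hK⟩ := Finset.mem_filter.1 hφ
      obtain ⟨hP, hsum, _⟩ := Finset.mem_filter.1 hD
      have hφp := Finset.mem_of_mem_erase hP
      have hφr := R.pos_subset hφp
      -- φ - ψ is a root : reflection of ψ+φ
      have hsr : φ - ψ ∈ R.roots := by
        have h1 : rf ψ (ψ + φ) ∈ R.roots := rf_mem R hψr (R.pos_subset hsum)
        have h2 : pair (ψ + φ) ψ = 2 := by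
          rw [pair_sum_left hψr, hK]; norm_num
        rw [rf_eval hψr 2 h2] at h1
        have : ψ + φ - (2:ℝ) • ψ = φ - ψ := by
          rw [two_smul]; abel
        rwa [this] at h1
      have hKm : pair (φ - ψ) ψ = -2 := by
        rw [pair_sub_left R hψr, pair_self R hψr, hK]; norm_num
      by_cases hc : ψ - φ ∈ R.pos
      · dsimp only
        rw [if_pos hc]
        refine Finset.mem_union_left _ (Finset.mem_filter.2 ⟨Finset.mem_filter.2
          ⟨Finset.mem_erase.2 ⟨?_, hc⟩, ?_⟩, ?_⟩)
        · intro h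
          have : φ = 0 := by linear_combination (norm := module) -h
          exact R.root_ne_zero φ hφr this
        · have : ψ - φ = -(φ - ψ) := by abel
          rw [this, pair_neg_left, hKm]; norm_num
        · have h1 : ψ - φ - ψ = -φ := by abel
          rw [h1]
          exact neg_not_pos R hφp
      · dsimp only
        rw [if_neg hc]
        have hpos : φ - ψ ∈ R.pos := by
          rcases pos_or_neg R hsr with h | h
          · exact h
          · exfalso; apply hc
            have : -(φ - ψ) = ψ - φ := by abel
            rwa [this] at h
        refine Finset.mem_union_right _ (Finset.mem_filter.2
          ⟨Finset.mem_erase.2 ⟨?_, hpos⟩, hKm⟩)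
        intro h
        have h2 : φ = ψ + ψ := by linear_combination (norm := module) h
        have : φ ∈ R.roots := hφr
        rw [h2] at this
        exact two_smul_not_root R hψr this
    · intro a ha b hb hab
      obtain ⟨hDa, hKa⟩ := Finset.mem_filter.1 ha
      obtain ⟨hDb, hKb⟩ := Finset.mem_filter.1 hb
      simp only at hab
      by_cases h1 : ψ - a ∈ R.pos <;> by_cases h2 : ψ - b ∈ R.pos
      · rw [if_pos h1, if_pos h2] at hab
        linear_combination (norm := module) -hab
      · rw [if_pos h1, if_neg h2] at hab
        -- ψ - a = b - ψ : pairing contradiction : K(ψ-a) = 2 but K(b-ψ) = -2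
        exfalso
        have hKa' : pair (ψ - a) ψ = 2 := by
          rw [pair_sub_left R (R.pos_subset hψ), pair_self R (R.pos_subset hψ), hKa]; norm_num
        have hKb' : pair (b - ψ) ψ = -2 := by
          rw [pair_sub_left R (R.pos_subset hψ), pair_self R (R.pos_subset hψ), hKb]; norm_num
        rw [hab] at hKa'
        rw [hKa'] at hKb'
        norm_num at hKb'
      · rw [if_neg h1, if_pos h2] at hab
        exfalso
        have hKa' : pair (a - ψ) ψ = -2 := by
          rw [pair_sub_left R (R.pos_subset hψ), pair_self R (R.pos_subset hψ), hKa]; norm_num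
        have hKb' : pair (ψ - b) ψ = 2 := by
          rw [pair_sub_left R (R.pos_subset hψ), pair_self R (R.pos_subset hψ), hKb]; norm_num
        rw [hab] at hKa'
        rw [hKa'] at hKb'
        norm_num at hKb'
      · rw [if_neg h1, if_neg h2] at hab
        linear_combination (norm := module) hab
  calc (Af R ψ 0).card ≤ target.card := hle
    _ ≤ _ := by
        rw [ht]
        exact (Finset.card_union_le _ _)

end Kostant
namespace Kostant
open Finset RootSystemData
open scoped Classical

variable {V : Type} [NormedAddCommGroup V] [InnerProductSpace ℝ V] [FiniteDimensional ℝ V]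
variable {R : IrredRootSystemData V}


theorem mem_Nf_iff {ψ φ : V} {j : ℝ} :
    φ ∈ Nf R ψ j ↔ (φ ≠ ψ ∧ φ ∈ R.pos) ∧ pair φ ψ = j := by
  rw [Nf, Finset.mem_filter, Finset.mem_erase]

theorem mem_Af_iff {ψ φ : V} {j : ℝ} :
    φ ∈ Af R ψ j ↔ ((φ ≠ ψ ∧ φ ∈ R.pos) ∧ (ψ + φ ∈ R.pos ∧ -1 ≤ pair φ ψ)) ∧ pair φ ψ = j := by
  rw [Af, Dp, Finset.mem_filter, Finset.mem_filter, Finset.mem_erase]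

theorem psi_mem_roots {ψ : V} (hψ : ψ ∈ R.pos) : ψ ∈ R.roots := R.pos_subset hψ

/-- an element of Nf(-2) violates commutativity -/
theorem notComm_of_Nneg2 {ψ φ : V} (hψ : ψ ∈ R.pos) (hφ : φ ∈ Nf R ψ (-2)) :
    ¬ Comm R ψ := by
  obtain ⟨⟨hne, hφp⟩, hK⟩ := mem_Nf_iff.1 hφ
  have hψr := psi_mem_roots hψ
  have hφr := R.pos_subset hφp
  intro hc
  have hin : ⟪φ, ψ⟫ < 0 := (pair_neg_iff R hψr).1 (by rw [hK]; norm_num)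
  have hsum : ψ + φ ∈ R.pos := by
    rw [add_comm]
    exact sum_pos_mem_pos R hφp hψ (add_root_of_inner_neg R hφr hψr hin (ne_neg_of_pos hφp hψ))
  have hrf : rf ψ φ ∈ R.roots := rf_mem R hψr hφr
  rw [rf_eval hψr (-2) hK] at hrf
  have : φ - (-2:ℝ) • ψ = ψ + (ψ + φ) := by
    rw [neg_smul, two_smul]; abel
  rw [this] at hrf
  exact hc φ hφp hsum hrf

/-- an element of Nf(-3) violates commutativity -/
theorem notComm_of_Nneg3 {ψ φ : V} (hψ : ψ ∈ R.pos) (hφ : φ ∈ Nf R ψ (-3)) :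
    ¬ Comm R ψ := by
  obtain ⟨⟨hne, hφp⟩, hK⟩ := mem_Nf_iff.1 hφ
  have hψr := psi_mem_roots hψ
  have hφr := R.pos_subset hφp
  intro hc
  have hin : ⟪φ, ψ⟫ < 0 := (pair_neg_iff R hψr).1 (by rw [hK]; norm_num)
  have hsum : ψ + φ ∈ R.pos := by
    rw [add_comm]
    exact sum_pos_mem_pos R hφp hψ (add_root_of_inner_neg R hφr hψr hin (ne_neg_of_pos hφp hψ))
  -- φ + 3ψ is a root
  have hrf : rf ψ φ ∈ R.roots := rf_mem R hψr hφr
  rw [rf_eval hψr (-3) hK] at hrf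
  have h3 : φ - (-3:ℝ) • ψ = φ + (3:ℝ) • ψ := by rw [neg_smul]; abel
  rw [h3] at hrf
  -- its pairing with ψ is 3 > 0, so subtracting ψ gives a root
  have hp3 : pair (φ + (3:ℝ) • ψ) ψ = 3 := by
    rw [pair_add_left R hψr, pair_smul_left, pair_self R hψr, hK]; norm_num
  have hne3 : φ + (3:ℝ) • ψ ≠ ψ := by
    intro h
    have h2 : -φ = ψ + ψ := by
      have := congrArg (fun x => x - ψ) h
      linear_combination (norm := module) -this
    have : -φ ∈ R.roots := R.neg_mem φ hφr
    rw [h2] at this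
    exact two_smul_not_root R hψr this
  have hin3 : 0 < ⟪φ + (3:ℝ) • ψ, ψ⟫ := (pair_pos_iff R hψr).1 (by rw [hp3]; norm_num)
  have hsub : φ + (3:ℝ) • ψ - ψ ∈ R.roots :=
    R.sub_mem _ hrf ψ hψr hin3 hne3
  have : φ + (3:ℝ) • ψ - ψ = ψ + (ψ + φ) := by
    have h3 : (3:ℝ) • ψ = ψ + ψ + ψ := by
      rw [show (3:ℝ) = 2 + 1 by norm_num, add_smul, two_smul, one_smul]
    rw [h3]; abel
  rw [this] at hsub
  exact hc φ hφp hsum hsub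

/-- reverse injection B1 → A0 -/
theorem card_B1_le_A0 {ψ : V} (hψ : ψ ∈ R.pos) :
    ((Nf R ψ 2).filter (fun β => β - ψ ∈ R.pos)).card ≤ (Af R ψ 0).card := by
  have hψr := psi_mem_roots hψ
  apply Finset.card_le_card_of_injOn (fun β => β - ψ)
  · intro β hβ
    obtain ⟨hN, hpos⟩ := Finset.mem_filter.1 hβ
    obtain ⟨⟨hne, hβp⟩, hK⟩ := mem_Nf_iff.1 hN
    refine mem_Af_iff.2 ⟨⟨⟨?_, hpos⟩, ?_, ?_⟩, ?_⟩
    · intro h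
      have h2 : β = ψ + ψ := by linear_combination (norm := module) h
      have : β ∈ R.roots := R.pos_subset hβp
      rw [h2] at this
      exact two_smul_not_root R hψr this
    · have : ψ + (β - ψ) = β := by abel
      rw [this]; exact hβp
    all_goals
      rw [pair_sub_left R hψr, pair_self R hψr, hK]
    · norm_num
    · norm_num
  · intro a _ b _ h
    have := congrArg (fun x => x + ψ) h
    simpa using this

/-- reverse injection B2 → A0 -/
theorem card_B2_le_A0 {ψ : V} (hψ : ψ ∈ R.pos) :
    ((Nf R ψ 2).filter (fun β => β - ψ ∉ R.pos)).card ≤ (Af R ψ 0).card := by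
  have hψr := psi_mem_roots hψ
  apply Finset.card_le_card_of_injOn (fun β => ψ - β)
  · intro β hβ
    obtain ⟨hN, hnpos⟩ := Finset.mem_filter.1 hβ
    obtain ⟨⟨hne, hβp⟩, hK⟩ := mem_Nf_iff.1 hN
    have hβr := R.pos_subset hβp
    have hin : 0 < ⟪β, ψ⟫ := (pair_pos_iff R hψr).1 (by rw [hK]; norm_num)
    have hsub : β - ψ ∈ R.roots := R.sub_mem β hβr ψ hψr hin hne
    have hpos : ψ - β ∈ R.pos := by
      rcases pos_or_neg R hsub with h | h
      · exact absurd h hnpos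
      · have : -(β - ψ) = ψ - β := by abel
        rwa [this] at h
    have hK0 : pair (ψ - β) ψ = 0 := by
      rw [pair_sub_left R hψr, pair_self R hψr, hK]; norm_num
    refine mem_Af_iff.2 ⟨⟨⟨?_, hpos⟩, ?_, ?_⟩, hK0⟩
    · intro h
      have h2 : β = 0 := by linear_combination (norm := module) -h
      exact R.root_ne_zero β hβr h2
    · -- ψ + (ψ - β) = 2ψ - β is a root (reflection of β), positive as sum of positives
      have hrf : rf ψ β ∈ R.roots := rf_mem R hψr hβr
      rw [rf_eval hψr 2 hK] at hrf
      have hneg : -(β - (2:ℝ) • ψ) ∈ R.roots := R.neg_mem _ hrf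
      have heq : -(β - (2:ℝ) • ψ) = ψ + (ψ - β) := by
        rw [two_smul]; abel
      rw [heq] at hneg
      exact sum_pos_mem_pos R hψ hpos hneg
    · rw [hK0]; norm_num
  · intro a _ b _ h
    simp only at h
    linear_combination (norm := module) -h

/-- under Comm, injection N3 → A1 -/
theorem card_N3_le_A1 {ψ : V} (hψ : ψ ∈ R.pos) (hc : Comm R ψ) :
    (Nf R ψ 3).card ≤ (Af R ψ 1).card := by
  have hψr := psi_mem_roots hψ
  apply Finset.card_le_card_of_injOn (fun β => β - ψ)
  · intro β hβ
    obtain ⟨⟨hne, hβp⟩, hK⟩ := mem_Nf_iff.1 hβ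
    have hβr := R.pos_subset hβp
    have hin : 0 < ⟪β, ψ⟫ := (pair_pos_iff R hψr).1 (by rw [hK]; norm_num)
    have hsub : β - ψ ∈ R.roots := R.sub_mem β hβr ψ hψr hin hne
    have hK1 : pair (β - ψ) ψ = 1 := by
      rw [pair_sub_left R hψr, pair_self R hψr, hK]; norm_num
    have hpos : β - ψ ∈ R.pos := by
      rcases pos_or_neg R hsub with h | h
      · exact h
      · exfalso
        have hγp : ψ - β ∈ R.pos := by
          have : -(β - ψ) = ψ - β := by abel
          rwa [this] at h
        have hγr := R.pos_subset hγp
        have hKγ : pair (ψ - β) ψ = -1 := by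
          rw [pair_sub_left R hψr, pair_self R hψr, hK]; norm_num
        have hinγ : ⟪ψ - β, ψ⟫ < 0 := (pair_neg_iff R hψr).1 (by rw [hKγ]; norm_num)
        have hsumγ : ψ + (ψ - β) ∈ R.pos := by
          rw [add_comm]
          exact sum_pos_mem_pos R hγp hψ
            (add_root_of_inner_neg R hγr hψr hinγ (ne_neg_of_pos hγp hψ))
        -- ψ + (ψ + (ψ - β)) = 3ψ - β is a root : reflection of β
        have hrf : rf ψ β ∈ R.roots := rf_mem R hψr hβr
        rw [rf_eval hψr 3 hK] at hrf
        have hneg : -(β - (3:ℝ) • ψ) ∈ R.roots := R.neg_mem _ hrf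
        have heq : -(β - (3:ℝ) • ψ) = ψ + (ψ + (ψ - β)) := by
          rw [show (3:ℝ) = 2 + 1 by norm_num, add_smul, two_smul, one_smul]
          abel
        rw [heq] at hneg
        exact hc (ψ - β) hγp hsumγ hneg
    refine mem_Af_iff.2 ⟨⟨⟨?_, hpos⟩, ?_, ?_⟩, hK1⟩
    · intro h
      have h2 : β = ψ + ψ := by linear_combination (norm := module) h
      have : β ∈ R.roots := hβr
      rw [h2] at this
      exact two_smul_not_root R hψr this
    · have : ψ + (β - ψ) = β := by abel
      rw [this]; exact hβp
    · rw [hK1]; norm_num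
  · intro a _ b _ h
    have := congrArg (fun x => x + ψ) h
    simpa using this

end Kostant
namespace Kostant
open Finset RootSystemData
open scoped Classical

variable {V : Type} [NormedAddCommGroup V] [InnerProductSpace ℝ V] [FiniteDimensional ℝ V]
variable {R : IrredRootSystemData V}

/-- if Comm fails, one of the slack terms is positive -/
theorem notComm_slack {ψ : V} (hψ : ψ ∈ R.pos) (hnc : ¬ Comm R ψ) :
    (Nf R ψ (-2)).Nonempty ∨ (Nf R ψ (-3)).Nonempty ∨
      (Af R ψ 1).card + 1 ≤ (Nf R ψ 3).card := by
  have hψr := psi_mem_roots hψ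
  rw [Comm] at hnc
  push_neg at hnc
  obtain ⟨φ₀, hφ₀p, hsum, hβr⟩ := hnc
  have hφ₀r := R.pos_subset hφ₀p
  have hφ₀ne : φ₀ ≠ ψ := by
    intro h
    rw [h] at hsum
    exact two_smul_not_root R hψr (R.pos_subset hsum)
  -- β := ψ + (ψ + φ₀) has pairing K₀ + 4
  obtain ⟨n, hn⟩ := pair_int R hφ₀r hψr
  have hKβ : pair (ψ + (ψ + φ₀)) ψ = pair φ₀ ψ + 4 := by
    rw [pair_sum_left hψr, pair_sum_left hψr]; ring
  have hβne : ψ + (ψ + φ₀) ≠ ψ := by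
    intro h
    have h2 : φ₀ = -ψ := by linear_combination (norm := module) h
    exact ne_neg_of_pos hφ₀p hψ h2
  have hβnn : ψ + (ψ + φ₀) ≠ -ψ := by
    intro h
    have h2 : -φ₀ = (3:ℝ) • ψ := by
      rw [show (3:ℝ) = 1 + 1 + 1 by norm_num, add_smul, add_smul, one_smul]
      linear_combination (norm := module) -h
    have h3 : (3:ℝ) • ψ ∈ R.roots := h2 ▸ R.neg_mem φ₀ hφ₀r
    rcases R.reduced ψ hψr 3 h3 with h | h <;> norm_num at h
  have hb := pair_bounds R hβr hψr hβne hβnn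
  have hK₀hi : pair φ₀ ψ ≤ -1 := by linarith [hb.2, hKβ]
  have hb₀ := pair_bounds R hφ₀r hψr hφ₀ne (ne_neg_of_pos hφ₀p hψ)
  have hlo : (-3:ℝ) ≤ n := by rw [← hn]; exact hb₀.1
  have hhi : (n:ℝ) ≤ -1 := by rw [← hn]; exact hK₀hi
  have hlo' : -3 ≤ n := by exact_mod_cast hlo
  have hhi' : n ≤ -1 := by exact_mod_cast hhi
  interval_cases n
  · -- K₀ = -3
    right; left
    exact ⟨φ₀, mem_Nf_iff.2 ⟨⟨hφ₀ne, hφ₀p⟩, by rw [hn]; norm_num⟩⟩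
  · -- K₀ = -2
    left
    exact ⟨φ₀, mem_Nf_iff.2 ⟨⟨hφ₀ne, hφ₀p⟩, by rw [hn]; norm_num⟩⟩
  · -- K₀ = -1
    have hK₀ : pair φ₀ ψ = -1 := by rw [hn]; norm_num
    -- φ₀ - ψ is a root: reflection of β = φ₀ + 2ψ with K = 3
    have hKβ3 : pair (ψ + (ψ + φ₀)) ψ = 3 := by rw [hKβ, hK₀]; norm_num
    have hrf : rf ψ (ψ + (ψ + φ₀)) ∈ R.roots := rf_mem R hψr hβr
    rw [rf_eval hψr 3 hKβ3] at hrf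
    have heq : ψ + (ψ + φ₀) - (3:ℝ) • ψ = φ₀ - ψ := by
      rw [show (3:ℝ) = 1 + 1 + 1 by norm_num, add_smul, add_smul, one_smul]
      abel
    rw [heq] at hrf
    rcases pos_or_neg R hrf with hcase | hcase
    · -- φ₀ - ψ positive : in Nf(-3)
      right; left
      refine ⟨φ₀ - ψ, mem_Nf_iff.2 ⟨⟨?_, hcase⟩, ?_⟩⟩
      · intro h
        have h2 : φ₀ = ψ + ψ := by linear_combination (norm := module) h
        rw [h2] at hφ₀r
        exact two_smul_not_root R hψr hφ₀r
      · rw [pair_sub_left R hψr, pair_self R hψr, hK₀]; norm_num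
    · -- ψ - φ₀ positive : element of N3 missed by the injection
      right; right
      have hγeq : -(φ₀ - ψ) = ψ - φ₀ := by abel
      rw [hγeq] at hcase
      have hγN : ψ - φ₀ ∈ Nf R ψ 3 := by
        refine mem_Nf_iff.2 ⟨⟨?_, hcase⟩, ?_⟩
        · intro h
          have h2 : φ₀ = 0 := by linear_combination (norm := module) -h
          exact R.root_ne_zero φ₀ hφ₀r h2
        · rw [pair_sub_left R hψr, pair_self R hψr, hK₀]; norm_num
      have hinj : (Af R ψ 1).card ≤ ((Nf R ψ 3).erase (ψ - φ₀)).card := by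
        apply Finset.card_le_card_of_injOn (fun φ => ψ + φ)
        · intro φ hφ
          obtain ⟨⟨⟨hne, hφp⟩, hD⟩, hK⟩ := mem_Af_iff.1 hφ
          refine Finset.mem_erase.2 ⟨?_, mem_Nf_iff.2 ⟨⟨sum_ne_psi hψ hφp, hD.1⟩, ?_⟩⟩
          · intro h
            have h2 : φ = -φ₀ := by linear_combination (norm := module) h
            have : -φ ∈ R.pos := by rw [h2, neg_neg]; exact hφ₀p
            exact neg_not_pos R hφp this
          · rw [pair_sum_left hψr, hK]; norm_num
        · intro a _ b _ h
          exact add_left_cancel h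
      have : ((Nf R ψ 3).erase (ψ - φ₀)).card + 1 = (Nf R ψ 3).card := by
        rw [Finset.card_erase_of_mem hγN]
        have : 1 ≤ (Nf R ψ 3).card := Finset.card_pos.2 ⟨_, hγN⟩
        omega
      omega

/-- the integer-level core inequality with equality iff Comm -/
theorem core_int {ψ : V} (hψ : ψ ∈ R.pos) :
    2 * ∑ φ ∈ Dp R ψ, (pair φ ψ + 2) ≤ ∑ φ ∈ Pe R ψ, (pair φ ψ ^ 2 - pair φ ψ) ∧
    ((∑ φ ∈ Pe R ψ, (pair φ ψ ^ 2 - pair φ ψ) = 2 * ∑ φ ∈ Dp R ψ, (pair φ ψ + 2))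
      ↔ Comm R ψ) := by
  have hP := sum_Pe_decomp hψ
  have hD := sum_Dp_decomp hψ
  have hNA : ((Nf R ψ (-1)).card : ℝ) = ((Af R ψ (-1)).card : ℝ) := by
    rw [Nf_neg_one_eq_Af hψ]
  set nm3 := (Nf R ψ (-3)).card
  set nm2 := (Nf R ψ (-2)).card
  set nm1 := (Nf R ψ (-1)).card
  set n2 := (Nf R ψ 2).card
  set n3 := (Nf R ψ 3).card
  set am1 := (Af R ψ (-1)).card
  set a0 := (Af R ψ 0).card
  set a1 := (Af R ψ 1).card
  set b1 := ((Nf R ψ 2).filter (fun β => β - ψ ∈ R.pos)).card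
  set b2 := ((Nf R ψ 2).filter (fun β => β - ψ ∉ R.pos)).card
  have hsplit : n2 = b1 + b2 := card_N2_split ψ
  have h1 : a1 ≤ n3 := card_A1_le hψ
  have h2a : a0 ≤ b1 := card_A0_le_B1 hψ
  have h2b : a0 ≤ b2 + nm2 := card_A0_le_B2 hψ
  have h3a : b1 ≤ a0 := card_B1_le_A0 hψ
  have h3b : b2 ≤ a0 := card_B2_le_A0 hψ
  constructor
  · rw [hP, hD, hNA]
    have c1 : (a1 : ℝ) ≤ n3 := by exact_mod_cast h1
    have c2 : (a0 : ℝ) ≤ b1 := by exact_mod_cast h2a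
    have c3 : (a0 : ℝ) ≤ b2 + nm2 := by exact_mod_cast h2b
    have c4 : (n2 : ℝ) = b1 + b2 := by exact_mod_cast hsplit
    have c5 : (0:ℝ) ≤ nm3 := Nat.cast_nonneg _
    linarith
  · constructor
    · intro heq
      rw [hP, hD, hNA] at heq
      by_contra hnc
      have c1 : (a1 : ℝ) ≤ n3 := by exact_mod_cast h1
      have c2 : (a0 : ℝ) ≤ b1 := by exact_mod_cast h2a
      have c3 : (a0 : ℝ) ≤ b2 + nm2 := by exact_mod_cast h2b
      have c4 : (n2 : ℝ) = b1 + b2 := by exact_mod_cast hsplit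
      rcases notComm_slack hψ hnc with hs | hs | hs
      · have : 1 ≤ nm2 := Finset.card_pos.2 hs
        have c6 : (1:ℝ) ≤ nm2 := by exact_mod_cast this
        have c5 : (0:ℝ) ≤ nm3 := Nat.cast_nonneg _
        linarith
      · have : 1 ≤ nm3 := Finset.card_pos.2 hs
        have c6 : (1:ℝ) ≤ nm3 := by exact_mod_cast this
        have c7 : (0:ℝ) ≤ nm2 := Nat.cast_nonneg _
        linarith
      · have c6 : (a1 : ℝ) + 1 ≤ n3 := by exact_mod_cast hs
        have c5 : (0:ℝ) ≤ nm3 := Nat.cast_nonneg _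
        have c7 : (0:ℝ) ≤ nm2 := Nat.cast_nonneg _
        linarith
    · intro hc
      rw [hP, hD, hNA]
      have hm2 : nm2 = 0 := by
        rw [Finset.card_eq_zero]
        by_contra hne
        exact notComm_of_Nneg2 hψ (Finset.nonempty_of_ne_empty hne).choose_spec hc
      have hm3 : nm3 = 0 := by
        rw [Finset.card_eq_zero]
        by_contra hne
        exact notComm_of_Nneg3 hψ (Finset.nonempty_of_ne_empty hne).choose_spec hc
      have h4 : n3 ≤ a1 := card_N3_le_A1 hψ hc
      have e1 : a1 = n3 := le_antisymm h1 h4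
      have e2 : 2 * a0 = n2 := by omega
      have c1 : (a1 : ℝ) = n3 := by exact_mod_cast e1
      have c2 : (2:ℝ) * a0 = n2 := by exact_mod_cast e2
      have c3 : (nm2 : ℝ) = 0 := by exact_mod_cast hm2
      have c4 : (nm3 : ℝ) = 0 := by exact_mod_cast hm3
      linarith

end Kostant
namespace Kostant
open Finset RootSystemData
open scoped Classical

variable {V : Type} [NormedAddCommGroup V] [InnerProductSpace ℝ V] [FiniteDimensional ℝ V]
variable (R : IrredRootSystemData V)

theorem core_real (hn : 2 * ⟪R.ρ, R.θ⟫ + ⟪R.θ, R.θ⟫ = 1) {ψ : V} (hψ : ψ ∈ R.pos) :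
    2 * ⟪R.ρ, ψ⟫ + ⟪ψ, ψ⟫ + 2 * ∑ φ ∈ Dp R ψ, ⟪ψ + φ, ψ⟫ ≤ 1 ∧
    (2 * ⟪R.ρ, ψ⟫ + ⟪ψ, ψ⟫ + 2 * ∑ φ ∈ Dp R ψ, ⟪ψ + φ, ψ⟫ = 1 ↔ Comm R ψ) := by
  have hψr := psi_mem_roots hψ
  have hss := root_inner_self_pos R hψr
  -- Casimir gives the total sum of squares
  have e1 : ∑ φ ∈ Pe R ψ, ⟪φ, ψ⟫ ^ 2 = ⟪ψ, ψ⟫ / 2 - ⟪ψ, ψ⟫ ^ 2 := by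
    have h1 := casimir R hn hψr
    have h2 : ∑ φ ∈ R.roots, ⟪φ, ψ⟫ ^ 2 = 2 * ∑ φ ∈ R.pos, ⟪φ, ψ⟫ ^ 2 :=
      sum_roots_even R _ (fun x => by rw [inner_neg_left]; ring)
    have h3 : ∑ φ ∈ R.pos, ⟪φ, ψ⟫ ^ 2 = ⟪ψ, ψ⟫ ^ 2 + ∑ φ ∈ Pe R ψ, ⟪φ, ψ⟫ ^ 2 := by
      rw [Pe, ← Finset.add_sum_erase _ _ hψ]
    rw [h2, h3] at h1
    linarith
  have e2 : ∑ φ ∈ Pe R ψ, ⟪φ, ψ⟫ = 2 * ⟪R.ρ, ψ⟫ - ⟪ψ, ψ⟫ := by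
    have h1 := two_inner_rho R ψ
    rw [← Finset.add_sum_erase _ _ hψ] at h1
    have : Pe R ψ = R.pos.erase ψ := rfl
    rw [this]
    linarith
  -- convert to the integer-level sums
  have eK2 : ∑ φ ∈ Pe R ψ, pair φ ψ ^ 2 = 2 / ⟪ψ, ψ⟫ - 4 := by
    have ep : ∀ φ ∈ Pe R ψ, pair φ ψ ^ 2 = ⟪φ, ψ⟫ ^ 2 * (4 / ⟪ψ, ψ⟫ ^ 2) := by
      intro φ _
      rw [pair]
      field_simp
      ring
    rw [Finset.sum_congr rfl ep, ← Finset.sum_mul, e1]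
    field_simp
    ring
  have eK1 : ∑ φ ∈ Pe R ψ, pair φ ψ = (2 * ⟪R.ρ, ψ⟫ - ⟪ψ, ψ⟫) * (2 / ⟪ψ, ψ⟫) := by
    have ep : ∀ φ ∈ Pe R ψ, pair φ ψ = ⟪φ, ψ⟫ * (2 / ⟪ψ, ψ⟫) := by
      intro φ _
      rw [pair]
      field_simp
    rw [Finset.sum_congr rfl ep, ← Finset.sum_mul, e2]
  have eD : ∑ φ ∈ Dp R ψ, ⟪ψ + φ, ψ⟫ = (∑ φ ∈ Dp R ψ, (pair φ ψ + 2)) * (⟪ψ, ψ⟫ / 2) := by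
    rw [Finset.sum_mul]
    refine Finset.sum_congr rfl fun φ _ => ?_
    rw [inner_eq_pair R hψr, pair_sum_left hψr]
    ring
  have hsplit : ∑ φ ∈ Pe R ψ, (pair φ ψ ^ 2 - pair φ ψ) =
      ∑ φ ∈ Pe R ψ, pair φ ψ ^ 2 - ∑ φ ∈ Pe R ψ, pair φ ψ := Finset.sum_sub_distrib _ _
  have key : 1 - (2 * ⟪R.ρ, ψ⟫ + ⟪ψ, ψ⟫ + 2 * ∑ φ ∈ Dp R ψ, ⟪ψ + φ, ψ⟫) =
      (⟪ψ, ψ⟫ / 2) * (∑ φ ∈ Pe R ψ, (pair φ ψ ^ 2 - pair φ ψ)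
        - 2 * ∑ φ ∈ Dp R ψ, (pair φ ψ + 2)) := by
    rw [hsplit, eK2, eK1, eD]
    field_simp
    ring
  obtain ⟨hineq, hiff⟩ := core_int hψ
  constructor
  · nlinarith [key, hss]
  · constructor
    · intro h
      rw [h] at key
      rw [sub_self] at key
      have : (∑ φ ∈ Pe R ψ, (pair φ ψ ^ 2 - pair φ ψ)
          - 2 * ∑ φ ∈ Dp R ψ, (pair φ ψ + 2)) = 0 := by
        rcases mul_eq_zero.1 key.symm with hc | hc
        · exfalso; rw [div_eq_zero_iff] at hc
          rcases hc with hc | hc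
          · exact hss.ne' hc
          · norm_num at hc
        · exact hc
      exact hiff.1 (by linarith)
    · intro hc
      have := hiff.2 hc
      rw [this] at key
      simp at key
      rw [real_inner_self_eq_norm_sq (x := ψ)]
      linarith

end Kostant
namespace Kostant
open Finset RootSystemData
open scoped Classical

variable {V : Type} [NormedAddCommGroup V] [InnerProductSpace ℝ V] [FiniteDimensional ℝ V]
variable (R : IrredRootSystemData V)

/-- height of a positive root via its (unique) expansion in simple roots -/
def hgt (φ : V) : ℕ :=
  if h : φ ∈ R.pos then ∑ i, Classical.choose (R.pos_combo φ h) i else 0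

theorem combo_unique {c d : Fin R.l → ℝ}
    (h : ∑ i, c i • R.simple i = ∑ i, d i • R.simple i) : ∀ i, c i = d i := by
  have hz : ∑ i, (c i - d i) • R.simple i = 0 := by
    simp only [sub_smul, Finset.sum_sub_distrib, h, sub_self]
  intro i
  have := linearIndependent_iff'.1 R.simple_indep Finset.univ (fun i => c i - d i) hz i
    (Finset.mem_univ i)
  linarith

theorem hgt_spec {φ : V} (h : φ ∈ R.pos) :
    φ = ∑ i, (Classical.choose (R.pos_combo φ h) i : ℝ) • R.simple i ∧
    hgt R φ = ∑ i, Classical.choose (R.pos_combo φ h) i := by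
  refine ⟨Classical.choose_spec (R.pos_combo φ h), ?_⟩
  rw [hgt, dif_pos h]

theorem hgt_lt {a b : V} (ha : a ∈ R.pos) (hb : b ∈ R.pos) (hab : a - b ∈ R.pos) :
    hgt R b < hgt R a := by
  obtain ⟨hea, hha⟩ := hgt_spec R ha
  obtain ⟨heb, hhb⟩ := hgt_spec R hb
  obtain ⟨heab, hhab⟩ := hgt_spec R hab
  set ca := Classical.choose (R.pos_combo a ha)
  set cb := Classical.choose (R.pos_combo b hb)
  set cab := Classical.choose (R.pos_combo (a - b) hab)
  have hsum : ∑ i, (ca i : ℝ) • R.simple i =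
      ∑ i, ((cb i : ℝ) + (cab i : ℝ)) • R.simple i := by
    simp only [add_smul, Finset.sum_add_distrib, ← heb, ← heab]
    rw [← hea]; abel
  have hcoef : ∀ i, ca i = cb i + cab i := by
    intro i
    have := combo_unique R hsum i
    exact_mod_cast this
  have hpos : 0 < ∑ i, cab i := by
    rcases Nat.eq_zero_or_pos (∑ i, cab i) with h | h
    swap
    · exact h
    · exfalso
      have hz : ∀ i, cab i = 0 := by
        intro i
        have := Finset.sum_eq_zero_iff.1 h i (Finset.mem_univ i)
        exact this
      have : a - b = 0 := by
        rw [heab]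
        exact Finset.sum_eq_zero fun i _ => by rw [hz i]; norm_num
      exact R.root_ne_zero _ (R.pos_subset hab) this
  have : ∑ i, ca i = ∑ i, cb i + ∑ i, cab i := by
    rw [← Finset.sum_add_distrib]
    exact Finset.sum_congr rfl fun i _ => hcoef i
  omega

/-- every nonempty subset of positive roots has a minimal element -/
theorem exists_minimal {Ψ : Finset V} (hΨ : Ψ ⊆ R.pos) (hne : Ψ.Nonempty) :
    ∃ ψ ∈ Ψ, ∀ ψ' ∈ Ψ, ψ - ψ' ∉ R.pos := by
  obtain ⟨ψ, hψ, hmin⟩ := Finset.exists_min_image Ψ (hgt R) hne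
  refine ⟨ψ, hψ, fun ψ' hψ' hc => ?_⟩
  have := hgt_lt R (hΨ hψ) (hΨ hψ') hc
  have := hmin ψ' hψ'
  omega

end Kostant
namespace Kostant
open Finset RootSystemData
open scoped Classical

variable {V : Type} [NormedAddCommGroup V] [InnerProductSpace ℝ V] [FiniteDimensional ℝ V]
variable (R : IrredRootSystemData V)

/-- abelian ideal predicate -/
def AbId (Ψ : Finset V) : Prop :=
  (∀ ψ ∈ Ψ, ∀ φ ∈ R.pos, ψ + φ ∈ R.pos → ψ + φ ∈ Ψ) ∧
  (∀ ψ₁ ∈ Ψ, ∀ ψ₂ ∈ Ψ, ψ₁ + ψ₂ ∉ R.pos)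

variable {R}

theorem ne_psi_of_sum_pos {ψ φ : V} (hψ : ψ ∈ R.pos) (hsum : ψ + φ ∈ R.pos) : φ ≠ ψ := by
  intro h
  rw [h] at hsum
  exact two_smul_not_root R (psi_mem_roots hψ) (R.pos_subset hsum)

theorem mem_Dp_of_comm {ψ φ : V} (hψ : ψ ∈ R.pos) (hc : Comm R ψ)
    (hφ : φ ∈ R.pos) (hsum : ψ + φ ∈ R.pos) : φ ∈ Dp R ψ := by
  have hne : φ ≠ ψ := ne_psi_of_sum_pos hψ hsum
  have hPe : φ ∈ Pe R ψ := Finset.mem_erase.2 ⟨hne, hφ⟩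
  obtain ⟨⟨n, hn⟩, hlo, hhi⟩ := Pe_bounds hψ hPe
  refine Finset.mem_filter.2 ⟨hPe, hsum, ?_⟩
  by_contra hcon
  push_neg at hcon
  have hn2 : (n:ℝ) < -1 := by rw [← hn]; exact hcon
  have hlo' : (-3:ℝ) ≤ n := by rw [← hn]; exact hlo
  have h1' : n < -1 := by exact_mod_cast hn2
  have h1 : n ≤ -2 := by omega
  have h2 : -3 ≤ n := by exact_mod_cast hlo'
  interval_cases n
  · exact notComm_of_Nneg3 hψ (mem_Nf_iff.2 ⟨⟨hne, hφ⟩, by rw [hn]; norm_num⟩) hc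
  · exact notComm_of_Nneg2 hψ (mem_Nf_iff.2 ⟨⟨hne, hφ⟩, by rw [hn]; norm_num⟩) hc

theorem Dp_inner_pos {ψ φ : V} (hψ : ψ ∈ R.pos) (hφ : φ ∈ Dp R ψ) :
    0 < ⟪ψ + φ, ψ⟫ := by
  have hψr := psi_mem_roots hψ
  obtain ⟨hPe, hsum, hge⟩ := Finset.mem_filter.1 hφ
  have : pair (ψ + φ) ψ = pair φ ψ + 2 := pair_sum_left hψr
  exact (pair_pos_iff R hψr).1 (by rw [this]; linarith)

/-- the erased set remains an abelian ideal -/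
theorem AbId_erase {Ψ : Finset V} {ψ : V} (hab : AbId R Ψ) (hψΨ : ψ ∈ Ψ)
    (hmin : ∀ ψ' ∈ Ψ, ψ - ψ' ∉ R.pos) : AbId R (Ψ.erase ψ) := by
  constructor
  · intro σ hσ φ hφ hsum
    have hσΨ := Finset.mem_of_mem_erase hσ
    have h1 : σ + φ ∈ Ψ := hab.1 σ hσΨ φ hφ hsum
    refine Finset.mem_erase.2 ⟨?_, h1⟩
    intro h
    have : ψ - σ ∈ R.pos := by
      have : ψ - σ = φ := by linear_combination (norm := module) -h
      rw [this]; exact hφ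
    exact hmin σ hσΨ this
  · intro σ₁ hσ₁ σ₂ hσ₂
    exact hab.2 σ₁ (Finset.mem_of_mem_erase hσ₁) σ₂ (Finset.mem_of_mem_erase hσ₂)

/-- a minimal element of an abelian ideal is commutative -/
theorem comm_of_abid {Ψ : Finset V} {ψ : V} (hsub : Ψ ⊆ R.pos) (hab : AbId R Ψ)
    (hψΨ : ψ ∈ Ψ) : Comm R ψ := by
  intro φ hφ hsum hroot
  have h1 : ψ + φ ∈ Ψ := hab.1 ψ hψΨ φ hφ hsum
  have h2 : ψ + (ψ + φ) ∈ R.pos := sum_pos_mem_pos R (hsub hψΨ) hsum hroot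
  exact hab.2 ψ hψΨ (ψ + φ) h1 h2

end Kostant
namespace Kostant
open Finset RootSystemData
open scoped Classical

variable {V : Type} [NormedAddCommGroup V] [InnerProductSpace ℝ V] [FiniteDimensional ℝ V]
variable (R : IrredRootSystemData V)

theorem main_aux (hn : 2 * ⟪R.ρ, R.θ⟫ + ⟪R.θ, R.θ⟫ = 1) :
    ∀ (n : ℕ) (Ψ : Finset V), Ψ ⊆ R.pos → Ψ.card = n →
      2 * ⟪R.ρ, ∑ φ ∈ Ψ, φ⟫ + ⟪∑ φ ∈ Ψ, φ, ∑ φ ∈ Ψ, φ⟫ ≤ (n : ℝ) ∧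
      (2 * ⟪R.ρ, ∑ φ ∈ Ψ, φ⟫ + ⟪∑ φ ∈ Ψ, φ, ∑ φ ∈ Ψ, φ⟫ = (n : ℝ) ↔ AbId R Ψ) := by
  intro n
  induction n with
  | zero =>
    intro Ψ hsub hcard
    have hΨe : Ψ = ∅ := Finset.card_eq_zero.1 hcard
    subst hΨe
    simp only [Finset.sum_empty, inner_zero_right, inner_zero_left, mul_zero, add_zero,
      Nat.cast_zero, le_refl, true_and]
    constructor
    · intro _
      exact ⟨fun ψ h => absurd h (Finset.notMem_empty ψ),
        fun ψ h => absurd h (Finset.notMem_empty ψ)⟩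
    · intro _; trivial
  | succ m ih =>
    intro Ψ hsub hcard
    have hne : Ψ.Nonempty := by
      rw [← Finset.card_pos, hcard]; omega
    obtain ⟨ψ, hψΨ, hmin⟩ := exists_minimal R hsub hne
    have hψp := hsub hψΨ
    have hψr := psi_mem_roots hψp
    set Ψ' := Ψ.erase ψ with hΨ'def
    have hsub' : Ψ' ⊆ R.pos := fun x hx => hsub (Finset.mem_of_mem_erase hx)
    have hcard' : Ψ'.card = m := by
      rw [hΨ'def, Finset.card_erase_of_mem hψΨ, hcard]
      omega
    obtain ⟨ihle, ihiff⟩ := ih Ψ' hsub' hcard'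
    set S' : V := ∑ φ ∈ Ψ', φ with hS'def
    have hS : ∑ φ ∈ Ψ, φ = ψ + S' := by
      rw [hS'def, hΨ'def, ← Finset.add_sum_erase _ _ hψΨ]
    have hgap : 2 * ⟪R.ρ, ∑ φ ∈ Ψ, φ⟫ + ⟪∑ φ ∈ Ψ, φ, ∑ φ ∈ Ψ, φ⟫ =
        (2 * ⟪R.ρ, S'⟫ + ⟪S', S'⟫) + (2 * ⟪R.ρ, ψ⟫ + ⟪ψ, ψ⟫ + 2 * ⟪S', ψ⟫) := by
      rw [hS]
      simp only [inner_add_left, inner_add_right]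
      rw [real_inner_comm ψ S']
      ring
    have hSΨ' : ⟪S', ψ⟫ = ∑ ψ' ∈ Ψ', ⟪ψ', ψ⟫ := by
      rw [hS'def, sum_inner]
    set T := Ψ'.filter (fun ψ' => 0 < ⟪ψ', ψ⟫) with hTdef
    -- the subtraction map lands in Dp
    have hmap : ∀ ψ' ∈ T, ψ' - ψ ∈ Dp R ψ := by
      intro ψ' hψ'T
      obtain ⟨hψ'Ψ', hin⟩ := Finset.mem_filter.1 hψ'T
      have hψ'ne := Finset.ne_of_mem_erase hψ'Ψ'
      have hψ'p := hsub' hψ'Ψ'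
      have hψ'r := R.pos_subset hψ'p
      have hsubr : ψ' - ψ ∈ R.roots := R.sub_mem ψ' hψ'r ψ hψr hin hψ'ne
      have hpos : ψ' - ψ ∈ R.pos := by
        rcases pos_or_neg R hsubr with h | h
        · exact h
        · exfalso
          have : ψ - ψ' ∈ R.pos := by
            have he : -(ψ' - ψ) = ψ - ψ' := by abel
            rwa [he] at h
          exact hmin ψ' (Finset.mem_of_mem_erase hψ'Ψ') this
      have hK1 : 1 ≤ pair ψ' ψ := by
        obtain ⟨k, hk⟩ := pair_int R hψ'r hψr
        have : 0 < pair ψ' ψ := (pair_pos_iff R hψr).2 hin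
        have hk0 : 0 < k := by exact_mod_cast hk ▸ this
        have : (1:ℤ) ≤ k := hk0
        rw [hk]; exact_mod_cast this
      refine Finset.mem_filter.2 ⟨Finset.mem_erase.2 ⟨?_, hpos⟩, ?_, ?_⟩
      · intro h
        have h2 : ψ' = ψ + ψ := by linear_combination (norm := module) h
        rw [h2] at hψ'r
        exact two_smul_not_root R hψr hψ'r
      · have he : ψ + (ψ' - ψ) = ψ' := by abel
        rw [he]; exact hψ'p
      · rw [pair_sub_left R hψr, pair_self R hψr]
        linarith
    have hinjT : ∀ x ∈ T, ∀ y ∈ T, x - ψ = y - ψ → x = y := by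
      intro x _ y _ h
      have := congrArg (fun z => z + ψ) h
      simpa using this
    have himage : T.image (fun ψ' => ψ' - ψ) ⊆ Dp R ψ := by
      intro φ hφ
      obtain ⟨ψ', hψ'T, hφe⟩ := Finset.mem_image.1 hφ
      exact hφe ▸ hmap ψ' hψ'T
    have hsum_img : ∑ φ ∈ T.image (fun ψ' => ψ' - ψ), ⟪ψ + φ, ψ⟫ =
        ∑ ψ' ∈ T, ⟪ψ', ψ⟫ := by
      rw [Finset.sum_image hinjT]
      exact Finset.sum_congr rfl fun ψ' _ => by
        rw [show ψ + (ψ' - ψ) = ψ' from by abel]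
    have hTle : ∑ ψ' ∈ T, ⟪ψ', ψ⟫ ≤ ∑ φ ∈ Dp R ψ, ⟪ψ + φ, ψ⟫ := by
      rw [← hsum_img]
      exact Finset.sum_le_sum_of_subset_of_nonneg himage
        (fun i hi _ => (Dp_inner_pos hψp hi).le)
    have hsplitT : ∑ ψ' ∈ T, ⟪ψ', ψ⟫ +
        ∑ ψ' ∈ Ψ'.filter (fun ψ' => ¬ 0 < ⟪ψ', ψ⟫), ⟪ψ', ψ⟫ = ∑ ψ' ∈ Ψ', ⟪ψ', ψ⟫ := by
      rw [hTdef]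
      exact Finset.sum_filter_add_sum_filter_not _ _ _
    have hrest_nonpos : ∀ ψ' ∈ Ψ'.filter (fun ψ' => ¬ 0 < ⟪ψ', ψ⟫), ⟪ψ', ψ⟫ ≤ 0 := by
      intro ψ' hψ'
      have := (Finset.mem_filter.1 hψ').2
      linarith [not_lt.1 this]
    have hΨ'le : ∑ ψ' ∈ Ψ', ⟪ψ', ψ⟫ ≤ ∑ ψ' ∈ T, ⟪ψ', ψ⟫ := by
      have := Finset.sum_nonpos hrest_nonpos
      linarith [hsplitT]
    obtain ⟨cle, ciff⟩ := core_real R hn hψp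
    have hchain : ∑ ψ' ∈ Ψ', ⟪ψ', ψ⟫ ≤ ∑ φ ∈ Dp R ψ, ⟪ψ + φ, ψ⟫ :=
      le_trans hΨ'le hTle
    have hcast : ((m + 1 : ℕ) : ℝ) = (m : ℝ) + 1 := by push_cast; ring
    constructor
    · -- the inequality
      rw [hgap, hcast]
      have : 2 * ⟪R.ρ, ψ⟫ + ⟪ψ, ψ⟫ + 2 * ⟪S', ψ⟫ ≤ 1 := by
        rw [hSΨ']
        linarith
      linarith
    constructor
    · -- equality implies abelian ideal
      intro heq
      rw [hgap, hcast] at heq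
      have hgapterm : 2 * ⟪R.ρ, ψ⟫ + ⟪ψ, ψ⟫ + 2 * ⟪S', ψ⟫ ≤ 1 := by
        rw [hSΨ']; linarith
      have hF' : 2 * ⟪R.ρ, S'⟫ + ⟪S', S'⟫ = (m : ℝ) := by linarith
      have hgap1 : 2 * ⟪R.ρ, ψ⟫ + ⟪ψ, ψ⟫ + 2 * ⟪S', ψ⟫ = 1 := by linarith
      have hab' : AbId R Ψ' := ihiff.1 hF'
      -- squeeze the sums
      have hDple : ∑ φ ∈ Dp R ψ, ⟪ψ + φ, ψ⟫ ≤ ∑ ψ' ∈ Ψ', ⟪ψ', ψ⟫ := by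
        rw [hSΨ'] at hgap1
        linarith
      have hsumeq : ∑ ψ' ∈ Ψ', ⟪ψ', ψ⟫ = ∑ φ ∈ Dp R ψ, ⟪ψ + φ, ψ⟫ :=
        le_antisymm hchain hDple
      have hcore1 : 2 * ⟪R.ρ, ψ⟫ + ⟪ψ, ψ⟫ + 2 * ∑ φ ∈ Dp R ψ, ⟪ψ + φ, ψ⟫ = 1 := by
        rw [hSΨ'] at hgap1
        rw [← hsumeq]
        linarith
      have hcomm : Comm R ψ := ciff.1 hcore1
      -- all inner products with members of Ψ' are nonnegative
      have hTeq : ∑ ψ' ∈ T, ⟪ψ', ψ⟫ = ∑ ψ' ∈ Ψ', ⟪ψ', ψ⟫ := by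
        have h1 : ∑ ψ' ∈ T, ⟪ψ', ψ⟫ ≤ ∑ φ ∈ Dp R ψ, ⟪ψ + φ, ψ⟫ := hTle
        linarith [hΨ'le, hsumeq]
      have hrest0 : ∀ ψ' ∈ Ψ'.filter (fun ψ' => ¬ 0 < ⟪ψ', ψ⟫), ⟪ψ', ψ⟫ = 0 := by
        have hz : ∑ ψ' ∈ Ψ'.filter (fun ψ' => ¬ 0 < ⟪ψ', ψ⟫), ⟪ψ', ψ⟫ = 0 := by
          linarith [hsplitT, hTeq]
        exact (Finset.sum_eq_zero_iff_of_nonpos hrest_nonpos).1 hz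
      have hnonneg : ∀ ψ' ∈ Ψ', 0 ≤ ⟪ψ', ψ⟫ := by
        intro ψ' hψ'
        by_cases h : 0 < ⟪ψ', ψ⟫
        · exact h.le
        · have := hrest0 ψ' (Finset.mem_filter.2 ⟨hψ', h⟩)
          linarith [this.ge]
      -- every Dp element comes from Ψ'
      have himfull : ∀ φ ∈ Dp R ψ, ψ + φ ∈ Ψ' := by
        intro φ₀ hφ₀
        by_contra hnot
        have hnotim : φ₀ ∉ T.image (fun ψ' => ψ' - ψ) := by
          intro hc
          obtain ⟨ψ', hψ'T, he⟩ := Finset.mem_image.1 hc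
          apply hnot
          have : ψ + φ₀ = ψ' := by
            rw [← he]; abel
          rw [this]
          exact Finset.mem_of_mem_filter _ hψ'T
        have hstrict : ∑ φ ∈ T.image (fun ψ' => ψ' - ψ), ⟪ψ + φ, ψ⟫ <
            ∑ φ ∈ Dp R ψ, ⟪ψ + φ, ψ⟫ :=
          Finset.sum_lt_sum_of_subset himage hφ₀ hnotim (Dp_inner_pos hψp hφ₀)
            (fun j hj _ => (Dp_inner_pos hψp hj).le)
        rw [hsum_img] at hstrict
        linarith [hTeq, hsumeq]
      -- now build the abelian ideal property for Ψ
      constructor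
      · -- ideal
        intro σ hσ φ hφ hsum
        by_cases hσψ : σ = ψ
        · rw [hσψ] at hsum ⊢
          have hφD : φ ∈ Dp R ψ := mem_Dp_of_comm hψp hcomm hφ hsum
          exact Finset.mem_of_mem_erase (himfull φ hφD)
        · have hσ' : σ ∈ Ψ' := Finset.mem_erase.2 ⟨hσψ, hσ⟩
          exact Finset.mem_of_mem_erase (hab'.1 σ hσ' φ hφ hsum)
      · -- abelian
        intro σ₁ hσ₁ σ₂ hσ₂ hsum
        by_cases h1 : σ₁ = ψ <;> by_cases h2 : σ₂ = ψ
        · rw [h1, h2] at hsum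
          exact two_smul_not_root R hψr (R.pos_subset hsum)
        · -- σ₁ = ψ, σ₂ ∈ Ψ'
          rw [h1] at hsum
          have hσ₂' : σ₂ ∈ Ψ' := Finset.mem_erase.2 ⟨h2, hσ₂⟩
          have hσ₂p := hsub' hσ₂'
          have hσ₂r := R.pos_subset hσ₂p
          have hge := hnonneg σ₂ hσ₂'
          -- φ := σ₂ - ψ is a positive root with ψ + φ = σ₂
          have hsubr : σ₂ - ψ ∈ R.roots := by
            rcases lt_or_eq_of_le hge with h | h
            · exact R.sub_mem σ₂ hσ₂r ψ hψr h h2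
            · -- inner = 0 : use reflection of ψ + σ₂
              have hp0 : pair σ₂ ψ = 0 := (pair_eq_zero_iff R hψr).2 h.symm
              have hp2 : pair (ψ + σ₂) ψ = 2 := by
                rw [pair_sum_left hψr, hp0]; norm_num
              have hrf : rf ψ (ψ + σ₂) ∈ R.roots := rf_mem R hψr (R.pos_subset hsum)
              rw [rf_eval hψr 2 hp2] at hrf
              have he : ψ + σ₂ - (2:ℝ) • ψ = σ₂ - ψ := by
                rw [two_smul]; abel
              rwa [he] at hrf
          have hpos : σ₂ - ψ ∈ R.pos := by
            rcases pos_or_neg R hsubr with h | h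
            · exact h
            · exfalso
              have : ψ - σ₂ ∈ R.pos := by
                have he : -(σ₂ - ψ) = ψ - σ₂ := by abel
                rwa [he] at h
              exact hmin σ₂ hσ₂ this
          have hψφ : ψ + (σ₂ - ψ) ∈ R.pos := by
            rw [show ψ + (σ₂ - ψ) = σ₂ from by abel]
            exact hσ₂p
          have := hcomm (σ₂ - ψ) hpos hψφ
          rw [show ψ + (σ₂ - ψ) = σ₂ from by abel] at this
          exact this (R.pos_subset hsum)
        · -- σ₂ = ψ, σ₁ ∈ Ψ' : symmetric
          rw [h2] at hsum
          have hσ₁' : σ₁ ∈ Ψ' := Finset.mem_erase.2 ⟨h1, hσ₁⟩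
          have hσ₁p := hsub' hσ₁'
          have hσ₁r := R.pos_subset hσ₁p
          have hge := hnonneg σ₁ hσ₁'
          rw [add_comm] at hsum
          have hsubr : σ₁ - ψ ∈ R.roots := by
            rcases lt_or_eq_of_le hge with h | h
            · exact R.sub_mem σ₁ hσ₁r ψ hψr h h1
            · have hp0 : pair σ₁ ψ = 0 := (pair_eq_zero_iff R hψr).2 h.symm
              have hp2 : pair (ψ + σ₁) ψ = 2 := by
                rw [pair_sum_left hψr, hp0]; norm_num
              have hrf : rf ψ (ψ + σ₁) ∈ R.roots := rf_mem R hψr (R.pos_subset hsum)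
              rw [rf_eval hψr 2 hp2] at hrf
              have he : ψ + σ₁ - (2:ℝ) • ψ = σ₁ - ψ := by
                rw [two_smul]; abel
              rwa [he] at hrf
          have hpos : σ₁ - ψ ∈ R.pos := by
            rcases pos_or_neg R hsubr with h | h
            · exact h
            · exfalso
              have : ψ - σ₁ ∈ R.pos := by
                have he : -(σ₁ - ψ) = ψ - σ₁ := by abel
                rwa [he] at h
              exact hmin σ₁ hσ₁ this
          have hψφ : ψ + (σ₁ - ψ) ∈ R.pos := by
            rw [show ψ + (σ₁ - ψ) = σ₁ from by abel]
            exact hσ₁p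
          have := hcomm (σ₁ - ψ) hpos hψφ
          rw [show ψ + (σ₁ - ψ) = σ₁ from by abel] at this
          exact this (R.pos_subset hsum)
        · -- both in Ψ'
          have hσ₁' : σ₁ ∈ Ψ' := Finset.mem_erase.2 ⟨h1, hσ₁⟩
          have hσ₂' : σ₂ ∈ Ψ' := Finset.mem_erase.2 ⟨h2, hσ₂⟩
          exact hab'.2 σ₁ hσ₁' σ₂ hσ₂' hsum
    · -- abelian ideal implies equality
      intro hab
      have hab' : AbId R Ψ' := AbId_erase hab hψΨ hmin
      have hF' : 2 * ⟪R.ρ, S'⟫ + ⟪S', S'⟫ = (m : ℝ) := ihiff.2 hab'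
      have hcomm : Comm R ψ := comm_of_abid hsub hab hψΨ
      -- zero inner products for non-T members
      have hrest0 : ∀ ψ' ∈ Ψ'.filter (fun ψ' => ¬ 0 < ⟪ψ', ψ⟫), ⟪ψ', ψ⟫ = 0 := by
        intro ψ' hψ'
        obtain ⟨hψ'Ψ', hnpos⟩ := Finset.mem_filter.1 hψ'
        have hle : ⟪ψ', ψ⟫ ≤ 0 := not_lt.1 hnpos
        rcases lt_or_eq_of_le hle with h | h
        · exfalso
          have hψ'p := hsub' hψ'Ψ'
          have hψ'r := R.pos_subset hψ'p
          have hroot : ψ' + ψ ∈ R.roots :=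
            add_root_of_inner_neg R hψ'r hψr h (ne_neg_of_pos hψ'p hψp)
          have hpos : ψ' + ψ ∈ R.pos := sum_pos_mem_pos R hψ'p hψp hroot
          have := hab.2 ψ hψΨ ψ' (Finset.mem_of_mem_erase hψ'Ψ')
          rw [add_comm ψ ψ'] at this
          exact this hpos
        · exact h
      -- image of T equals Dp
      have himeq : T.image (fun ψ' => ψ' - ψ) = Dp R ψ := by
        refine Finset.Subset.antisymm himage ?_
        intro φ hφ
        obtain ⟨hPe, hsum, hge⟩ := Finset.mem_filter.1 hφ
        have hsΨ : ψ + φ ∈ Ψ := hab.1 ψ hψΨ φ (Finset.mem_of_mem_erase hPe) hsum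
        have hsΨ' : ψ + φ ∈ Ψ' :=
          Finset.mem_erase.2 ⟨sum_ne_psi hψp (Finset.mem_of_mem_erase hPe), hsΨ⟩
        have hT : ψ + φ ∈ T :=
          Finset.mem_filter.2 ⟨hsΨ', Dp_inner_pos hψp hφ⟩
        refine Finset.mem_image.2 ⟨ψ + φ, hT, ?_⟩
        abel
      have hsumeq : ∑ ψ' ∈ Ψ', ⟪ψ', ψ⟫ = ∑ φ ∈ Dp R ψ, ⟪ψ + φ, ψ⟫ := by
        rw [← himeq, hsum_img]
        have hz : ∑ ψ' ∈ Ψ'.filter (fun ψ' => ¬ 0 < ⟪ψ', ψ⟫), ⟪ψ', ψ⟫ = 0 :=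
          Finset.sum_eq_zero hrest0
        linarith [hsplitT]
      have hcore1 : 2 * ⟪R.ρ, ψ⟫ + ⟪ψ, ψ⟫ + 2 * ∑ φ ∈ Dp R ψ, ⟪ψ + φ, ψ⟫ = 1 :=
        ciff.2 hcomm
      rw [hgap, hcast, hSΨ', hsumeq, hF']
      linarith
end Kostant
/-- **Kostant's theorem (1965).** With the canonical normalization
`‖ρ+θ‖² − ‖ρ‖² = 1`, for any subset `Ψ ⊆ Φ₊` one has
`‖ρ + ⟨Ψ⟩‖² − ‖ρ‖² ≤ |Ψ|`, with equality if and only if `Ψ` corresponds to an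
abelian ideal of the Borel subalgebra, i.e. `(Ψ+Φ₊)∩Φ₊ ⊆ Ψ` and
`(Ψ+Ψ)∩Φ₊ = ∅`. -/
theorem kostant_criterion_abelian_ideal (R : IrredRootSystemData V)
    (hnorm : ‖R.ρ + R.θ‖ ^ 2 - ‖R.ρ‖ ^ 2 = 1)
    (Ψ : Finset V) (hΨ : Ψ ⊆ R.pos) :
    ‖R.ρ + ∑ φ ∈ Ψ, φ‖ ^ 2 - ‖R.ρ‖ ^ 2 ≤ (Ψ.card : ℝ) ∧
    (‖R.ρ + ∑ φ ∈ Ψ, φ‖ ^ 2 - ‖R.ρ‖ ^ 2 = (Ψ.card : ℝ) ↔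
      (∀ ψ ∈ Ψ, ∀ φ ∈ R.pos, ψ + φ ∈ R.pos → ψ + φ ∈ Ψ) ∧
      (∀ ψ₁ ∈ Ψ, ∀ ψ₂ ∈ Ψ, ψ₁ + ψ₂ ∉ R.pos)) := by
  have hn : 2 * ⟪R.ρ, R.θ⟫ + ⟪R.θ, R.θ⟫ = 1 := by
    rw [norm_add_sq_real] at hnorm
    rw [real_inner_self_eq_norm_sq]
    linarith
  obtain ⟨hle, hiff⟩ := Kostant.main_aux R hn Ψ.card Ψ hΨ rfl
  have hexp : ‖R.ρ + ∑ φ ∈ Ψ, φ‖ ^ 2 - ‖R.ρ‖ ^ 2 =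
      2 * ⟪R.ρ, ∑ φ ∈ Ψ, φ⟫ + ⟪∑ φ ∈ Ψ, φ, ∑ φ ∈ Ψ, φ⟫ := by
    rw [norm_add_sq_real, real_inner_self_eq_norm_sq]
    ring
  rw [hexp]
  exact ⟨hle, hiff⟩
end
end

section
/- With the canonical normalization of the inner product on an irreducible root system Φ of rank l (i.e., ‖θ‖⁻² equals the dual Coxeter number), one has Σ_{φ∈Φ} ‖φ‖² = l. -/
open scoped RealInnerProductSpace BigOperators

noncomputable section

variable (V : Type) [NormedAddCommGroup V] [InnerProductSpace ℝ V] [FiniteDimensional ℝ V]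

section BrownAux

set_option linter.unusedSectionVars false

variable {V : Type} [NormedAddCommGroup V] [InnerProductSpace ℝ V] [FiniteDimensional ℝ V]

/-- The operator `A v = ∑_{φ ∈ s} ⟪φ, v⟫ • φ`. -/
def opA (s : Finset V) : V →ₗ[ℝ] V :=
  ∑ φ ∈ s, LinearMap.smulRight ((innerSL ℝ φ).toLinearMap) φ

lemma opA_apply (s : Finset V) (v : V) : opA s v = ∑ φ ∈ s, ⟪φ, v⟫ • φ := by
  simp [opA]

lemma inner_opA (s : Finset V) (v w : V) :
    ⟪opA s v, w⟫ = ∑ φ ∈ s, ⟪φ, v⟫ * ⟪φ, w⟫ := by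
  rw [opA_apply, sum_inner]
  simp [real_inner_smul_left]

lemma opA_symm (s : Finset V) : (opA s).IsSymmetric := by
  intro v w
  rw [inner_opA, real_inner_comm, inner_opA]
  exact Finset.sum_congr rfl fun φ _ => by rw [real_inner_comm v φ]; ring

/-- reflection in the hyperplane orthogonal to β, as a linear map -/
def rfl' (β : V) : V →ₗ[ℝ] V :=
  LinearMap.id - LinearMap.smulRight ((2 / ⟪β, β⟫) • (innerSL ℝ β).toLinearMap) β

lemma rfl'_apply (β v : V) : rfl' β v = v - (2 * ⟪v, β⟫ / ⟪β, β⟫) • β := by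
  simp [rfl']
  rw [real_inner_comm β v]
  ring_nf

lemma rfl'_symmetric (β v w : V) : ⟪rfl' β v, w⟫ = ⟪v, rfl' β w⟫ := by
  rw [rfl'_apply, rfl'_apply, inner_sub_left, inner_sub_right,
    real_inner_smul_left, real_inner_smul_right]
  rw [real_inner_comm β w]
  ring

lemma rfl'_invol (β : V) (hβ : β ≠ 0) (v : V) : rfl' β (rfl' β v) = v := by
  have h : ⟪β, β⟫ ≠ 0 := fun hz => hβ (inner_self_eq_zero.mp hz)
  rw [rfl'_apply, rfl'_apply, inner_sub_left, real_inner_smul_left]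
  rw [sub_sub, ← add_smul]
  have : 2 * ⟪v, β⟫ / ⟪β, β⟫ + 2 * (⟪v, β⟫ - 2 * ⟪v, β⟫ / ⟪β, β⟫ * ⟪β, β⟫) / ⟪β, β⟫ = 0 := by
    field_simp
    ring
  rw [this, zero_smul, sub_zero]

lemma rfl'_mem (R : RootSystemData V) {β : V} (hβ : β ∈ R.roots) {φ : V} (hφ : φ ∈ R.roots) :
    rfl' β φ ∈ R.roots := by
  rw [rfl'_apply]; exact R.reflect_mem β hβ φ hφ

lemma opA_comm (R : RootSystemData V) {β : V} (hβ : β ∈ R.roots) (v : V) :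
    opA R.roots (rfl' β v) = rfl' β (opA R.roots v) := by
  have hβ0 : β ≠ 0 := R.root_ne_zero β hβ
  rw [opA_apply, opA_apply, map_sum]
  simp only [LinearMap.map_smul]
  refine Finset.sum_nbij' (i := fun φ => rfl' β φ) (j := fun φ => rfl' β φ)
    (fun a ha => rfl'_mem R hβ ha) (fun a ha => rfl'_mem R hβ ha)
    (fun a _ => rfl'_invol β hβ0 a) (fun a _ => rfl'_invol β hβ0 a) ?_
  intro a ha
  rw [rfl'_invol β hβ0 a, ← rfl'_symmetric]


lemma finrank_eq (R : RootSystemData V) : Module.finrank ℝ V = R.l := by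
  classical
  have hspan : ⊤ ≤ Submodule.span ℝ (Set.range R.simple) := by
    rw [← R.span_roots]
    refine Submodule.span_le.2 ?_
    intro α hα
    simp only [Finset.mem_coe] at hα
    have hmem : ∀ β ∈ R.pos, β ∈ Submodule.span ℝ (Set.range R.simple) := by
      intro β hβ
      obtain ⟨c, hc⟩ := R.pos_combo β hβ
      rw [hc]
      exact Submodule.sum_mem _ fun i _ =>
        Submodule.smul_mem _ _ (Submodule.subset_span ⟨i, rfl⟩)
    by_cases hp : α ∈ R.pos
    · exact hmem α hp
    · have hneg : -α ∈ R.pos := by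
        by_contra h
        exact hp ((R.pos_iff α hα).2 h)
      have := hmem _ hneg
      simpa using Submodule.neg_mem _ this
  rw [Module.finrank_eq_card_basis (Module.Basis.mk R.simple_indep hspan), Fintype.card_fin]

lemma theta_mem_roots (R : IrredRootSystemData V) : R.θ ∈ R.roots :=
  R.pos_subset R.θ_mem_pos

lemma theta_inner_pos (R : IrredRootSystemData V) : 0 < ⟪R.θ, R.θ⟫ := by
  have h0 : R.θ ≠ 0 := R.root_ne_zero _ (theta_mem_roots R)
  exact lt_of_le_of_ne real_inner_self_nonneg
    (fun h => h0 (inner_self_eq_zero.mp h.symm))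

lemma theta_dom (R : IrredRootSystemData V) {φ : V} (hφ : φ ∈ R.pos) : 0 ≤ ⟪R.θ, φ⟫ := by
  obtain ⟨c, hc⟩ := R.pos_combo φ hφ
  rw [hc, inner_sum]
  refine Finset.sum_nonneg fun i _ => ?_
  rw [real_inner_smul_right]
  exact mul_nonneg (Nat.cast_nonneg _) (R.θ_dominant i)

lemma theta_pair (R : IrredRootSystemData V) {φ : V} (hφ : φ ∈ R.pos) (hne : φ ≠ R.θ) :
    2 * ⟪φ, R.θ⟫ = 0 ∨ 2 * ⟪φ, R.θ⟫ = ⟪R.θ, R.θ⟫ := by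
  have htt := theta_inner_pos R
  obtain ⟨n, hn⟩ := R.crystal R.θ (theta_mem_roots R) φ (R.pos_subset hφ)
  have hdom : 0 ≤ ⟪φ, R.θ⟫ := by rw [real_inner_comm]; exact theta_dom R hφ
  have heq : 2 * ⟪φ, R.θ⟫ = (n : ℝ) * ⟪R.θ, R.θ⟫ := by
    field_simp at hn
    linarith [hn]
  have hn0 : (0 : ℤ) ≤ n := by
    by_contra h
    push_neg at h
    have : (n : ℝ) ≤ -1 := by exact_mod_cast Int.le_sub_one_of_lt h
    nlinarith
  have hn1 : n ≤ 1 := by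
    by_contra h
    push_neg at h
    have h2 : (2 : ℝ) ≤ (n : ℝ) := by exact_mod_cast h
    have hge : ⟪R.θ, R.θ⟫ ≤ ⟪φ, R.θ⟫ := by nlinarith
    have hlen : ⟪φ, φ⟫ ≤ ⟪R.θ, R.θ⟫ := by
      rw [real_inner_self_eq_norm_mul_norm, real_inner_self_eq_norm_mul_norm]
      have := R.θ_long φ (R.pos_subset hφ)
      exact mul_self_le_mul_self (norm_nonneg _) this
    have hsub : ⟪R.θ - φ, R.θ - φ⟫ ≤ 0 := by
      rw [inner_sub_left, inner_sub_right, inner_sub_right, real_inner_comm φ R.θ]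
      linarith
    have : R.θ - φ = 0 :=
      inner_self_eq_zero.mp (le_antisymm hsub real_inner_self_nonneg)
    exact hne (sub_eq_zero.mp this).symm
  have : n = 0 ∨ n = 1 := by omega
  rcases this with h | h <;> rw [h] at heq <;> [left; right] <;> simpa using heq

lemma sum_roots_sq (R : IrredRootSystemData V) :
    ∑ φ ∈ R.roots, ⟪φ, R.θ⟫ * ⟪φ, R.θ⟫ = R.dualCox * (⟪R.θ, R.θ⟫ * ⟪R.θ, R.θ⟫) := by
  classical
  have htt := theta_inner_pos R
  -- split roots into pos and neg
  have hroots : R.roots = R.pos ∪ R.pos.image (fun x => -x) := by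
    ext α
    constructor
    · intro hα
      by_cases hp : α ∈ R.pos
      · exact Finset.mem_union_left _ hp
      · refine Finset.mem_union_right _ (Finset.mem_image.2 ⟨-α, ?_, neg_neg α⟩)
        by_contra h
        exact hp ((R.pos_iff α hα).2 h)
    · intro hα
      rcases Finset.mem_union.1 hα with h | h
      · exact R.pos_subset h
      · obtain ⟨x, hx, rfl⟩ := Finset.mem_image.1 h
        exact R.neg_mem x (R.pos_subset hx)
  have hdisj : Disjoint R.pos (R.pos.image fun x => -x) := by
    rw [Finset.disjoint_left]
    intro a ha hb
    obtain ⟨x, hx, hxa⟩ := Finset.mem_image.1 hb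
    refine (R.pos_iff a (R.pos_subset ha)).1 ha ?_
    rw [← hxa, neg_neg]
    exact hx
  have hsplit : ∑ φ ∈ R.roots, ⟪φ, R.θ⟫ * ⟪φ, R.θ⟫
      = 2 * ∑ φ ∈ R.pos, ⟪φ, R.θ⟫ * ⟪φ, R.θ⟫ := by
    rw [hroots, Finset.sum_union hdisj,
      Finset.sum_image (fun x _ y _ h => neg_injective h)]
    have : ∀ x : V, ⟪-x, R.θ⟫ * ⟪-x, R.θ⟫ = ⟪x, R.θ⟫ * ⟪x, R.θ⟫ := by
      intro x; rw [inner_neg_left]; ring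
    rw [Finset.sum_congr rfl (fun x _ => this x)]
    ring
  -- the sum over positive roots
  have herase : ∀ φ ∈ R.pos.erase R.θ,
      ⟪φ, R.θ⟫ * ⟪φ, R.θ⟫ = (⟪R.θ, R.θ⟫ / 2) * ⟪φ, R.θ⟫ := by
    intro φ hφ
    obtain ⟨hne, hpos⟩ := Finset.mem_erase.1 hφ
    rcases theta_pair R hpos hne with h | h
    · have : ⟪φ, R.θ⟫ = 0 := by linarith
      rw [this]; ring
    · have : ⟪φ, R.θ⟫ = ⟪R.θ, R.θ⟫ / 2 := by linarith
      rw [this]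
  have hsum_pos : ∑ φ ∈ R.pos, ⟪φ, R.θ⟫ = 2 * ⟪R.toRootSystemData.ρ, R.θ⟫ := by
    rw [RootSystemData.ρ, real_inner_smul_left, sum_inner]
    ring
  have hpos_sq : ∑ φ ∈ R.pos, ⟪φ, R.θ⟫ * ⟪φ, R.θ⟫
      = ⟪R.θ, R.θ⟫ * ⟪R.θ, R.θ⟫ + (⟪R.θ, R.θ⟫ / 2) * (2 * ⟪R.toRootSystemData.ρ, R.θ⟫ - ⟪R.θ, R.θ⟫) := by
    rw [← Finset.add_sum_erase _ _ R.θ_mem_pos,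
      Finset.sum_congr rfl herase, ← Finset.mul_sum,
      Finset.sum_erase_eq_sub R.θ_mem_pos, hsum_pos]
  have hdc : R.dualCox = 2 * ⟪R.toRootSystemData.ρ, R.θ⟫ / ⟪R.θ, R.θ⟫ + 1 := by
    rw [IrredRootSystemData.dualCox, RootSystemData.pair]
  rw [hsplit, hpos_sq, hdc]
  field_simp
  ring


lemma opA_scalar (R : IrredRootSystemData V) : ∃ c : ℝ, ∀ v, opA R.roots v = c • v := by
  classical
  have hθ0 : R.θ ≠ 0 := R.root_ne_zero _ (theta_mem_roots R)
  have : Nontrivial V := ⟨R.θ, 0, hθ0⟩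
  have hl : 0 < R.l := by
    rw [← finrank_eq R.toRootSystemData]
    exact Module.finrank_pos
  have hn : Module.finrank ℝ V = R.l := finrank_eq R.toRootSystemData
  have hA : (opA R.roots).IsSymmetric := opA_symm R.roots
  set i0 : Fin R.l := ⟨0, hl⟩
  set c : ℝ := hA.eigenvalues hn i0 with hc
  set v₀ : V := hA.eigenvectorBasis hn i0 with hv₀def
  have hv₀ : opA R.roots v₀ = c • v₀ := hA.apply_eigenvectorBasis hn i0
  have hv₀0 : v₀ ≠ 0 := (hA.hasEigenvector_eigenvectorBasis hn i0).2
  set E : Submodule ℝ V := LinearMap.ker (opA R.roots - c • LinearMap.id) with hE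
  have memE : ∀ v : V, v ∈ E ↔ opA R.roots v = c • v := by
    intro v
    rw [hE, LinearMap.mem_ker, LinearMap.sub_apply, LinearMap.smul_apply, LinearMap.id_apply,
      sub_eq_zero]
  have hv₀E : v₀ ∈ E := (memE v₀).2 hv₀
  have hInv : ∀ β ∈ R.roots, ∀ v ∈ E, rfl' β v ∈ E := by
    intro β hβ v hv
    rw [memE] at hv ⊢
    rw [opA_comm R.toRootSystemData hβ, hv, LinearMap.map_smul]
  have hDich : ∀ β ∈ R.roots, β ∈ E ∨ ∀ v ∈ E, ⟪v, β⟫ = 0 := by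
    intro β hβ
    by_cases h : ∀ v ∈ E, ⟪v, β⟫ = 0
    · exact Or.inr h
    · push_neg at h
      obtain ⟨v, hv, hvβ⟩ := h
      have hβ0 : β ≠ 0 := R.root_ne_zero β hβ
      have hββ : ⟪β, β⟫ ≠ 0 := fun hz => hβ0 (inner_self_eq_zero.mp hz)
      have h2 : v - (2 * ⟪v, β⟫ / ⟪β, β⟫) • β ∈ E := by
        have := hInv β hβ v hv
        rwa [rfl'_apply] at this
      have h3 : (2 * ⟪v, β⟫ / ⟪β, β⟫) • β ∈ E := by
        have := E.sub_mem hv h2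
        simpa using this
      have hk : 2 * ⟪v, β⟫ / ⟪β, β⟫ ≠ 0 := by
        apply div_ne_zero _ hββ
        simpa using hvβ
      left
      have := E.smul_mem (2 * ⟪v, β⟫ / ⟪β, β⟫)⁻¹ h3
      rwa [smul_smul, inv_mul_cancel₀ hk, one_smul] at this
  set s : Finset V := R.roots.filter (fun x => x ∈ E) with hs
  have horth' : ∀ α ∈ s, ∀ β ∈ R.roots, β ∉ s → ⟪α, β⟫ = 0 := by
    intro α hα β hβ hβs
    have hαE : α ∈ E := (Finset.mem_filter.1 hα).2
    rcases hDich β hβ with h | h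
    · exact absurd (Finset.mem_filter.2 ⟨hβ, h⟩) hβs
    · exact h α hαE
  rcases R.irreducible s (Finset.filter_subset _ _) horth' with hcase | hcase
  · -- s = ∅ : contradiction with v₀
    exfalso
    have horth : ∀ β ∈ R.roots, ⟪β, v₀⟫ = 0 := by
      intro β hβ
      rcases hDich β hβ with h | h
      · have : β ∈ s := Finset.mem_filter.2 ⟨hβ, h⟩
        rw [hcase] at this
        exact absurd this (Finset.notMem_empty β)
      · rw [real_inner_comm]
        exact h v₀ hv₀E
    have hle : Submodule.span ℝ (R.roots : Set V) ≤ (ℝ ∙ v₀)ᗮ := by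
      refine Submodule.span_le.2 ?_
      intro β hβ
      rw [SetLike.mem_coe, Submodule.mem_orthogonal_singleton_iff_inner_left]
      exact horth β (by simpa using hβ)
    rw [R.span_roots] at hle
    have : v₀ ∈ (ℝ ∙ v₀)ᗮ := hle trivial
    rw [Submodule.mem_orthogonal_singleton_iff_inner_left] at this
    exact hv₀0 (inner_self_eq_zero.mp this)
  · -- s = roots : E = ⊤
    refine ⟨c, fun v => ?_⟩
    have hle : Submodule.span ℝ (R.roots : Set V) ≤ E := by
      refine Submodule.span_le.2 ?_
      intro β hβ
      have : β ∈ s := by rw [hcase]; simpa using hβ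
      exact (Finset.mem_filter.1 this).2
    rw [R.span_roots] at hle
    exact (memE v).1 (hle trivial)

end BrownAux

/-- **Brown's formula.** With the canonical normalization `‖θ‖⁻² = g`,
the sum of the squared lengths of all roots equals the rank `l`. -/
theorem sum_norm_sq_roots_eq_rank (R : IrredRootSystemData V)
    (hnorm : ⟪R.θ, R.θ⟫ = 1 / R.dualCox) :
    ∑ φ ∈ R.roots, ⟪φ, φ⟫ = (R.l : ℝ) := by
  classical
  obtain ⟨c, hc⟩ := opA_scalar R
  have htt := theta_inner_pos R
  have hg0 : R.dualCox ≠ 0 := by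
    intro h
    rw [h, div_zero] at hnorm
    exact htt.ne' hnorm
  -- c = 1
  have h1 : c * ⟪R.θ, R.θ⟫ = R.dualCox * (⟪R.θ, R.θ⟫ * ⟪R.θ, R.θ⟫) := by
    rw [← sum_roots_sq R, ← inner_opA, hc, real_inner_smul_left]
  have hc1 : c = 1 := by
    have h2 : c = R.dualCox * ⟪R.θ, R.θ⟫ := by
      rw [← mul_assoc] at h1
      exact mul_right_cancel₀ htt.ne' h1
    rw [h2, hnorm]
    field_simp
  -- the sum via an orthonormal basis
  have hn : Module.finrank ℝ V = R.l := finrank_eq R.toRootSystemData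
  set b := stdOrthonormalBasis ℝ V with hb
  have hParseval : ∀ φ : V, ⟪φ, φ⟫ = ∑ i, ⟪φ, b i⟫ * ⟪b i, φ⟫ :=
    fun φ => (b.sum_inner_mul_inner φ φ).symm
  calc ∑ φ ∈ R.roots, ⟪φ, φ⟫
      = ∑ φ ∈ R.roots, ∑ i, ⟪φ, b i⟫ * ⟪b i, φ⟫ :=
        Finset.sum_congr rfl fun φ _ => hParseval φ
    _ = ∑ i, ∑ φ ∈ R.roots, ⟪φ, b i⟫ * ⟪b i, φ⟫ := Finset.sum_comm
    _ = ∑ i : Fin (Module.finrank ℝ V), (1 : ℝ) := by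
        refine Finset.sum_congr rfl fun i _ => ?_
        have : ∑ φ ∈ R.roots, ⟪φ, b i⟫ * ⟪b i, φ⟫ = ⟪opA R.roots (b i), b i⟫ := by
          rw [inner_opA]
          exact Finset.sum_congr rfl fun φ _ => by rw [real_inner_comm (b i) φ]
        rw [this, hc, hc1, one_smul, real_inner_self_eq_norm_mul_norm,
          b.orthonormal.1 i]
        norm_num
    _ = (R.l : ℝ) := by
        rw [Finset.sum_const, Finset.card_univ, Fintype.card_fin, hn, nsmul_eq_mul, mul_one]
end
end

section
/- If φ is a long root of an irreducible root system, then L(φ) := 2(θ−φ | ρ)/(θ|θ) = g − 1 − ⟨ρ, φ∨⟩, where g is the dual Coxeter number and φ∨ the coroot of φ. In particular L(φ) is a nonnegative integer for φ a positive long root, and for a positive long root φ one has L(φ) = g − 2 if and only if φ is a long simple root. -/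
open scoped RealInnerProductSpace BigOperators

noncomputable section

variable (V : Type) [NormedAddCommGroup V] [InnerProductSpace ℝ V] [FiniteDimensional ℝ V]

section Aux

set_option linter.unusedSectionVars false
set_option maxHeartbeats 1000000

open Finset RootSystemData
open scoped Classical

variable {V : Type} [NormedAddCommGroup V] [InnerProductSpace ℝ V] [FiniteDimensional ℝ V]

lemma aux_inner_self_pos {φ : V} (h : φ ≠ 0) : 0 < ⟪φ, φ⟫ := by
  rw [real_inner_self_eq_norm_sq]; exact pow_pos (norm_pos_iff.mpr h) 2

lemma aux_inner_self_ne {φ : V} (h : φ ≠ 0) : ⟪φ, φ⟫ ≠ 0 := ne_of_gt (aux_inner_self_pos h)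

/-- The abstract reflection `β ↦ β − ⟨β,φ∨⟩φ`. -/
def rfx (φ β : V) : V := β - pair β φ • φ

lemma pair_self' {φ : V} (h : φ ≠ 0) : pair φ φ = 2 := by
  unfold pair
  rw [mul_div_assoc, div_self (aux_inner_self_ne h), mul_one]

lemma pair_smul' (φ : V) (c : ℝ) (β : V) : pair (c • β) φ = c * pair β φ := by
  unfold pair; rw [real_inner_smul_left]; ring

lemma pair_sub' (φ a b : V) : pair (a - b) φ = pair a φ - pair b φ := by
  unfold pair; rw [inner_sub_left]; ring

lemma pair_neg' (φ a : V) : pair (-a) φ = - pair a φ := by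
  unfold pair; rw [inner_neg_left]; ring

lemma pair_sum' (φ : V) (s : Finset V) : pair (∑ β ∈ s, β) φ = ∑ β ∈ s, pair β φ := by
  unfold pair; rw [sum_inner, Finset.mul_sum, Finset.sum_div]

lemma pair_rfx {φ : V} (h : φ ≠ 0) (β : V) : pair (rfx φ β) φ = - pair β φ := by
  rw [rfx, pair_sub', pair_smul', pair_self' h]; ring

lemma rfx_rfx {φ : V} (h : φ ≠ 0) (β : V) : rfx φ (rfx φ β) = β := by
  rw [rfx, pair_rfx h, rfx, neg_smul, sub_neg_eq_add, sub_add_cancel]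

lemma rfx_neg (φ β : V) : rfx φ (-β) = - rfx φ β := by
  rw [rfx, rfx, pair_neg', neg_smul]; abel

variable (R : RootSystemData V)

lemma rfx_mem_roots {φ β : V} (hφ : φ ∈ R.roots) (hβ : β ∈ R.roots) : rfx φ β ∈ R.roots :=
  R.reflect_mem φ hφ β hβ

lemma coeff_eq {a b : Fin R.l → ℝ} (h : ∑ i, a i • R.simple i = ∑ i, b i • R.simple i) :
    ∀ i, a i = b i := by
  intro i
  have h2 : ∑ j, (a j - b j) • R.simple j = 0 := by
    simp_rw [sub_smul]
    rw [Finset.sum_sub_distrib, h, sub_self]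
  have := Fintype.linearIndependent_iff.mp R.simple_indep (fun j => a j - b j) h2 i
  linarith

lemma neg_mem_pos {β : V} (hβ : β ∈ R.roots) (h : β ∉ R.pos) : -β ∈ R.pos := by
  by_contra hc; exact h ((R.pos_iff β hβ).mpr hc)

lemma neg_not_mem_pos {β : V} (h : β ∈ R.pos) : -β ∉ R.pos :=
  (R.pos_iff β (R.pos_subset h)).mp h

/-- The inversion set of the reflection in `φ`. -/
def Bset (φ : V) : Finset V := R.pos.filter (fun β => rfx φ β ∉ R.pos)

lemma sigma_mem {φ β : V} (hφ : φ ∈ R.roots) (hβ : β ∈ Bset R φ) :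
    -(rfx φ β) ∈ Bset R φ := by
  have hφ0 := R.root_ne_zero φ hφ
  rw [Bset, mem_filter] at hβ ⊢
  obtain ⟨h1, h2⟩ := hβ
  have hroot : rfx φ β ∈ R.roots := rfx_mem_roots R hφ (R.pos_subset h1)
  refine ⟨neg_mem_pos R hroot h2, ?_⟩
  rw [rfx_neg, rfx_rfx hφ0]
  exact neg_not_mem_pos R h1

lemma sigma_sigma {φ : V} (hφ0 : φ ≠ 0) (β : V) : -(rfx φ (-(rfx φ β))) = β := by
  rw [rfx_neg, rfx_rfx hφ0, neg_neg]

lemma key {φ : V} (hφ : φ ∈ R.roots) :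
    ∑ β ∈ Bset R φ, β = pair R.ρ φ • φ := by
  have hφ0 := R.root_ne_zero φ hφ
  have e1 : ∀ β : V, β - rfx φ β = pair β φ • φ := fun β => by rw [rfx]; abel
  have e2 : ∑ β ∈ R.pos, (β - rfx φ β) = (2 * pair R.ρ φ) • φ := by
    calc ∑ β ∈ R.pos, (β - rfx φ β) = ∑ β ∈ R.pos, pair β φ • φ := by simp_rw [e1]
    _ = (∑ β ∈ R.pos, pair β φ) • φ := by rw [Finset.sum_smul]
    _ = (2 * pair R.ρ φ) • φ := by
        congr 1
        have : pair R.ρ φ = 2⁻¹ * ∑ β ∈ R.pos, pair β φ := by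
          rw [RootSystemData.ρ, pair_smul', pair_sum']
        rw [this]; ring
  have e3 := Finset.sum_filter_add_sum_filter_not R.pos (fun β => rfx φ β ∈ R.pos)
    (fun β => β - rfx φ β)
  have eA : ∑ β ∈ R.pos.filter (fun β => rfx φ β ∈ R.pos), (β - rfx φ β) = 0 := by
    apply Finset.sum_involution (fun β _ => rfx φ β)
    · intro β _; rw [rfx_rfx hφ0]; abel
    · intro β _ h hc; apply h; rw [hc, sub_self]
    · intro β hβ
      rw [mem_filter] at hβ ⊢
      exact ⟨hβ.2, by rw [rfx_rfx hφ0]; exact hβ.1⟩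
    · intro β hβ; exact rfx_rfx hφ0 β
  have eσ : ∑ β ∈ Bset R φ, (-(rfx φ β)) = ∑ β ∈ Bset R φ, β :=
    Finset.sum_nbij' (fun β => -(rfx φ β)) (fun β => -(rfx φ β))
      (fun a ha => sigma_mem R hφ ha) (fun a ha => sigma_mem R hφ ha)
      (fun a _ => sigma_sigma hφ0 a) (fun a _ => sigma_sigma hφ0 a)
      (fun a _ => rfl)
  have eB : ∑ β ∈ Bset R φ, (β - rfx φ β) = ∑ β ∈ Bset R φ, β + ∑ β ∈ Bset R φ, β := by
    rw [Finset.sum_sub_distrib]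
    have : ∑ β ∈ Bset R φ, rfx φ β = - ∑ β ∈ Bset R φ, β := by
      rw [← eσ, Finset.sum_neg_distrib, neg_neg]
    rw [this, sub_neg_eq_add]
  have hBsum : ∑ β ∈ Bset R φ, β + ∑ β ∈ Bset R φ, β = (2 * pair R.ρ φ) • φ := by
    rw [← eB]
    have hBfilter : (Bset R φ : Finset V)
        = R.pos.filter (fun β => ¬ (rfx φ β ∈ R.pos)) := rfl
    rw [hBfilter]
    have := e3
    rw [eA, zero_add] at this
    rw [this, e2]
  have h2 : (2:ℝ) • (∑ β ∈ Bset R φ, β) = (2:ℝ) • (pair R.ρ φ • φ) := by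
    rw [two_smul, hBsum, mul_smul]
  exact smul_right_injective V two_ne_zero h2

lemma Bset_simple_eq (i : Fin R.l) : Bset R (R.simple i) = {R.simple i} := by
  have hsi : R.simple i ∈ R.pos := R.simple_mem_pos i
  have hroot := R.pos_subset hsi
  have h0 := R.root_ne_zero _ hroot
  apply Finset.eq_singleton_iff_unique_mem.mpr
  constructor
  · rw [Bset, mem_filter]
    refine ⟨hsi, ?_⟩
    have : rfx (R.simple i) (R.simple i) = -(R.simple i) := by
      rw [rfx, pair_self' h0, two_smul]; abel
    rw [this]; exact neg_not_mem_pos R hsi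
  · intro β hβ
    rw [Bset, mem_filter] at hβ
    obtain ⟨h1, h2⟩ := hβ
    have hβroot := R.pos_subset h1
    have hneg : -(rfx (R.simple i) β) ∈ R.pos :=
      neg_mem_pos R (rfx_mem_roots R hroot hβroot) h2
    obtain ⟨c, hc⟩ := R.pos_combo β h1
    obtain ⟨d, hd⟩ := R.pos_combo _ hneg
    set k := pair β (R.simple i) with hk
    have heq : ∑ j, ((d j : ℝ) + (c j : ℝ)) • R.simple j
        = ∑ j, (if j = i then k else 0) • R.simple j := by
      have hrhs : ∑ j, (if j = i then k else 0) • R.simple j = k • R.simple i := by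
        simp_rw [ite_smul, zero_smul]
        rw [Finset.sum_ite_eq' Finset.univ i (fun j => k • R.simple j),
          if_pos (Finset.mem_univ i)]
      rw [hrhs]
      calc ∑ j, ((d j:ℝ) + (c j:ℝ)) • R.simple j
          = (∑ j, (d j:ℝ) • R.simple j) + ∑ j, (c j:ℝ) • R.simple j := by
            simp_rw [add_smul]; rw [Finset.sum_add_distrib]
      _ = -(rfx (R.simple i) β) + β := by rw [← hd, ← hc]
      _ = k • R.simple i := by rw [rfx, ← hk]; abel
    have hco := coeff_eq R heq
    have hcj : ∀ j, j ≠ i → (c j : ℝ) = 0 := by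
      intro j hj
      have h := hco j
      rw [if_neg hj] at h
      have h1' : (0:ℝ) ≤ (c j : ℝ) := Nat.cast_nonneg _
      have h2' : (0:ℝ) ≤ (d j : ℝ) := Nat.cast_nonneg _
      linarith
    have hβeq : β = (c i : ℝ) • R.simple i := by
      rw [hc, Finset.sum_eq_single i]
      · intro j _ hj; rw [hcj j hj, zero_smul]
      · intro h; exact absurd (Finset.mem_univ i) h
    rcases R.reduced (R.simple i) hroot (c i : ℝ) (by rw [← hβeq]; exact hβroot) with h' | h'
    · rw [hβeq, h', one_smul]
    · exfalso
      have : (0:ℝ) ≤ (c i : ℝ) := Nat.cast_nonneg _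
      linarith

lemma pair_rho_simple (i : Fin R.l) : pair R.ρ (R.simple i) = 1 := by
  have hroot := R.pos_subset (R.simple_mem_pos i)
  have h0 := R.root_ne_zero _ hroot
  have hkey := key R hroot
  rw [Bset_simple_eq R i, Finset.sum_singleton] at hkey
  by_contra hne
  apply h0
  have hz : (1 - pair R.ρ (R.simple i)) • R.simple i = 0 := by
    rw [sub_smul, one_smul, ← hkey, sub_self]
  rcases smul_eq_zero.mp hz with h | h
  · exact absurd (by linarith : pair R.ρ (R.simple i) = 1) hne
  · exact h

lemma rho_inner_simple (i : Fin R.l) : 0 < ⟪R.ρ, R.simple i⟫ := by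
  have h1 := pair_rho_simple R i
  have h0 : 0 < ⟪R.simple i, R.simple i⟫ :=
    aux_inner_self_pos (R.root_ne_zero _ (R.pos_subset (R.simple_mem_pos i)))
  unfold pair at h1
  rw [div_eq_one_iff_eq (ne_of_gt h0)] at h1
  linarith

lemma rho_inner_combo_nonneg (c : Fin R.l → ℕ) :
    0 ≤ ⟪R.ρ, ∑ j, (c j : ℝ) • R.simple j⟫ := by
  rw [inner_sum]
  apply Finset.sum_nonneg
  intro j _
  rw [real_inner_smul_right]
  exact mul_nonneg (Nat.cast_nonneg _) (le_of_lt (rho_inner_simple R j))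

lemma rho_inner_pos_root {β : V} (hβ : β ∈ R.pos) : 0 < ⟪R.ρ, β⟫ := by
  obtain ⟨c, hc⟩ := R.pos_combo β hβ
  have hβ0 := R.root_ne_zero β (R.pos_subset hβ)
  have hex : ∃ j, c j ≠ 0 := by
    by_contra h
    push_neg at h
    apply hβ0
    rw [hc]
    simp [h]
  obtain ⟨j0, hj0⟩ := hex
  rw [hc, inner_sum]
  apply Finset.sum_pos'
  · intro j _
    rw [real_inner_smul_right]
    exact mul_nonneg (Nat.cast_nonneg _) (rho_inner_simple R j).le
  · refine ⟨j0, Finset.mem_univ j0, ?_⟩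
    rw [real_inner_smul_right]
    exact mul_pos (by exact_mod_cast Nat.pos_of_ne_zero hj0) (rho_inner_simple R j0)

lemma pair_int {φ β : V} (hφ : φ ∈ R.roots) (hβ : β ∈ R.roots) :
    pair β φ = (⌊pair β φ⌋ : ℝ) := by
  obtain ⟨n, hn⟩ := R.crystal φ hφ β hβ
  have h : pair β φ = (n:ℝ) := hn
  rw [h, Int.floor_intCast]

lemma pair_rho_int {φ : V} (hφ : φ ∈ R.roots) : ∃ n : ℤ, pair R.ρ φ = (n : ℝ) := by
  have hφ0 := R.root_ne_zero φ hφ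
  have hkey := key R hφ
  have hNval : ∀ β ∈ Bset R φ, pair β φ = ((⌊pair β φ⌋ : ℤ) : ℝ) := fun β hb =>
    pair_int R hφ (R.pos_subset (Finset.mem_filter.mp hb).1)
  have h1 : pair R.ρ φ * ⟪φ,φ⟫ = ∑ β ∈ Bset R φ, ⟪β, φ⟫ := by
    rw [← sum_inner, hkey, real_inner_smul_left]
  have h2 : ∑ β ∈ Bset R φ, ⟪β, φ⟫
      = (∑ β ∈ Bset R φ, ((⌊pair β φ⌋ : ℤ) : ℝ)) * ⟪φ,φ⟫ / 2 := by
    rw [Finset.sum_mul, Finset.sum_div]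
    apply Finset.sum_congr rfl
    intro β hb
    rw [← hNval β hb]
    unfold pair
    field_simp [aux_inner_self_ne hφ0]
  have hpar : (2:ℤ) ∣ ∑ β ∈ Bset R φ, ⌊pair β φ⌋ := by
    have hz : ((∑ β ∈ Bset R φ, ⌊pair β φ⌋ : ℤ) : ZMod 2) = 0 := by
      push_cast
      apply Finset.sum_involution (fun β _ => -(rfx φ β))
      · intro β hb
        have hN : ⌊pair (-(rfx φ β)) φ⌋ = ⌊pair β φ⌋ := by
          rw [pair_neg', pair_rfx hφ0, neg_neg]
        rw [hN]
        have : ((⌊pair β φ⌋ : ZMod 2)) + (⌊pair β φ⌋ : ZMod 2)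
            = 2 * (⌊pair β φ⌋ : ZMod 2) := by ring
        rw [this, show (2 : ZMod 2) = 0 from rfl, zero_mul]
      · intro β hb hne hc
        apply hne
        have hβr : β ∈ R.roots := R.pos_subset (Finset.mem_filter.mp hb).1
        have hrfxβ : rfx φ β = -β := by rw [← neg_neg (rfx φ β), hc]
        have hk : (pair β φ) • φ = β + β := by
          have h' : β - (pair β φ) • φ = -β := by rw [← rfx, hrfxβ]
          have h4 : β - pair β φ • φ - (-β) = 0 := by rw [h', sub_self]
          have h5 : β + β - pair β φ • φ = 0 := by rw [← h4]; abel
          exact (sub_eq_zero.mp h5).symm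
        have hhalf : (pair β φ / 2) • φ = β := by
          have : (pair β φ / 2) • φ = (2:ℝ)⁻¹ • ((pair β φ) • φ) := by
            rw [smul_smul]; ring_nf
          rw [this, hk, ← two_smul ℝ β, smul_smul]
          norm_num
        rcases R.reduced φ hφ _ (by rw [hhalf]; exact hβr) with h' | h'
        · have hpv : pair β φ = 2 := by linarith
          rw [hpv]
          norm_num
          rfl
        · have hpv : pair β φ = -2 := by linarith
          rw [hpv]
          norm_num
          rfl
      · intro β hb; exact sigma_mem R hφ hb
      · intro β hb; exact sigma_sigma hφ0 β
    exact_mod_cast (ZMod.intCast_zmod_eq_zero_iff_dvd _ 2).mp hz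
  obtain ⟨m, hm⟩ := hpar
  refine ⟨m, ?_⟩
  have hne := aux_inner_self_ne hφ0
  have hfin : pair R.ρ φ * ⟪φ,φ⟫ = (m:ℝ) * ⟪φ,φ⟫ := by
    rw [h1, h2]
    have : (∑ β ∈ Bset R φ, ((⌊pair β φ⌋ : ℤ) : ℝ)) = ((2 * m : ℤ) : ℝ) := by
      rw [← hm]
      push_cast
      rfl
    rw [this]
    push_cast
    ring
  exact mul_right_cancel₀ hne hfin

end Aux

set_option linter.unusedSectionVars false in
set_option maxHeartbeats 1000000 in
/-- For a long root `φ`, `L(φ) = g − 1 − ⟨ρ, φ∨⟩`.  In particular `L(φ)` is a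
nonnegative integer for `φ` a positive long root, and for a positive long root
`φ` one has `L(φ) = g − 2` if and only if `φ` is a (long) simple root. -/
theorem L_long_root (R : IrredRootSystemData V) (φ : V)
    (hφ : φ ∈ R.roots) (hlong : R.IsLong φ) :
    R.L φ = R.dualCox - 1 - RootSystemData.pair R.ρ φ ∧
    (φ ∈ R.pos → ∃ m : ℕ, R.L φ = (m : ℝ)) ∧
    (φ ∈ R.pos → (R.L φ = R.dualCox - 2 ↔ ∃ i, φ = R.simple i)) := by
  classical
  open RootSystemData Finset in
  set T := R.toRootSystemData with hT
  have hθpos : R.θ ∈ T.pos := R.θ_mem_pos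
  have hθroot : R.θ ∈ T.roots := T.pos_subset hθpos
  have hθ0 : R.θ ≠ 0 := T.root_ne_zero _ hθroot
  have hθθ : (0:ℝ) < ⟪R.θ, R.θ⟫ := aux_inner_self_pos hθ0
  have hφ0 : φ ≠ 0 := T.root_ne_zero φ hφ
  have hφφpos : (0:ℝ) < ⟪φ, φ⟫ := aux_inner_self_pos hφ0
  have hlong' : ‖φ‖ = ‖R.θ‖ := hlong
  have hφφ : ⟪φ, φ⟫ = ⟪R.θ, R.θ⟫ := by
    rw [real_inner_self_eq_norm_sq, real_inner_self_eq_norm_sq, hlong']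
  have part1 : R.L φ = R.dualCox - 1 - pair T.ρ φ := by
    rw [IrredRootSystemData.L, IrredRootSystemData.dualCox]
    unfold pair
    rw [inner_sub_left, hφφ, real_inner_comm R.θ T.ρ, real_inner_comm φ T.ρ]
    field_simp
    ring
  refine ⟨part1, ?_, ?_⟩
  · -- nonnegative integrality
    intro hp
    obtain ⟨n1, hn1⟩ := pair_rho_int T hθroot
    obtain ⟨n2, hn2⟩ := pair_rho_int T hφ
    have hL : R.L φ = ((n1 - n2 : ℤ) : ℝ) := by
      rw [part1, IrredRootSystemData.dualCox, hn1, hn2]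
      push_cast
      ring
    have hLnn : 0 ≤ R.L φ := by
      rw [IrredRootSystemData.L]
      apply div_nonneg _ hθθ.le
      obtain ⟨c, hc⟩ := R.θ_highest φ hp
      have h := rho_inner_combo_nonneg T c
      rw [← hc, real_inner_comm] at h
      linarith
    have hz : (0:ℤ) ≤ n1 - n2 := by
      have : (0:ℝ) ≤ ((n1 - n2 : ℤ) : ℝ) := hL ▸ hLnn
      exact_mod_cast this
    refine ⟨(n1 - n2).toNat, ?_⟩
    rw [hL]
    exact_mod_cast (Int.toNat_of_nonneg hz).symm
  · intro hp
    constructor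
    · intro hL
      have hp1 : pair T.ρ φ = 1 := by
        rw [part1] at hL
        linarith
      have hkey := key T hφ
      rw [hp1, one_smul] at hkey
      have hφB : φ ∈ Bset T φ := by
        rw [Bset, Finset.mem_filter]
        refine ⟨hp, ?_⟩
        have h : rfx φ φ = -φ := by rw [rfx, pair_self' hφ0, two_smul]; abel
        rw [h]
        exact neg_not_mem_pos T hp
      have hzero : ∑ β ∈ (Bset T φ).erase φ, β = 0 := by
        have h := Finset.add_sum_erase _ (fun β => β) hφB
        rw [hkey] at h
        have h2 : φ + ∑ β ∈ (Bset T φ).erase φ, β = φ + 0 := by rw [add_zero]; exact h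
        exact add_left_cancel h2
      have hempty : (Bset T φ).erase φ = ∅ := by
        by_contra hne
        obtain ⟨β0, hβ0⟩ := Finset.nonempty_of_ne_empty hne
        have hpos : 0 < ⟪T.ρ, ∑ β ∈ (Bset T φ).erase φ, β⟫ := by
          rw [inner_sum]
          apply Finset.sum_pos
          · intro β hb
            exact rho_inner_pos_root T (Finset.mem_filter.mp (Finset.mem_of_mem_erase hb)).1
          · exact ⟨β0, hβ0⟩
        rw [hzero, inner_zero_right] at hpos
        exact lt_irrefl _ hpos
      have hBsub : ∀ β ∈ Bset T φ, β = φ := by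
        intro β hb
        by_contra hne
        have h : β ∈ (Bset T φ).erase φ := Finset.mem_erase.mpr ⟨hne, hb⟩
        rw [hempty] at h
        exact absurd h (Finset.notMem_empty β)
      obtain ⟨c, hc⟩ := T.pos_combo φ hp
      have hex : ∃ i, 0 < (c i : ℝ) * ⟪R.simple i, φ⟫ := by
        by_contra h
        push_neg at h
        have hinner : ⟪φ, φ⟫ = ∑ i, (c i:ℝ) * ⟪R.simple i, φ⟫ := by
          nth_rewrite 1 [hc]
          rw [sum_inner]
          apply Finset.sum_congr rfl
          intro i _
          rw [real_inner_smul_left]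
        have hnp : ⟪φ, φ⟫ ≤ 0 := by
          rw [hinner]
          apply Finset.sum_nonpos
          intro i _
          exact h i
        linarith
      obtain ⟨i, hi⟩ := hex
      have hci : 0 < (c i : ℝ) := by
        rcases (Nat.cast_nonneg (c i) : (0:ℝ) ≤ (c i : ℝ)).lt_or_eq with h | h
        · exact h
        · exfalso; rw [← h, zero_mul] at hi; exact lt_irrefl 0 hi
      have hip : 0 < ⟪R.simple i, φ⟫ := by
        by_contra h
        push_neg at h
        nlinarith
      by_cases hsimple : φ = R.simple i
      · exact ⟨i, hsimple⟩
      · exfalso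
        have hiroot : R.simple i ∈ T.roots := T.pos_subset (T.simple_mem_pos i)
        have hk0 : 0 < pair (R.simple i) φ := by
          unfold pair
          apply div_pos (by linarith) hφφpos
        have hk1 : (1:ℝ) ≤ pair (R.simple i) φ := by
          have hint := pair_int T hφ hiroot
          have hfl : (0:ℤ) < ⌊pair (R.simple i) φ⌋ := by
            have : (0:ℝ) < ((⌊pair (R.simple i) φ⌋ : ℤ) : ℝ) := hint ▸ hk0
            exact_mod_cast this
          rw [hint]
          exact_mod_cast hfl
        have hrf_notpos : rfx φ (R.simple i) ∉ T.pos := by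
          intro hmem
          obtain ⟨d, hd⟩ := T.pos_combo _ hmem
          have heq : ∑ j, ((if j = i then (1:ℝ) else 0) - pair (R.simple i) φ * (c j:ℝ))
                • R.simple j = ∑ j, (d j : ℝ) • R.simple j := by
            rw [← hd, rfx]
            nth_rewrite 3 [hc]
            rw [Finset.smul_sum]
            simp_rw [sub_smul, ite_smul, one_smul, zero_smul, smul_smul]
            rw [Finset.sum_sub_distrib,
              Finset.sum_ite_eq' Finset.univ i (fun j => R.simple j),
              if_pos (Finset.mem_univ i)]
          have hji := coeff_eq T heq
          have hii := hji i
          rw [if_pos rfl] at hii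
          have hci1 : 1 ≤ (c i : ℝ) := by
            have : 1 ≤ c i := Nat.one_le_iff_ne_zero.mpr (by
              intro h0
              rw [h0] at hci
              simp at hci)
            exact_mod_cast this
          have hdi : 0 ≤ (d i : ℝ) := Nat.cast_nonneg _
          have hkc : pair (R.simple i) φ * (c i:ℝ) = 1 := by nlinarith
          have hc_eq : (c i : ℝ) = 1 := by nlinarith
          have hcj0 : ∀ j, j ≠ i → (c j : ℝ) = 0 := by
            intro j hj
            have hjj := hji j
            rw [if_neg hj] at hjj
            have hdj : 0 ≤ (d j:ℝ) := Nat.cast_nonneg _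
            nlinarith [(Nat.cast_nonneg (c j) : (0:ℝ) ≤ (c j:ℝ)), hk0]
          apply hsimple
          rw [hc, Finset.sum_eq_single i]
          · rw [hc_eq, one_smul]
          · intro j _ hj; rw [hcj0 j hj, zero_smul]
          · intro h; exact absurd (Finset.mem_univ i) h
        have hmem : R.simple i ∈ Bset T φ :=
          Finset.mem_filter.mpr ⟨T.simple_mem_pos i, hrf_notpos⟩
        exact hsimple ((hBsub _ hmem).symm)
    · rintro ⟨i, rfl⟩
      rw [part1, pair_rho_simple]
      ring
end
end

section
/- Let φ be a positive long root of an irreducible root system with Weyl group W. Then there exists a unique w ∈ W with w·φ = θ (the highest root) of length ℓ(w) = L(φ) = 2(θ−φ|ρ)/(θ|θ), and moreover w'·φ ≠ θ for every w' ∈ W with ℓ(w') < L(φ). -/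
open scoped RealInnerProductSpace BigOperators

noncomputable section

variable (V : Type) [NormedAddCommGroup V] [InnerProductSpace ℝ V] [FiniteDimensional ℝ V]

set_option linter.unusedSectionVars false
set_option maxHeartbeats 1000000

section Aux

variable {V}

open Classical

namespace RootSystemData

lemma sRefl_apply (α x : V) : sRefl α x = x - pair x α • α := by
  show (Submodule.reflection ((ℝ ∙ α)ᗮ) x : V) = x - (2 * ⟪x, α⟫ / ⟪α, α⟫) • α
  by_cases hα : α = 0
  · simp [hα, Submodule.reflection_apply, Submodule.starProjection_eq_self_iff.mpr Submodule.mem_top, two_smul]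
  · rw [Submodule.reflection_apply]
    have h1 : ((ℝ ∙ α)ᗮ).starProjection x
        = x - (ℝ ∙ α).starProjection x := Submodule.starProjection_orthogonal_val x
    rw [h1, Submodule.starProjection_singleton]
    simp only [RCLike.ofReal_real_eq_id, id_eq]
    have hn : ⟪α, α⟫ = (‖α‖ : ℝ)^2 := real_inner_self_eq_norm_sq α
    rw [real_inner_comm x α, hn]
    have hne : ((‖α‖:ℝ)^2) ≠ 0 := pow_ne_zero _ (norm_ne_zero_iff.mpr hα)
    match_scalars <;> field_simp <;> ring

lemma sRefl_self (α : V) : sRefl α α = -α :=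
  Submodule.reflection_orthogonalComplement_singleton_eq_neg α

lemma sRefl_symm_eq (α : V) : (sRefl α).symm = sRefl α := Submodule.reflection_symm

lemma sRefl_inv (α : V) : (sRefl α)⁻¹ = sRefl α := sRefl_symm_eq α

lemma sRefl_sRefl (α x : V) : sRefl α (sRefl α x) = x := Submodule.reflection_reflection _ x

lemma sRefl_sq (α : V) : sRefl α * sRefl α = 1 := by
  rw [← sRefl_inv]; exact inv_mul_cancel _

lemma sRefl_conj (g : V ≃ₗᵢ[ℝ] V) (α : V) :
    sRefl (g α) = g * sRefl α * g⁻¹ := by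
  ext x
  have h0 : ⟪g α, g α⟫ = ⟪α, α⟫ := g.inner_map_map α α
  have h1 : ⟪x, g α⟫ = ⟪g.symm x, α⟫ := by
    conv_lhs => rw [show x = g (g.symm x) by simp]
    exact g.inner_map_map _ _
  simp only [LinearIsometryEquiv.coe_mul, Function.comp_apply, LinearIsometryEquiv.coe_inv]
  rw [sRefl_apply, sRefl_apply, pair, pair, h0, h1, map_sub, map_smul]
  simp

variable (R : RootSystemData V)

lemma mem_roots_of_pos {γ : V} (h : γ ∈ R.pos) : γ ∈ R.roots := R.pos_subset h

lemma pos_ne_zero {γ : V} (h : γ ∈ R.pos) : γ ≠ 0 := R.root_ne_zero γ (R.mem_roots_of_pos h)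

lemma not_neg_mem_pos {γ : V} (h : γ ∈ R.pos) : -γ ∉ R.pos :=
  (R.pos_iff γ (R.mem_roots_of_pos h)).1 h

lemma neg_mem_pos {γ : V} (hr : γ ∈ R.roots) (h : γ ∉ R.pos) : -γ ∈ R.pos := by
  have h2 := R.pos_iff (-γ) (R.neg_mem γ hr)
  rw [neg_neg] at h2
  exact h2.2 h

lemma sRefl_mem_roots {α β : V} (hα : α ∈ R.roots) (hβ : β ∈ R.roots) :
    sRefl α β ∈ R.roots := by
  rw [sRefl_apply]
  exact R.reflect_mem α hα β hβ

/-- uniqueness of coefficients w.r.t. simple roots -/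
lemma coeff_eq {c d : Fin R.l → ℝ}
    (h : ∑ i, c i • R.simple i = ∑ i, d i • R.simple i) : c = d := by
  have h2 : ∑ i, (c i - d i) • R.simple i = 0 := by
    simp [sub_smul, Finset.sum_sub_distrib, h]
  have := (Fintype.linearIndependent_iff.1 R.simple_indep) _ h2
  funext i
  have := this i
  linarith [this]

lemma simple_ne_zero (i : Fin R.l) : R.simple i ≠ 0 :=
  R.root_ne_zero _ (R.mem_roots_of_pos (R.simple_mem_pos i))



lemma exists_offdiag_coeff {β : V} (hβ : β ∈ R.pos) (i : Fin R.l) (hne : β ≠ R.simple i) :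
    ∃ c : Fin R.l → ℕ, β = ∑ k, (c k : ℝ) • R.simple k ∧ ∃ j, j ≠ i ∧ c j ≠ 0 := by
  obtain ⟨c, hc⟩ := R.pos_combo β hβ
  refine ⟨c, hc, ?_⟩
  by_contra h
  push_neg at h
  have hci : β = (c i : ℝ) • R.simple i := by
    rw [hc, Finset.sum_eq_single i]
    · intro j _ hj; rw [h j hj]; simp
    · simp
  have := R.reduced (R.simple i) (R.mem_roots_of_pos (R.simple_mem_pos i)) (c i : ℝ)
    (by rw [← hci]; exact R.mem_roots_of_pos hβ)
  rcases this with h1 | h1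
  · exact hne (by rw [hci, h1, one_smul])
  · have : (0:ℝ) ≤ (c i : ℝ) := Nat.cast_nonneg _
    rw [h1] at this; linarith

lemma sRefl_simple_mem_pos {β : V} (hβ : β ∈ R.pos) (i : Fin R.l) (hne : β ≠ R.simple i) :
    sRefl (R.simple i) β ∈ R.pos := by
  set s := sRefl (R.simple i)
  have hroot : s β ∈ R.roots :=
    R.sRefl_mem_roots (R.mem_roots_of_pos (R.simple_mem_pos i)) (R.mem_roots_of_pos hβ)
  by_contra hnp
  obtain ⟨c, hc, j, hji, hcj⟩ := R.exists_offdiag_coeff hβ i hne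
  obtain ⟨d, hd⟩ := R.pos_combo (-(s β)) (R.neg_mem_pos hroot hnp)
  have hsβ : s β = ∑ k, ((c k : ℝ) + (if k = i then -(pair β (R.simple i)) else 0)) • R.simple k := by
    rw [sRefl_apply]
    generalize pair β (R.simple i) = q
    rw [hc]
    simp only [add_smul, Finset.sum_add_distrib, ite_smul, zero_smul]
    rw [Finset.sum_ite_eq' Finset.univ i fun k => (-q : ℝ) • R.simple k]
    simp
    abel
  have hsβ' : s β = ∑ k, (-(d k : ℝ)) • R.simple k := by
    have : -(- s β) = s β := neg_neg _
    rw [← this, hd, ← Finset.sum_neg_distrib]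
    exact Finset.sum_congr rfl fun k _ => by rw [neg_smul]
  have hcd := R.coeff_eq (hsβ.symm.trans hsβ')
  have := congrFun hcd j
  simp [hji] at this
  have h1 : (0:ℝ) < (c j : ℝ) := by exact_mod_cast Nat.pos_of_ne_zero hcj
  have h2 : (0:ℝ) ≤ (d j : ℝ) := Nat.cast_nonneg _
  exact absurd this.1 hcj

lemma sRefl_simple_erase (i : Fin R.l) {γ : V} (hγ : γ ∈ R.pos.erase (R.simple i)) :
    sRefl (R.simple i) γ ∈ R.pos.erase (R.simple i) := by
  rw [Finset.mem_erase] at hγ ⊢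
  refine ⟨?_, R.sRefl_simple_mem_pos hγ.2 i hγ.1⟩
  intro h
  have : γ = sRefl (R.simple i) (R.simple i) := by
    have h2 := congrArg (sRefl (R.simple i)) h
    rwa [sRefl_sRefl] at h2
  rw [sRefl_self] at this
  exact R.not_neg_mem_pos (R.simple_mem_pos i) (this ▸ hγ.2)

lemma sRefl_rho (i : Fin R.l) : sRefl (R.simple i) R.ρ = R.ρ - R.simple i := by
  have hsum : ∑ γ ∈ R.pos, sRefl (R.simple i) γ = (∑ γ ∈ R.pos, γ) - 2 • R.simple i := by
    have hmem : R.simple i ∈ R.pos := R.simple_mem_pos i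
    rw [← Finset.add_sum_erase _ _ hmem, ← Finset.add_sum_erase _ (fun γ => γ) hmem]
    have herase : ∑ γ ∈ R.pos.erase (R.simple i), sRefl (R.simple i) γ
        = ∑ γ ∈ R.pos.erase (R.simple i), γ := by
      apply Finset.sum_nbij' (i := fun γ => sRefl (R.simple i) γ)
        (j := fun γ => sRefl (R.simple i) γ)
      · intro a ha; exact R.sRefl_simple_erase i ha
      · intro a ha; exact R.sRefl_simple_erase i ha
      · intro a _; exact sRefl_sRefl _ _
      · intro a _; exact sRefl_sRefl _ _
      · intro a _; rfl
    rw [herase, sRefl_self]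
    simp only [id_eq, two_smul]
    abel
  have : sRefl (R.simple i) R.ρ = (2:ℝ)⁻¹ • ∑ γ ∈ R.pos, sRefl (R.simple i) γ := by
    rw [ρ, map_smul, map_sum]
  rw [this, hsum, smul_sub, ρ]
  congr 1
  rw [two_smul, smul_add]
  match_scalars
  norm_num

lemma pair_rho_simple (i : Fin R.l) : pair R.ρ (R.simple i) = 1 := by
  have h := R.sRefl_rho i
  rw [sRefl_apply] at h
  have h1 : pair R.ρ (R.simple i) • R.simple i = R.simple i := sub_right_injective h
  have h2 : (pair R.ρ (R.simple i) - 1) • R.simple i = 0 := by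
    rw [sub_smul, one_smul, h1, sub_self]
  rcases smul_eq_zero.1 h2 with h3 | h3
  · linarith [sub_eq_zero.1 h3]
  · exact absurd h3 (R.simple_ne_zero i)

lemma inner_rho_simple (i : Fin R.l) :
    2 * ⟪R.ρ, R.simple i⟫ = ⟪R.simple i, R.simple i⟫ := by
  have h := R.pair_rho_simple i
  rw [pair] at h
  have hne : ⟪R.simple i, R.simple i⟫ ≠ 0 := by
    rw [real_inner_self_eq_norm_sq]
    exact pow_ne_zero _ (norm_ne_zero_iff.mpr (R.simple_ne_zero i))
  field_simp at h
  linarith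



def prodW (R : RootSystemData V) (L : List (Fin R.l)) : V ≃ₗᵢ[ℝ] V :=
  (L.map fun i => sRefl (R.simple i)).prod

lemma prodW_nil : R.prodW [] = 1 := rfl

lemma prodW_cons (i : Fin R.l) (L : List (Fin R.l)) :
    R.prodW (i :: L) = sRefl (R.simple i) * R.prodW L := by
  simp [prodW]

lemma prodW_append (L1 L2 : List (Fin R.l)) :
    R.prodW (L1 ++ L2) = R.prodW L1 * R.prodW L2 := by
  simp [prodW]

lemma prodW_singleton (i : Fin R.l) : R.prodW [i] = sRefl (R.simple i) := by
  simp [prodW]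

lemma prodW_reverse (L : List (Fin R.l)) : R.prodW L.reverse = (R.prodW L)⁻¹ := by
  induction L with
  | nil => simp [prodW]
  | cons i L ih =>
      rw [List.reverse_cons, prodW_append, prodW_singleton, ih, prodW_cons, mul_inv_rev, sRefl_inv]

lemma prodW_mem_W (L : List (Fin R.l)) : R.prodW L ∈ R.W := by
  induction L with
  | nil => exact one_mem _
  | cons i L ih =>
      rw [prodW_cons]
      exact mul_mem (Subgroup.subset_closure ⟨i, rfl⟩) ih

lemma mem_W_iff {w : V ≃ₗᵢ[ℝ] V} : w ∈ R.W ↔ ∃ L : List (Fin R.l), w = R.prodW L := by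
  constructor
  · intro hw
    induction hw using Subgroup.closure_induction with
    | mem x hx => obtain ⟨i, rfl⟩ := hx; exact ⟨[i], (R.prodW_singleton i).symm⟩
    | one => exact ⟨[], rfl⟩
    | mul x y _ _ hx hy =>
        obtain ⟨L1, rfl⟩ := hx; obtain ⟨L2, rfl⟩ := hy
        exact ⟨L1 ++ L2, (R.prodW_append L1 L2).symm⟩
    | inv x _ hx =>
        obtain ⟨L, rfl⟩ := hx
        exact ⟨L.reverse, (R.prodW_reverse L).symm⟩
  · rintro ⟨L, rfl⟩; exact R.prodW_mem_W L

lemma prodW_mem_roots (L : List (Fin R.l)) {γ : V} (hγ : γ ∈ R.roots) :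
    R.prodW L γ ∈ R.roots := by
  induction L with
  | nil => simpa [prodW_nil]
  | cons i L ih =>
      rw [prodW_cons, LinearIsometryEquiv.coe_mul, Function.comp_apply]
      exact R.sRefl_mem_roots (R.mem_roots_of_pos (R.simple_mem_pos i)) ih

lemma W_mem_roots {w : V ≃ₗᵢ[ℝ] V} (hw : w ∈ R.W) {γ : V} (hγ : γ ∈ R.roots) :
    w γ ∈ R.roots := by
  obtain ⟨L, rfl⟩ := R.mem_W_iff.1 hw
  exact R.prodW_mem_roots L hγ

lemma W_symm_mem {w : V ≃ₗᵢ[ℝ] V} (hw : w ∈ R.W) : w.symm ∈ R.W := by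
  have : w⁻¹ ∈ R.W := inv_mem hw
  exact this

lemma lenSet_eq (w : V ≃ₗᵢ[ℝ] V) :
    {k : ℕ | ∃ f : Fin k → Fin R.l,
        w = (List.ofFn fun j => sRefl (R.simple (f j))).prod}
      = {k : ℕ | ∃ L : List (Fin R.l), L.length = k ∧ w = R.prodW L} := by
  ext k
  constructor
  · rintro ⟨f, hf⟩
    refine ⟨List.ofFn f, by simp, ?_⟩
    rw [hf, prodW, List.map_ofFn]
    rfl
  · rintro ⟨L, rfl, hw⟩
    refine ⟨L.get, ?_⟩
    rw [hw, prodW, ← List.ofFn_getElem_eq_map]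
    rfl

lemma len_le_of_eq {w : V ≃ₗᵢ[ℝ] V} {L : List (Fin R.l)} (h : w = R.prodW L) :
    R.len w ≤ L.length := by
  apply Nat.sInf_le
  show L.length ∈ {k : ℕ | ∃ f : Fin k → Fin R.l, _}
  rw [R.lenSet_eq w]
  exact ⟨L, rfl, h⟩

lemma exists_word_of_mem_W {w : V ≃ₗᵢ[ℝ] V} (hw : w ∈ R.W) :
    ∃ L : List (Fin R.l), L.length = R.len w ∧ w = R.prodW L := by
  obtain ⟨L0, rfl⟩ := R.mem_W_iff.1 hw
  have hne : {k : ℕ | ∃ f : Fin k → Fin R.l,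
      R.prodW L0 = (List.ofFn fun j => sRefl (R.simple (f j))).prod}.Nonempty := by
    rw [R.lenSet_eq]
    exact ⟨L0.length, L0, rfl, rfl⟩
  have h0 : R.len (R.prodW L0) ∈ {k : ℕ | ∃ f : Fin k → Fin R.l,
      R.prodW L0 = (List.ofFn fun j => sRefl (R.simple (f j))).prod} := Nat.sInf_mem hne
  rw [R.lenSet_eq] at h0
  obtain ⟨L, hL, hw'⟩ := h0
  exact ⟨L, hL, hw'⟩

def Mw (R : RootSystemData V) (w : V ≃ₗᵢ[ℝ] V) : Finset V :=
  R.pos.filter fun γ => w γ ∉ R.pos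

lemma mem_Mw_iff {w : V ≃ₗᵢ[ℝ] V} {γ : V} :
    γ ∈ R.Mw w ↔ γ ∈ R.pos ∧ w γ ∉ R.pos := Finset.mem_filter

lemma Mw_cons (i : Fin R.l) (u : V ≃ₗᵢ[ℝ] V) :
    R.Mw (sRefl (R.simple i) * u) ⊆ insert (u.symm (R.simple i)) (R.Mw u) := by
  intro γ hγ
  rw [mem_Mw_iff] at hγ
  obtain ⟨h1, h2⟩ := hγ
  rw [LinearIsometryEquiv.coe_mul, Function.comp_apply] at h2
  by_cases hu : u γ ∈ R.pos
  · by_cases he : u γ = R.simple i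
    · have hγ : γ = u.symm (R.simple i) := by
        rw [← he, LinearIsometryEquiv.symm_apply_apply]
      rw [hγ]
      exact Finset.mem_insert_self _ _
    · exact absurd (R.sRefl_simple_mem_pos hu i he) h2
  · exact Finset.mem_insert_of_mem (R.mem_Mw_iff.mpr ⟨h1, hu⟩)

lemma card_Mw_le (L : List (Fin R.l)) : (R.Mw (R.prodW L)).card ≤ L.length := by
  induction L with
  | nil =>
      have : R.Mw (R.prodW []) = ∅ := by
        rw [prodW_nil]
        ext γ
        simp [mem_Mw_iff]
      simp [this]
  | cons i L ih =>
      rw [prodW_cons]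
      calc (R.Mw (sRefl (R.simple i) * R.prodW L)).card
          ≤ (insert ((R.prodW L).symm (R.simple i)) (R.Mw (R.prodW L))).card :=
            Finset.card_le_card (R.Mw_cons i (R.prodW L))
        _ ≤ (R.Mw (R.prodW L)).card + 1 := Finset.card_insert_le _ _
        _ ≤ L.length + 1 := by omega

lemma sum_symm_pos {w : V ≃ₗᵢ[ℝ] V} (hw : w ∈ R.W) :
    ∑ β ∈ R.pos, w.symm β = (∑ γ ∈ R.pos, γ) - 2 • ∑ γ ∈ R.Mw w, γ := by
  have key : ∑ β ∈ R.pos, w.symm β = ∑ γ ∈ R.pos, (if w γ ∈ R.pos then γ else -γ) := by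
    apply Finset.sum_nbij'
      (i := fun β => if w.symm β ∈ R.pos then w.symm β else -(w.symm β))
      (j := fun γ => if w γ ∈ R.pos then w γ else -(w γ))
    · intro β hβ
      by_cases h : w.symm β ∈ R.pos
      · simpa [h]
      · simp only [h, if_false]
        exact R.neg_mem_pos (R.W_mem_roots (R.W_symm_mem hw) (R.mem_roots_of_pos hβ)) h
    · intro γ hγ
      by_cases h : w γ ∈ R.pos
      · simpa [h]
      · simp only [h, if_false]
        exact R.neg_mem_pos (R.W_mem_roots hw (R.mem_roots_of_pos hγ)) h
    · intro β hβ
      by_cases h : w.symm β ∈ R.pos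
      · simp [h, LinearIsometryEquiv.apply_symm_apply, hβ]
      · simp only [h, if_false, map_neg, LinearIsometryEquiv.apply_symm_apply]
        have : -β ∉ R.pos := R.not_neg_mem_pos hβ
        simp [this]
    · intro γ hγ
      by_cases h : w γ ∈ R.pos
      · simp [h, LinearIsometryEquiv.symm_apply_apply, hγ]
      · simp only [h, if_false, map_neg, LinearIsometryEquiv.symm_apply_apply]
        have : -γ ∉ R.pos := R.not_neg_mem_pos hγ
        simp [this]
    · intro β hβ
      by_cases h : w.symm β ∈ R.pos
      · simp [h, LinearIsometryEquiv.apply_symm_apply, hβ]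
      · simp only [h, if_false, map_neg, LinearIsometryEquiv.apply_symm_apply]
        have : -β ∉ R.pos := R.not_neg_mem_pos hβ
        simp [this]
  rw [key]
  have split : ∀ γ ∈ R.pos, (if w γ ∈ R.pos then γ else -γ)
      = γ - 2 • (if w γ ∉ R.pos then γ else 0) := by
    intro γ _
    by_cases h : w γ ∈ R.pos <;> simp [h, two_smul] <;> abel
  rw [Finset.sum_congr rfl split, Finset.sum_sub_distrib]
  congr 1
  rw [← Finset.smul_sum]
  congr 1
  rw [Mw, Finset.sum_filter]

lemma symm_rho {w : V ≃ₗᵢ[ℝ] V} (hw : w ∈ R.W) :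
    w.symm R.ρ = R.ρ - ∑ γ ∈ R.Mw w, γ := by
  have : w.symm R.ρ = (2:ℝ)⁻¹ • ∑ β ∈ R.pos, w.symm β := by
    rw [ρ, map_smul, map_sum]
  rw [this, R.sum_symm_pos hw, smul_sub, ρ]
  congr 1
  rw [two_smul]
  match_scalars
  norm_num

private lemma conj_cancel {G : Type*} [Group G] (u s : G) (hs : s * s = 1) :
    u * s * u⁻¹ * u * s = u := by
  rw [mul_assoc (u * s) u⁻¹ u, inv_mul_cancel, mul_one, mul_assoc, hs, mul_one]

lemma exchange : ∀ (L : List (Fin R.l)) (i : Fin R.l),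
    R.prodW L (R.simple i) ∉ R.pos →
    ∃ L' : List (Fin R.l), L'.length + 1 = L.length ∧
      R.prodW L * sRefl (R.simple i) = R.prodW L' := by
  intro L
  induction L with
  | nil =>
      intro i h
      exact absurd (R.simple_mem_pos i) (by simpa [prodW_nil] using h)
  | cons j L' ih =>
      intro i h
      rw [prodW_cons, LinearIsometryEquiv.coe_mul, Function.comp_apply] at h
      by_cases hu : R.prodW L' (R.simple i) ∈ R.pos
      · have huai : R.prodW L' (R.simple i) = R.simple j := by
          by_contra hne
          exact h (R.sRefl_simple_mem_pos hu j hne)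
        refine ⟨L', rfl, ?_⟩
        have hconj : sRefl (R.simple j)
            = R.prodW L' * sRefl (R.simple i) * (R.prodW L')⁻¹ := by
          rw [← huai]
          exact sRefl_conj (R.prodW L') (R.simple i)
        rw [prodW_cons, hconj]
        exact conj_cancel _ _ (sRefl_sq _)
      · obtain ⟨L'', hlen, heq⟩ := ih i hu
        refine ⟨j :: L'', by simp [← hlen], ?_⟩
        rw [prodW_cons, mul_assoc, heq, prodW_cons]

lemma eq_one_of_pos_preserved : ∀ (n : ℕ) (L : List (Fin R.l)), L.length ≤ n →
    (∀ γ ∈ R.pos, R.prodW L γ ∈ R.pos) → R.prodW L = 1 := by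
  intro n
  induction n with
  | zero =>
      intro L hL _
      rw [List.length_eq_zero_iff.mp (Nat.le_zero.mp hL)]
      rfl
  | succ n ih =>
      intro L hL hpos
      match L with
      | [] => rfl
      | j :: L' =>
        have hni : R.prodW L'.reverse (R.simple j) ∉ R.pos := by
          rw [prodW_reverse]
          intro hmem
          have h2 := hpos _ hmem
          have h3 : R.prodW (j :: L') ((R.prodW L')⁻¹ (R.simple j)) = -R.simple j := by
            rw [prodW_cons]
            simp only [LinearIsometryEquiv.coe_mul, Function.comp_apply,
              LinearIsometryEquiv.coe_inv, LinearIsometryEquiv.apply_symm_apply]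
            exact sRefl_self _
          rw [h3] at h2
          exact R.not_neg_mem_pos (R.simple_mem_pos j) h2
        obtain ⟨L'', hlen, heq⟩ := R.exchange L'.reverse j hni
        have hw : R.prodW (j :: L') = R.prodW L''.reverse := by
          rw [prodW_reverse, ← heq, mul_inv_rev, sRefl_inv, prodW_reverse, inv_inv, prodW_cons]
        rw [hw]
        apply ih L''.reverse
        · rw [List.length_reverse]
          rw [List.length_reverse] at hlen
          simp only [List.length_cons] at hL
          omega
        · intro γ hγ
          rw [← hw]
          exact hpos γ hγ

lemma W_eq_of_Mw_eq {w w' : V ≃ₗᵢ[ℝ] V} (hw : w ∈ R.W) (hw' : w' ∈ R.W)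
    (hM : R.Mw w = R.Mw w') : w' = w := by
  have hu : ∀ β ∈ R.pos, (w' * w⁻¹) β ∈ R.pos := by
    intro β hβ
    rw [LinearIsometryEquiv.coe_mul, Function.comp_apply, LinearIsometryEquiv.coe_inv]
    by_cases hγ : w.symm β ∈ R.pos
    · have hnot : w.symm β ∉ R.Mw w := by
        rw [mem_Mw_iff]
        push_neg
        intro _
        rw [LinearIsometryEquiv.apply_symm_apply]
        exact hβ
      rw [hM, mem_Mw_iff] at hnot
      push_neg at hnot
      exact hnot hγ
    · have hroot : w.symm β ∈ R.roots :=
        R.W_mem_roots (R.W_symm_mem hw) (R.mem_roots_of_pos hβ)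
      have hδ : -(w.symm β) ∈ R.pos := R.neg_mem_pos hroot hγ
      have hδM : -(w.symm β) ∈ R.Mw w := by
        rw [mem_Mw_iff]
        refine ⟨hδ, ?_⟩
        rw [map_neg, LinearIsometryEquiv.apply_symm_apply]
        exact R.not_neg_mem_pos hβ
      rw [hM, mem_Mw_iff] at hδM
      have h4 : w' (-(w.symm β)) ∉ R.pos := hδM.2
      rw [map_neg] at h4
      have hroot2 : w' (w.symm β) ∈ R.roots := R.W_mem_roots hw' hroot
      have := R.neg_mem_pos (R.neg_mem _ hroot2) h4
      rwa [neg_neg] at this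
  obtain ⟨L, hL⟩ := R.mem_W_iff.1 (mul_mem hw' (inv_mem hw))
  rw [hL] at hu
  have h1 := R.eq_one_of_pos_preserved L.length L le_rfl hu
  rw [← hL] at h1
  exact mul_inv_eq_one.mp h1

end RootSystemData

namespace IrredRootSystemData

open RootSystemData

variable (R : IrredRootSystemData V)

lemma theta_mem_roots : R.θ ∈ R.roots := R.toRootSystemData.mem_roots_of_pos R.θ_mem_pos

lemma theta_ne_zero : R.θ ≠ 0 := R.toRootSystemData.pos_ne_zero R.θ_mem_pos

lemma inner_theta_self_pos : 0 < ⟪R.θ, R.θ⟫ := by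
  rw [real_inner_self_eq_norm_sq]
  exact pow_pos (norm_pos_iff.mpr R.theta_ne_zero) 2

lemma isLong_inner_self {φ : V} (h : R.IsLong φ) : ⟪φ, φ⟫ = ⟪R.θ, R.θ⟫ := by
  rw [real_inner_self_eq_norm_sq, real_inner_self_eq_norm_sq, h]

lemma inner_self_le {γ : V} (hγ : γ ∈ R.roots) : ⟪γ, γ⟫ ≤ ⟪R.θ, R.θ⟫ := by
  rw [real_inner_self_eq_norm_sq, real_inner_self_eq_norm_sq]
  have := R.θ_long γ hγ
  nlinarith [norm_nonneg γ]

lemma pair_ge_neg_one {γ φ : V} (hγ : γ ∈ R.pos) (hφ : φ ∈ R.pos) (hlong : R.IsLong φ) :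
    -1 ≤ pair γ φ := by
  by_contra h
  push_neg at h
  obtain ⟨n, hn⟩ := R.crystal φ (R.toRootSystemData.mem_roots_of_pos hφ) γ
    (R.toRootSystemData.mem_roots_of_pos hγ)
  have hpn : pair γ φ = (n : ℝ) := hn
  have hn2 : (n : ℝ) ≤ -2 := by
    have : (n : ℝ) < -1 := hpn ▸ h
    have : n < -1 := by exact_mod_cast this
    have : n ≤ -2 := by omega
    exact_mod_cast this
  have hφφ : 0 < ⟪φ, φ⟫ := by rw [R.isLong_inner_self hlong]; exact R.inner_theta_self_pos
  have hinner : ⟪γ, φ⟫ ≤ -⟪φ, φ⟫ := by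
    have : pair γ φ ≤ -2 := hpn ▸ hn2
    rw [pair, div_le_iff₀ hφφ] at this
    linarith
  have hγγ : ⟪γ, γ⟫ ≤ ⟪φ, φ⟫ := by
    rw [R.isLong_inner_self hlong]
    exact R.inner_self_le (R.toRootSystemData.mem_roots_of_pos hγ)
  have hzero : ⟪γ + φ, γ + φ⟫ ≤ 0 := by
    rw [real_inner_add_add_self]
    linarith
  have : γ + φ = 0 := by
    have := real_inner_self_nonneg (x := γ + φ)
    have h0 : ⟪γ + φ, γ + φ⟫ = 0 := le_antisymm hzero this
    exact inner_self_eq_zero.mp h0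
  have hγφ : γ = -φ := eq_neg_of_add_eq_zero_left this
  exact R.toRootSystemData.not_neg_mem_pos hφ (hγφ ▸ hγ)

lemma inner_theta_nonneg {β : V} (hβ : β ∈ R.pos) : 0 ≤ ⟪R.θ, β⟫ := by
  obtain ⟨c, hc⟩ := R.pos_combo β hβ
  rw [hc, inner_sum]
  apply Finset.sum_nonneg
  intro i _
  rw [real_inner_smul_right]
  exact mul_nonneg (Nat.cast_nonneg _) (R.θ_dominant i)

lemma L_identity {w : V ≃ₗᵢ[ℝ] V} (hw : w ∈ R.W) {φ : V} (hwφ : w φ = R.θ)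
    (hlong : R.IsLong φ) :
    R.L φ = ∑ γ ∈ R.toRootSystemData.Mw w, (-(pair γ φ)) := by
  have h1 : ⟪R.θ, R.toRootSystemData.ρ⟫
      = ⟪φ, R.toRootSystemData.ρ⟫ - ∑ γ ∈ R.toRootSystemData.Mw w, ⟪φ, γ⟫ := by
    have h2 : ⟪R.θ, R.toRootSystemData.ρ⟫ = ⟪φ, w.symm R.toRootSystemData.ρ⟫ := by
      conv_lhs => rw [← hwφ, ← LinearIsometryEquiv.apply_symm_apply w R.toRootSystemData.ρ]
      exact w.inner_map_map φ (w.symm R.toRootSystemData.ρ)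
    rw [h2, R.toRootSystemData.symm_rho hw, inner_sub_right, inner_sum]
  rw [L, inner_sub_left, h1]
  have hθθ : ⟪R.θ, R.θ⟫ = ⟪φ, φ⟫ := (R.isLong_inner_self hlong).symm
  rw [hθθ]
  have hmid : ⟪φ, R.toRootSystemData.ρ⟫ - ∑ γ ∈ R.toRootSystemData.Mw w, ⟪φ, γ⟫
      - ⟪φ, R.toRootSystemData.ρ⟫ = ∑ γ ∈ R.toRootSystemData.Mw w, (-⟪φ, γ⟫) := by
    rw [Finset.sum_neg_distrib]
    ring
  rw [hmid, Finset.mul_sum, Finset.sum_div]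
  apply Finset.sum_congr rfl
  intro γ _
  rw [pair, real_inner_comm γ φ]
  ring

lemma S_subset_Mw {w : V ≃ₗᵢ[ℝ] V} (hw : w ∈ R.W) {φ : V} (hwφ : w φ = R.θ)
    {γ : V} (hγ : γ ∈ R.pos) (hneg : ⟪γ, φ⟫ < 0) : γ ∈ R.toRootSystemData.Mw w := by
  rw [RootSystemData.mem_Mw_iff]
  refine ⟨hγ, fun hpos => ?_⟩
  have h1 : ⟪w φ, w γ⟫ = ⟪φ, γ⟫ := w.inner_map_map φ γ
  rw [hwφ] at h1
  have h2 := R.inner_theta_nonneg hpos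
  rw [h1, real_inner_comm] at h2
  linarith

lemma len_lower_bound {w : V ≃ₗᵢ[ℝ] V} (hw : w ∈ R.W) {φ : V} (hwφ : w φ = R.θ)
    (hφ : φ ∈ R.pos) (hlong : R.IsLong φ) : R.L φ ≤ (R.len w : ℝ) := by
  obtain ⟨L, hL, hwL⟩ := R.toRootSystemData.exists_word_of_mem_W hw
  have hcard : (R.toRootSystemData.Mw w).card ≤ R.len w := by
    rw [← hL, hwL]
    exact R.toRootSystemData.card_Mw_le L
  have hsum : R.L φ ≤ ((R.toRootSystemData.Mw w).card : ℝ) := by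
    rw [R.L_identity hw hwφ hlong]
    calc ∑ γ ∈ R.toRootSystemData.Mw w, (-(pair γ φ))
        ≤ ∑ _γ ∈ R.toRootSystemData.Mw w, (1:ℝ) := by
          apply Finset.sum_le_sum
          intro γ hγ
          have := R.pair_ge_neg_one (R.toRootSystemData.mem_Mw_iff.mp hγ).1 hφ hlong
          linarith
      _ = ((R.toRootSystemData.Mw w).card : ℝ) := by simp
  calc R.L φ ≤ ((R.toRootSystemData.Mw w).card : ℝ) := hsum
    _ ≤ (R.len w : ℝ) := by exact_mod_cast hcard

lemma inner_simple_self_pos (i : Fin R.l) : 0 < ⟪R.simple i, R.simple i⟫ := by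
  rw [real_inner_self_eq_norm_sq]
  exact pow_pos (norm_pos_iff.mpr (R.toRootSystemData.simple_ne_zero i)) 2

lemma Mw_eq_of_len_eq {w : V ≃ₗᵢ[ℝ] V} (hw : w ∈ R.W) {φ : V} (hwφ : w φ = R.θ)
    (hφ : φ ∈ R.pos) (hlong : R.IsLong φ) (hlen : (R.len w : ℝ) = R.L φ) :
    R.toRootSystemData.Mw w = R.pos.filter (fun γ => ⟪γ, φ⟫ < 0) := by
  classical
  apply Finset.Subset.antisymm
  · obtain ⟨Lw, hLw, hwL⟩ := R.toRootSystemData.exists_word_of_mem_W hw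
    have hcard : ((R.toRootSystemData.Mw w).card : ℝ) ≤ (R.len w : ℝ) := by
      exact_mod_cast by rw [← hLw, hwL]; exact R.toRootSystemData.card_Mw_le Lw
    have hid : R.L φ = ∑ γ ∈ R.toRootSystemData.Mw w, (-(pair γ φ)) :=
      R.L_identity hw hwφ hlong
    have hterm : ∀ γ ∈ R.toRootSystemData.Mw w, (-(pair γ φ)) ≤ 1 := by
      intro γ hγ
      have := R.pair_ge_neg_one (R.toRootSystemData.mem_Mw_iff.mp hγ).1 hφ hlong
      linarith
    have hsum_le : ∑ γ ∈ R.toRootSystemData.Mw w, (-(pair γ φ))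
        ≤ ((R.toRootSystemData.Mw w).card : ℝ) := by
      calc ∑ γ ∈ R.toRootSystemData.Mw w, (-(pair γ φ))
          ≤ ∑ _γ ∈ R.toRootSystemData.Mw w, (1:ℝ) := Finset.sum_le_sum hterm
        _ = _ := by simp
    have hkey : ∑ γ ∈ R.toRootSystemData.Mw w, (-(pair γ φ))
        = ((R.toRootSystemData.Mw w).card : ℝ) := by
      apply le_antisymm hsum_le
      rw [← hid]
      linarith [hlen, hcard]
    intro γ hγM
    rw [Finset.mem_filter]
    refine ⟨(R.toRootSystemData.mem_Mw_iff.mp hγM).1, ?_⟩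
    by_contra hge
    push_neg at hge
    have hφφ : 0 < ⟪φ, φ⟫ := by
      rw [R.isLong_inner_self hlong]; exact R.inner_theta_self_pos
    have hpγ : 0 ≤ pair γ φ := by
      rw [pair]
      exact div_nonneg (by linarith) (le_of_lt hφφ)
    have hstrict : ∑ δ ∈ R.toRootSystemData.Mw w, (-(pair δ φ))
        < ∑ _δ ∈ R.toRootSystemData.Mw w, (1:ℝ) := by
      apply Finset.sum_lt_sum hterm
      exact ⟨γ, hγM, by linarith⟩
    rw [Finset.sum_const, nsmul_eq_mul, mul_one] at hstrict
    linarith [hkey, hstrict]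
  · intro γ hγ
    rw [Finset.mem_filter] at hγ
    exact R.S_subset_Mw hw hwφ hγ.1 hγ.2

lemma pair_simple_eq_neg_one {φ : V} (hφ : φ ∈ R.pos) (hlong : R.IsLong φ)
    (i : Fin R.l) (hi : ⟪φ, R.simple i⟫ < 0) : pair (R.simple i) φ = -1 := by
  obtain ⟨n, hn⟩ := R.crystal φ (R.toRootSystemData.mem_roots_of_pos hφ) (R.simple i)
    (R.toRootSystemData.mem_roots_of_pos (R.simple_mem_pos i))
  have hpn : pair (R.simple i) φ = (n : ℝ) := hn
  have hge := R.pair_ge_neg_one (R.simple_mem_pos i) hφ hlong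
  have hφφ : 0 < ⟪φ, φ⟫ := by
    rw [R.isLong_inner_self hlong]; exact R.inner_theta_self_pos
  have hlt : pair (R.simple i) φ < 0 := by
    rw [pair, real_inner_comm]
    exact div_neg_of_neg_of_pos (by linarith) hφφ
  have h1 : (-1 : ℝ) ≤ (n : ℝ) := hpn ▸ hge
  have h2 : (n : ℝ) < 0 := hpn ▸ hlt
  have : n = -1 := by
    have h1' : (-1 : ℤ) ≤ n := by exact_mod_cast h1
    have h2' : n < 0 := by exact_mod_cast h2
    omega
  rw [hpn, this]
  norm_num

lemma L_theta : R.L R.θ = 0 := by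
  rw [L, sub_self, inner_zero_left, mul_zero, zero_div]

lemma exists_base : ∃ w ∈ R.W, w R.θ = R.θ ∧ (R.len w : ℝ) ≤ R.L R.θ := by
  refine ⟨1, one_mem _, rfl, ?_⟩
  have h0 : R.len (1 : V ≃ₗᵢ[ℝ] V) ≤ 0 :=
    R.toRootSystemData.len_le_of_eq (R.toRootSystemData.prodW_nil).symm
  rw [R.L_theta]
  simp [Nat.le_zero.mp h0]

lemma exists_elem : ∀ (n : ℕ) (φ : V), φ ∈ R.pos → R.IsLong φ →
    ∀ (c : Fin R.l → ℕ), R.θ - φ = ∑ k, (c k : ℝ) • R.simple k → ∑ k, c k ≤ n →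
    ∃ w ∈ R.W, w φ = R.θ ∧ (R.len w : ℝ) ≤ R.L φ := by
  intro n
  induction n with
  | zero =>
      intro φ hφ hlong c hc hn
      have hc0 : ∀ k ∈ Finset.univ, c k = 0 :=
        (Finset.sum_eq_zero_iff).mp (Nat.le_zero.mp hn)
      have hθφ : R.θ - φ = 0 := by
        rw [hc]
        apply Finset.sum_eq_zero
        intro k hk
        rw [hc0 k hk]
        simp
      have : φ = R.θ := by
        have := sub_eq_zero.mp hθφ
        exact this.symm
      rw [this]
      exact R.exists_base
  | succ n ih =>
      intro φ hφ hlong c hc hn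
      by_cases hφθ : φ = R.θ
      · rw [hφθ]
        exact R.exists_base
      · have hφφ : 0 < ⟪φ, φ⟫ := by
          rw [R.isLong_inner_self hlong]; exact R.inner_theta_self_pos
        have hex : ∃ i, ⟪φ, R.simple i⟫ < 0 := by
          by_contra hno
          push_neg at hno
          have h1 : 0 ≤ ⟪φ, R.θ - φ⟫ := by
            rw [hc, inner_sum]
            apply Finset.sum_nonneg
            intro k _
            rw [real_inner_smul_right]
            exact mul_nonneg (Nat.cast_nonneg _) (hno k)
          have h2 : ⟪R.θ - φ, R.θ - φ⟫ ≤ 0 := by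
            rw [real_inner_sub_sub_self]
            rw [inner_sub_right] at h1
            have hθφ2 : ⟪φ, φ⟫ ≤ ⟪φ, R.θ⟫ := by linarith
            have hcommθ : ⟪R.θ, φ⟫ = ⟪φ, R.θ⟫ := real_inner_comm _ _
            have hθθ : ⟪R.θ, R.θ⟫ = ⟪φ, φ⟫ := (R.isLong_inner_self hlong).symm
            linarith
          have h3 : R.θ - φ = 0 := by
            have h4 := real_inner_self_nonneg (x := R.θ - φ)
            exact inner_self_eq_zero.mp (le_antisymm h2 h4)
          exact hφθ (sub_eq_zero.mp h3).symm
        obtain ⟨i, hi⟩ := hex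
        have hne : φ ≠ R.simple i := by
          intro h
          rw [h] at hi
          linarith [R.inner_simple_self_pos i]
        have hψpos : sRefl (R.simple i) φ ∈ R.pos :=
          R.toRootSystemData.sRefl_simple_mem_pos hφ i hne
        set ψ := sRefl (R.simple i) φ with hψdef
        have hψlong : R.IsLong ψ := by
          rw [IsLong, hψdef, LinearIsometryEquiv.norm_map]
          exact hlong
        have hψeq : ψ = φ - pair φ (R.simple i) • R.simple i := sRefl_apply _ _
        have hαα : 0 < ⟪R.simple i, R.simple i⟫ := R.inner_simple_self_pos i
        have hp : pair φ (R.simple i) < 0 := by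
          rw [pair]
          exact div_neg_of_neg_of_pos (by linarith) hαα
        obtain ⟨d, hd⟩ := R.θ_highest ψ hψpos
        have hrel : (fun k => (d k : ℝ))
            = fun k => (c k : ℝ) + (if k = i then pair φ (R.simple i) else 0) := by
          apply R.toRootSystemData.coeff_eq
          rw [← hd, hψeq]
          have hrhs : ∑ k, ((c k : ℝ) + (if k = i then pair φ (R.simple i) else 0)) • R.simple k
              = (R.θ - φ) + pair φ (R.simple i) • R.simple i := by
            simp only [add_smul, Finset.sum_add_distrib, ite_smul, zero_smul]
            rw [Finset.sum_ite_eq' Finset.univ i fun k => pair φ (R.simple i) • R.simple k]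
            simp [hc]
          rw [hrhs]
          abel
        have hsumlt : ∑ k, d k < ∑ k, c k := by
          have hr : ∑ k, (d k : ℝ) = (∑ k, (c k : ℝ)) + pair φ (R.simple i) := by
            have := congrArg (fun f => ∑ k, f k) hrel
            simp only at this
            rw [this, Finset.sum_add_distrib,
              Finset.sum_ite_eq' Finset.univ i fun _ => pair φ (R.simple i)]
            simp
          have hr2 : (∑ k, (d k : ℝ)) < ∑ k, (c k : ℝ) := by linarith
          have hr3 : ((∑ k, d k : ℕ) : ℝ) < ((∑ k, c k : ℕ) : ℝ) := by
            push_cast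
            exact hr2
          exact_mod_cast hr3
        have hnle : ∑ k, d k ≤ n := by omega
        obtain ⟨w', hw'W, hw'ψ, hw'len⟩ := ih ψ hψpos hψlong d hd hnle
        have hsiW : sRefl (R.simple i) ∈ R.W := Subgroup.subset_closure ⟨i, rfl⟩
        refine ⟨w' * sRefl (R.simple i), mul_mem hw'W hsiW, ?_, ?_⟩
        · rw [LinearIsometryEquiv.coe_mul, Function.comp_apply, ← hψdef, hw'ψ]
        · obtain ⟨Lw, hLw, hwL⟩ := R.toRootSystemData.exists_word_of_mem_W hw'W
          have hword : w' * sRefl (R.simple i) = R.toRootSystemData.prodW (Lw ++ [i]) := by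
            rw [RootSystemData.prodW_append, RootSystemData.prodW_singleton, ← hwL]
          have hlen2 : R.len (w' * sRefl (R.simple i)) ≤ R.len w' + 1 := by
            have := R.toRootSystemData.len_le_of_eq hword
            simpa [hLw] using this
          have hpaf : pair (R.simple i) φ = -1 := R.pair_simple_eq_neg_one hφ hlong i hi
          have hLψ : R.L ψ = R.L φ - 1 := by
            have hdiff : R.L φ - R.L ψ
                = 2 * ⟪ψ - φ, R.toRootSystemData.ρ⟫ / ⟪R.θ, R.θ⟫ := by
              rw [L, L, ← sub_div]
              congr 1
              rw [inner_sub_left, inner_sub_left, inner_sub_left]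
              ring
            have hψφ : ψ - φ = (-(pair φ (R.simple i))) • R.simple i := by
              rw [hψeq, neg_smul]
              abel
            rw [hψφ, real_inner_smul_left] at hdiff
            have hραi : ⟪R.simple i, R.toRootSystemData.ρ⟫ = ⟪R.simple i, R.simple i⟫ / 2 := by
              have := R.toRootSystemData.inner_rho_simple i
              rw [real_inner_comm]
              linarith
            rw [hραi] at hdiff
            have hθθφ : ⟪R.θ, R.θ⟫ = ⟪φ, φ⟫ := (R.isLong_inner_self hlong).symm
            rw [hθθφ] at hdiff
            have hexp : pair φ (R.simple i) = 2 * ⟪φ, R.simple i⟫ / ⟪R.simple i, R.simple i⟫ :=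
              rfl
            have hexp2 : 2 * ⟪R.simple i, φ⟫ / ⟪φ, φ⟫ = -1 := by
              have : pair (R.simple i) φ = 2 * ⟪R.simple i, φ⟫ / ⟪φ, φ⟫ := rfl
              rw [← this, hpaf]
            have hcomm : ⟪R.simple i, φ⟫ = ⟪φ, R.simple i⟫ := real_inner_comm _ _
            rw [hcomm] at hexp2
            have h2φα : 2 * ⟪φ, R.simple i⟫ = -⟪φ, φ⟫ := by
              rw [div_eq_iff (ne_of_gt hφφ)] at hexp2
              linarith
            have hval : -pair φ (R.simple i) * (⟪R.simple i, R.simple i⟫ / 2)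
                = -⟪φ, R.simple i⟫ := by
              rw [hexp]
              field_simp
            rw [hval] at hdiff
            have hone : 2 * -⟪φ, R.simple i⟫ / ⟪φ, φ⟫ = 1 := by
              rw [div_eq_one_iff_eq (ne_of_gt hφφ)]
              linarith
            rw [hone] at hdiff
            linarith
          calc ((R.len (w' * sRefl (R.simple i)) : ℕ) : ℝ)
              ≤ (R.len w' : ℝ) + 1 := by exact_mod_cast hlen2
            _ ≤ R.L ψ + 1 := by linarith
            _ = R.L φ := by rw [hLψ]; ring

end IrredRootSystemData

end Aux
/-- For each positive long root `φ` there is a unique Weyl group element `w`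
of length `ℓ(w) = L(φ)` with `wφ = θ`; moreover no element of length less
than `L(φ)` maps `φ` to `θ`. -/
theorem exists_unique_min_weyl_elt_to_highest_root (R : IrredRootSystemData V)
    (φ : V) (hφ : φ ∈ R.pos) (hlong : R.IsLong φ) :
    (∃! w : V ≃ₗᵢ[ℝ] V, w ∈ R.W ∧ (R.len w : ℝ) = R.L φ ∧ w φ = R.θ) ∧
    ∀ w' ∈ R.W, ((R.len w' : ℝ) < R.L φ) → w' φ ≠ R.θ := by
  classical
  obtain ⟨c, hc⟩ := R.θ_highest φ hφ
  obtain ⟨w, hwW, hwφ, hwlen⟩ := R.exists_elem (∑ k, c k) φ hφ hlong c hc le_rfl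
  have hlb := R.len_lower_bound hwW hwφ hφ hlong
  have hwlen' : (R.len w : ℝ) = R.L φ := le_antisymm hwlen hlb
  constructor
  · refine ⟨w, ⟨hwW, hwlen', hwφ⟩, ?_⟩
    rintro w' ⟨hw'W, hw'len, hw'φ⟩
    have h1 := R.Mw_eq_of_len_eq hwW hwφ hφ hlong hwlen'
    have h2 := R.Mw_eq_of_len_eq hw'W hw'φ hφ hlong hw'len
    exact R.toRootSystemData.W_eq_of_Mw_eq hwW hw'W (h1.trans h2.symm)
  · intro w' hw'W hlt hw'φ
    exact absurd (R.len_lower_bound hw'W hw'φ hφ hlong) (not_le.mpr hlt)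
end
end
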